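/- arXiv:1205.0780 — 6 statements merged into one kernel-verified Lean document; each statement's English description precedes it below -/
import Mathlib

section
/- For every continuously differentiable function χ : [0,1] → ℝ, one has ∫₀¹ (χ(x)² − ∫₀¹ χ(y)² dy)² dx ≤ 4 · (∫₀¹ χ(y)² dy) · (∫₀¹ χ'(y)² dy). -/
open MeasureTheory

/-- Cauchy–Schwarz for interval integrals on `[0,1]` of continuous functions. -/
lemma cs_aux (u v : ℝ → ℝ) (hu : ContinuousOn u (Set.Icc 0 1))
    (hv : ContinuousOn v (Set.Icc 0 1)) :
    (∫ t in (0:ℝ)..1, |u t| * |v t|) ^ 2 ≤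
      (∫ t in (0:ℝ)..1, (u t) ^ 2) * (∫ t in (0:ℝ)..1, (v t) ^ 2) := by
  have hiu : IntervalIntegrable (fun t => (u t) ^ 2) volume 0 1 :=
    ((hu.pow 2).mono (by rw [Set.uIcc_of_le (by norm_num)])).intervalIntegrable
  have hiv : IntervalIntegrable (fun t => (v t) ^ 2) volume 0 1 :=
    ((hv.pow 2).mono (by rw [Set.uIcc_of_le (by norm_num)])).intervalIntegrable
  have hiuv : IntervalIntegrable (fun t => |u t| * |v t|) volume 0 1 :=
    (((hu.abs.mul hv.abs)).mono (by rw [Set.uIcc_of_le (by norm_num)])).intervalIntegrable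
  set A := ∫ t in (0:ℝ)..1, (u t) ^ 2 with hA
  set B := ∫ t in (0:ℝ)..1, (v t) ^ 2 with hB
  set P := ∫ t in (0:ℝ)..1, |u t| * |v t| with hP
  have key : ∀ r : ℝ, 0 ≤ A * (r * r) + (-2 * P) * r + B := by
    intro r
    have h0 : (0:ℝ) ≤ ∫ t in (0:ℝ)..1, (r * |u t| - |v t|) ^ 2 := by
      apply intervalIntegral.integral_nonneg (by norm_num)
      intro t _; positivity
    have hexp : (fun t => (r * |u t| - |v t|) ^ 2)
        = fun t => r ^ 2 * (u t) ^ 2 - 2 * r * (|u t| * |v t|) + (v t) ^ 2 := by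
      funext t
      have h1 : |u t| ^ 2 = (u t) ^ 2 := sq_abs _
      have h2 : |v t| ^ 2 = (v t) ^ 2 := sq_abs _
      ring_nf
      nlinarith [sq_abs (u t), sq_abs (v t)]
    rw [hexp] at h0
    rw [intervalIntegral.integral_add ((hiu.const_mul _).sub (hiuv.const_mul _)) hiv,
      intervalIntegral.integral_sub (hiu.const_mul _) (hiuv.const_mul _),
      intervalIntegral.integral_const_mul, intervalIntegral.integral_const_mul] at h0
    nlinarith [h0]
  have := discrim_le_zero key
  rw [discrim] at this
  nlinarith [this]

/-- For a `C¹` function `χ` on `[0,1]`, the `L²` deviation of `χ²` from its mean is bounded by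
`4 · (∫₀¹ χ²) · (∫₀¹ (χ')²)`. -/
theorem l2_deviation_of_square_le (χ : ℝ → ℝ) (hχ : ContDiffOn ℝ 1 χ (Set.Icc 0 1)) :
    (∫ x in (0:ℝ)..1, ((χ x) ^ 2 - ∫ y in (0:ℝ)..1, (χ y) ^ 2) ^ 2) ≤
      4 * (∫ y in (0:ℝ)..1, (χ y) ^ 2) * (∫ y in (0:ℝ)..1, (deriv χ y) ^ 2) := by
  set s : Set ℝ := Set.Icc 0 1 with hs
  have huIcc : Set.uIcc (0:ℝ) 1 = s := Set.uIcc_of_le (by norm_num)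
  set f : ℝ → ℝ := fun t => derivWithin χ s t with hf
  have hχc : ContinuousOn χ s := hχ.continuousOn
  have hfc : ContinuousOn f s :=
    hχ.continuousOn_derivWithin (uniqueDiffOn_Icc (by norm_num)) le_rfl
  have hd : ∀ t ∈ Set.Ioo (0:ℝ) 1, HasDerivAt χ (f t) t := by
    intro t ht
    have hmem : s ∈ nhds t := Icc_mem_nhds ht.1 ht.2
    have : DifferentiableWithinAt ℝ χ s t :=
      hχ.differentiableOn one_ne_zero t (Set.mem_Icc_of_Ioo ht)
    exact (this.hasDerivWithinAt).hasDerivAt hmem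
  -- the derivative agrees with `f` a.e. on `[0,1]`
  have hB : (∫ y in (0:ℝ)..1, (deriv χ y) ^ 2) = ∫ y in (0:ℝ)..1, (f y) ^ 2 := by
    apply intervalIntegral.integral_congr_ae
    have h1 : ∀ᵐ y : ℝ, y ∈ Set.Ioo (0:ℝ) 1 → (deriv χ y) ^ 2 = (f y) ^ 2 := by
      filter_upwards with y hy
      rw [(hd y hy).deriv]
    have h2 : ∀ᵐ y : ℝ, y ∈ Set.uIoc (0:ℝ) 1 → y ∈ Set.Ioo (0:ℝ) 1 := by
      have : ({(1:ℝ)} : Set ℝ)ᶜ ∈ ae volume :=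
        compl_mem_ae_iff.2 (measure_singleton 1)
      filter_upwards [this] with y hy hmem
      rw [Set.uIoc_of_le (by norm_num : (0:ℝ) ≤ 1)] at hmem
      exact ⟨hmem.1, lt_of_le_of_ne hmem.2 (by simpa using hy)⟩
    filter_upwards [h1, h2] with y h1 h2 hmem
    exact h1 (h2 hmem)
  -- integrability
  have hiχ2 : IntervalIntegrable (fun t => (χ t) ^ 2) volume 0 1 :=
    ((hχc.pow 2).mono huIcc.le).intervalIntegrable
  have hig' : IntervalIntegrable (fun t => 2 * χ t * f t) volume 0 1 :=
    ((((continuousOn_const.mul hχc).mul hfc)).mono huIcc.le).intervalIntegrable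
  have higabs : IntervalIntegrable (fun t => |2 * χ t * f t|) volume 0 1 := hig'.abs
  -- FTC : for `x y ∈ [0,1]`, `χ x ^ 2 - χ y ^ 2 = ∫ t in y..x, 2 χ t * f t`
  have ftc : ∀ a ∈ s, ∀ b ∈ s, a ≤ b →
      (∫ t in a..b, 2 * χ t * f t) = (χ b) ^ 2 - (χ a) ^ 2 := by
    intro a ha b hb hab
    apply intervalIntegral.integral_eq_sub_of_hasDerivAt_of_le hab
    · exact (hχc.mono (Set.Icc_subset_Icc ha.1 hb.2)).pow 2
    · intro t ht
      have ht' : t ∈ Set.Ioo (0:ℝ) 1 :=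
        ⟨lt_of_le_of_lt ha.1 ht.1, lt_of_lt_of_le ht.2 hb.2⟩
      have := (hd t ht').fun_pow 2
      simpa [mul_comm, mul_assoc, mul_left_comm] using this
    · exact hig'.mono_set (Set.uIcc_subset_uIcc (by rw [huIcc]; exact ha) (by rw [huIcc]; exact hb))
  set A := ∫ y in (0:ℝ)..1, (χ y) ^ 2 with hA
  set P := ∫ t in (0:ℝ)..1, |χ t| * |f t| with hP
  -- pointwise bound : for `x ∈ [0,1]`, `|χ x ^ 2 - A| ≤ 2 P`
  have hpoint : ∀ x ∈ s, |(χ x) ^ 2 - A| ≤ 2 * P := by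
    intro x hx
    have hdiff : ∀ y ∈ s, |(χ x) ^ 2 - (χ y) ^ 2| ≤ 2 * P := by
      intro y hy
      have h1 : (χ x) ^ 2 - (χ y) ^ 2 = ∫ t in y..x, 2 * χ t * f t := by
        rcases le_total y x with h | h
        · rw [ftc y hy x hx h]
        · rw [intervalIntegral.integral_symm, ftc x hx y hy h]; ring
      rw [h1]
      calc |∫ t in y..x, 2 * χ t * f t| ≤ |(∫ t in y..x, |2 * χ t * f t|)| := by
            have := intervalIntegral.norm_integral_le_abs_integral_norm
              (f := fun t => 2 * χ t * f t) (a := y) (b := x) (μ := volume)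
            simpa only [Real.norm_eq_abs] using this
        _ ≤ |(∫ t in (0:ℝ)..1, |2 * χ t * f t|)| := by
            apply intervalIntegral.abs_integral_mono_interval
            · rw [Set.uIoc_of_le (by norm_num : (0:ℝ) ≤ 1)]
              intro t ht
              rcases Set.mem_uIoc.1 ht with h | h
              · exact ⟨lt_of_le_of_lt hy.1 h.1, le_trans h.2 hx.2⟩
              · exact ⟨lt_of_le_of_lt hx.1 h.1, le_trans h.2 hy.2⟩
            · filter_upwards with t using abs_nonneg _
            · exact higabs
        _ = 2 * P := by
            rw [abs_of_nonneg (intervalIntegral.integral_nonneg (by norm_num)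
              (fun t _ => abs_nonneg _))]
            rw [hP, ← intervalIntegral.integral_const_mul]
            apply intervalIntegral.integral_congr
            intro t _
            show |2 * χ t * f t| = 2 * (|χ t| * |f t|)
            rw [abs_mul, abs_mul, abs_two, mul_assoc]
    have h2 : (χ x) ^ 2 - A = ∫ y in (0:ℝ)..1, ((χ x) ^ 2 - (χ y) ^ 2) := by
      rw [intervalIntegral.integral_sub (intervalIntegrable_const) hiχ2]
      simp [hA]
    rw [h2]
    calc |∫ y in (0:ℝ)..1, ((χ x) ^ 2 - (χ y) ^ 2)|
        ≤ ∫ y in (0:ℝ)..1, |(χ x) ^ 2 - (χ y) ^ 2| := by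
          simpa using intervalIntegral.abs_integral_le_integral_abs
            (f := fun y => (χ x) ^ 2 - (χ y) ^ 2) (a := 0) (b := 1) (μ := volume)
            (by norm_num)
      _ ≤ ∫ y in (0:ℝ)..1, 2 * P := by
          apply intervalIntegral.integral_mono_on (by norm_num)
          · exact ((intervalIntegrable_const).sub hiχ2).abs
          · exact intervalIntegrable_const
          · exact hdiff
      _ = 2 * P := by simp
  -- Cauchy–Schwarz
  have hcs : P ^ 2 ≤ A * (∫ y in (0:ℝ)..1, (f y) ^ 2) := cs_aux χ f hχc hfc
  -- conclusion
  rw [hB]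
  set B := ∫ y in (0:ℝ)..1, (f y) ^ 2 with hBdef
  calc (∫ x in (0:ℝ)..1, ((χ x) ^ 2 - A) ^ 2)
      ≤ ∫ x in (0:ℝ)..1, 4 * (A * B) := by
        apply intervalIntegral.integral_mono_on (by norm_num)
        · exact ((((hχc.pow 2).sub continuousOn_const).pow 2).mono huIcc.le).intervalIntegrable
        · exact intervalIntegrable_const
        · intro x hx
          have h := hpoint x hx
          nlinarith [hcs, abs_nonneg ((χ x) ^ 2 - A), sq_abs ((χ x) ^ 2 - A),
            intervalIntegral.integral_nonneg (μ := volume) (by norm_num : (0:ℝ) ≤ 1)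
              (fun t _ => mul_nonneg (abs_nonneg (χ t)) (abs_nonneg (f t)))]
      _ = 4 * A * B := by simp; ring
end

section
/- Let μ > 0, λ ∈ [0,1], and let f : ℝ × [0,1] → ℝ be smooth and time-periodic. If u : ℝ × [0,1] → ℝ is smooth, time-periodic, satisfies u(t,0) = u(t,1) = 0 for all t, and solves ∂_t u + λ u ∂_x u − μ ∂²_x u = f on ℝ × [0,1], then ∫_Q (∂_x u)² ≤ (1/(π μ²)) ∫_Q f². -/
open MeasureTheory Real

open intervalIntegral in
/-- Cauchy–Schwarz for interval integrals of continuous functions. -/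
lemma sq_intervalIntegral_le_bg (g : ℝ → ℝ) (hg : Continuous g) {a b : ℝ} (hab : a ≤ b) :
    (∫ x in a..b, g x) ^ 2 ≤ (b - a) * ∫ x in a..b, (g x) ^ 2 := by
  set I := ∫ x in a..b, g x with hI
  set J := ∫ x in a..b, (g x) ^ 2 with hJ
  have H : ∀ m : ℝ, 0 ≤ (b - a) * (m * m) + (-(2 * I)) * m + J := by
    intro m
    have h0 : 0 ≤ ∫ x in a..b, (g x - m) ^ 2 :=
      intervalIntegral.integral_nonneg hab fun x _ => sq_nonneg _
    have hexp : ∫ x in a..b, (g x - m) ^ 2 = J - 2 * m * I + (b - a) * m ^ 2 := by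
      have e1 : (∫ x in a..b, (g x - m) ^ 2)
          = ∫ x in a..b, ((g x) ^ 2 - 2 * m * g x + m ^ 2) := by
        apply intervalIntegral.integral_congr
        intro x _; ring
      rw [e1, intervalIntegral.integral_add (f := fun x => g x ^ 2 - 2 * m * g x) (g := fun _ => m ^ 2) (((hg.pow 2).intervalIntegrable a b).sub
            ((continuous_const.mul hg).intervalIntegrable a b))
            (intervalIntegrable_const),
          intervalIntegral.integral_sub (f := fun x => g x ^ 2) (g := fun x => 2 * m * g x) ((hg.pow 2).intervalIntegrable a b)
            ((continuous_const.mul hg).intervalIntegrable a b),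
          intervalIntegral.integral_const_mul, intervalIntegral.integral_const]
      simp [smul_eq_mul]
      rfl
    nlinarith [h0, hexp]
  have hd := discrim_le_zero H
  rw [discrim] at hd
  nlinarith [hd]

/-- Fubini swap for continuous integrands on the unit square. -/
lemma fubini_swap_bg (F : ℝ → ℝ → ℝ) (hF : Continuous (Function.uncurry F)) :
    ∫ t in (0:ℝ)..1, ∫ x in (0:ℝ)..1, F t x = ∫ x in (0:ℝ)..1, ∫ t in (0:ℝ)..1, F t x := by
  have h : IntegrableOn (Function.uncurry F)
      (Set.Ioc (0:ℝ) 1 ×ˢ Set.Ioc (0:ℝ) 1) (volume.prod volume) :=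
    (hF.continuousOn.integrableOn_compact (isCompact_Icc.prod isCompact_Icc)).mono_set
      (Set.prod_mono Set.Ioc_subset_Icc_self Set.Ioc_subset_Icc_self)
  rw [IntegrableOn, ← Measure.prod_restrict] at h
  simp only [intervalIntegral.integral_of_le (zero_le_one (α := ℝ))]
  exact MeasureTheory.integral_integral_swap h

/-- Partial derivative in the second variable as a `HasDerivAt`. -/
lemma hasDerivAt_snd_slice_bg (U : ℝ × ℝ → ℝ) (hU : ContDiff ℝ (⊤ : ℕ∞) U) (t x : ℝ) :
    HasDerivAt (fun y => U (t, y)) (fderiv ℝ U (t, x) (0, 1)) x := by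
  have h1 : HasFDerivAt U (fderiv ℝ U (t, x)) (t, x) :=
    (hU.differentiable (by simp) (t, x)).hasFDerivAt
  have h2 : HasDerivAt (fun y : ℝ => ((t : ℝ), y)) ((0 : ℝ), (1 : ℝ)) x :=
    (hasDerivAt_const x t).prodMk (hasDerivAt_id x)
  exact h1.comp_hasDerivAt x h2

/-- Partial derivative in the first variable as a `HasDerivAt`. -/
lemma hasDerivAt_fst_slice_bg (U : ℝ × ℝ → ℝ) (hU : ContDiff ℝ (⊤ : ℕ∞) U) (t x : ℝ) :
    HasDerivAt (fun s => U (s, x)) (fderiv ℝ U (t, x) (1, 0)) t := by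
  have h1 : HasFDerivAt U (fderiv ℝ U (t, x)) (t, x) :=
    (hU.differentiable (by simp) (t, x)).hasFDerivAt
  have h2 : HasDerivAt (fun s : ℝ => (s, (x : ℝ))) ((1 : ℝ), (0 : ℝ)) t :=
    (hasDerivAt_id t).prodMk (hasDerivAt_const t x)
  exact h1.comp_hasDerivAt t h2

lemma contDiff_dfun_bg (U : ℝ × ℝ → ℝ) (hU : ContDiff ℝ (⊤ : ℕ∞) U) (v : ℝ × ℝ) :
    ContDiff ℝ (⊤ : ℕ∞) (fun p => fderiv ℝ U p v) :=
  (hU.fderiv_right (by exact_mod_cast le_top)).clm_apply contDiff_const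

/-- Gradient a priori bound, uniform in the homotopy parameter `λ ∈ [0,1]`, for time-periodic
solutions of `u_t + λ u u_x − μ u_xx = f` on `ℝ × [0,1]` with homogeneous Dirichlet boundary
conditions: `∫_Q (∂ₓ u)² ≤ (1/(π μ²)) ∫_Q f²`. -/
theorem burgers_gradient_apriori_bound (μ lam : ℝ) (hμ : 0 < μ) (hlam : lam ∈ Set.Icc (0:ℝ) 1)
    (f : ℝ → ℝ → ℝ) (hf : ContDiff ℝ (⊤ : ℕ∞) (Function.uncurry f))
    (hfper : ∀ t x : ℝ, f (t + 1) x = f t x)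
    (u : ℝ → ℝ → ℝ) (hu : ContDiff ℝ (⊤ : ℕ∞) (Function.uncurry u))
    (huper : ∀ t x : ℝ, u (t + 1) x = u t x)
    (hbc : ∀ t : ℝ, u t 0 = 0 ∧ u t 1 = 0)
    (hpde : ∀ t : ℝ, ∀ x ∈ Set.Icc (0:ℝ) 1,
      deriv (fun s => u s x) t + lam * u t x * deriv (u t) x
        - μ * deriv (deriv (u t)) x = f t x) :
    (∫ t in (0:ℝ)..1, ∫ x in (0:ℝ)..1, (deriv (u t) x) ^ 2) ≤
      (1 / (π * μ ^ 2)) * ∫ t in (0:ℝ)..1, ∫ x in (0:ℝ)..1, (f t x) ^ 2 := by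
  set U : ℝ × ℝ → ℝ := Function.uncurry u with hUdef
  set ux : ℝ → ℝ → ℝ := fun t x => fderiv ℝ U (t, x) (0, 1) with huxdef
  set ut : ℝ → ℝ → ℝ := fun t x => fderiv ℝ U (t, x) (1, 0) with hutdef
  set Ux : ℝ × ℝ → ℝ := fun p => fderiv ℝ U p (0, 1) with hUxdef
  have hUx : ContDiff ℝ (⊤ : ℕ∞) Ux := contDiff_dfun_bg U hu _
  set uxx : ℝ → ℝ → ℝ := fun t x => fderiv ℝ Ux (t, x) (0, 1) with huxxdef
  have hdx : ∀ t x, HasDerivAt (u t) (ux t x) x := fun t x => hasDerivAt_snd_slice_bg U hu t x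
  have hderiv_x : ∀ t x, deriv (u t) x = ux t x := fun t x => (hdx t x).deriv
  have hdx2 : ∀ t x, HasDerivAt (fun y => ux t y) (uxx t x) x := fun t x =>
    hasDerivAt_snd_slice_bg Ux hUx t x
  have hderiv_xx : ∀ t x, deriv (deriv (u t)) x = uxx t x := fun t x => by
    have h : deriv (u t) = fun y => ux t y := funext fun y => hderiv_x t y
    rw [h]; exact (hdx2 t x).deriv
  have hdt : ∀ t x, HasDerivAt (fun s => u s x) (ut t x) t := fun t x =>
    hasDerivAt_fst_slice_bg U hu t x
  -- continuity facts
  have cu : Continuous U := hu.continuous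
  have cux : Continuous Ux := hUx.continuous
  have cut : Continuous (fun p : ℝ × ℝ => fderiv ℝ U p (1, 0)) :=
    (contDiff_dfun_bg U hu _).continuous
  have cuxx : Continuous (fun p : ℝ × ℝ => fderiv ℝ Ux p (0, 1)) :=
    (contDiff_dfun_bg Ux hUx _).continuous
  have cf : Continuous (Function.uncurry f) := hf.continuous
  have sl : ∀ {F : ℝ × ℝ → ℝ}, Continuous F → ∀ t : ℝ, Continuous fun x => F (t, x) :=
    fun hF _ => hF.comp (continuous_const.prodMk continuous_id)
  have slt : ∀ {F : ℝ × ℝ → ℝ}, Continuous F → ∀ x : ℝ, Continuous fun t => F (t, x) :=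
    fun hF _ => hF.comp (continuous_id.prodMk continuous_const)
  -- rewrite the PDE
  have hpde' : ∀ t : ℝ, ∀ x ∈ Set.Icc (0:ℝ) 1,
      ut t x + lam * u t x * ux t x - μ * uxx t x = f t x := fun t x hx => by
    have h := hpde t x hx
    rwa [(hdt t x).deriv, hderiv_x, hderiv_xx] at h
  -- cubic term vanishes
  have hcubic : ∀ t : ℝ, (∫ x in (0:ℝ)..1, (u t x) ^ 2 * ux t x) = 0 := by
    intro t
    have h := intervalIntegral.integral_eq_sub_of_hasDerivAt
      (f := fun y => (u t y) ^ 3 / 3) (f' := fun x => (u t x) ^ 2 * ux t x)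
      (fun x _ => by
        have h2 := ((hdx t x).pow 3).div_const 3
        refine h2.congr_deriv ?_
        push_cast; ring)
      ((((sl cu t).pow 2).mul (sl cux t)).intervalIntegrable 0 1)
    beta_reduce at h
    rw [h, (hbc t).1, (hbc t).2]
    norm_num
  -- integration by parts for the diffusion term
  have hparts : ∀ t : ℝ, (∫ x in (0:ℝ)..1, u t x * uxx t x) = - ∫ x in (0:ℝ)..1, (ux t x) ^ 2 := by
    intro t
    have h := intervalIntegral.integral_eq_sub_of_hasDerivAt
      (f := fun y => u t y * ux t y) (f' := fun x => ux t x * ux t x + u t x * uxx t x)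
      (fun x _ => (hdx t x).mul (hdx2 t x))
      ((((sl cux t).mul (sl cux t)).add ((sl cu t).mul (sl cuxx t))).intervalIntegrable 0 1)
    beta_reduce at h
    have i1 : IntervalIntegrable (fun x => ux t x * ux t x) volume 0 1 :=
      ((sl cux t).mul (sl cux t)).intervalIntegrable 0 1
    have i2 : IntervalIntegrable (fun x => u t x * uxx t x) volume 0 1 :=
      ((sl cu t).mul (sl cuxx t)).intervalIntegrable 0 1
    rw [intervalIntegral.integral_add i1 i2, (hbc t).1, (hbc t).2] at h
    have h2 : (∫ x in (0:ℝ)..1, ux t x * ux t x) = ∫ x in (0:ℝ)..1, (ux t x) ^ 2 :=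
      intervalIntegral.integral_congr fun x _ => by ring
    rw [h2] at h
    linarith [h]
  -- per-time energy identity
  have ckey : ∀ t : ℝ, (∫ x in (0:ℝ)..1, u t x * ut t x)
      + μ * (∫ x in (0:ℝ)..1, (ux t x) ^ 2) = ∫ x in (0:ℝ)..1, f t x * u t x := by
    intro t
    have e1 : (∫ x in (0:ℝ)..1, (u t x * ut t x + lam * ((u t x) ^ 2 * ux t x)
        - μ * (u t x * uxx t x))) = ∫ x in (0:ℝ)..1, f t x * u t x := by
      apply intervalIntegral.integral_congr
      intro x hx
      have hx' : x ∈ Set.Icc (0:ℝ) 1 := by rwa [Set.uIcc_of_le zero_le_one] at hx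
      have h := hpde' t x hx'
      linear_combination u t x * h
    have intA : IntervalIntegrable (fun x => u t x * ut t x) volume 0 1 :=
      (((sl cu t).mul (sl cut t))).intervalIntegrable 0 1
    have intB : IntervalIntegrable (fun x => lam * ((u t x) ^ 2 * ux t x)) volume 0 1 :=
      (continuous_const.mul (((sl cu t).pow 2).mul (sl cux t))).intervalIntegrable 0 1
    have intC : IntervalIntegrable (fun x => μ * (u t x * uxx t x)) volume 0 1 :=
      (continuous_const.mul ((sl cu t).mul (sl cuxx t))).intervalIntegrable 0 1
    rw [intervalIntegral.integral_sub (intA.add intB) intC,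
        intervalIntegral.integral_add intA intB,
        intervalIntegral.integral_const_mul, intervalIntegral.integral_const_mul,
        hcubic t, hparts t] at e1
    linear_combination e1
  -- the time-derivative term integrates to zero
  have htime : (∫ t in (0:ℝ)..1, ∫ x in (0:ℝ)..1, u t x * ut t x) = 0 := by
    rw [fubini_swap_bg (fun t x => u t x * ut t x) (cu.mul cut)]
    have inner : ∀ x : ℝ, (∫ t in (0:ℝ)..1, u t x * ut t x) = 0 := by
      intro x
      have h := intervalIntegral.integral_eq_sub_of_hasDerivAt
        (f := fun s => (u s x) ^ 2 / 2) (f' := fun t => u t x * ut t x)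
        (fun t _ => by
          have h2 := ((hdt t x).pow 2).div_const 2
          refine h2.congr_deriv ?_
          push_cast; ring)
        (((slt cu x).mul (slt cut x)).intervalIntegrable 0 1)
      beta_reduce at h
      have hper : u 1 x = u 0 x := by
        have h3 := huper 0 x
        norm_num at h3
        exact h3
      rw [h, hper]
      ring
    simp [inner]
  -- parametric continuity in time
  have cD : Continuous fun t => ∫ x in (0:ℝ)..1, (ux t x) ^ 2 :=
    intervalIntegral.continuous_parametric_intervalIntegral_of_continuous'
      (f := fun t x => (ux t x) ^ 2) (by exact cux.pow 2) 0 1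
  have cA : Continuous fun t => ∫ x in (0:ℝ)..1, u t x * ut t x :=
    intervalIntegral.continuous_parametric_intervalIntegral_of_continuous'
      (f := fun t x => u t x * ut t x) (by exact cu.mul cut) 0 1
  have cR : Continuous fun t => ∫ x in (0:ℝ)..1, f t x * u t x :=
    intervalIntegral.continuous_parametric_intervalIntegral_of_continuous'
      (f := fun t x => f t x * u t x) (by exact cf.mul cu) 0 1
  have cP : Continuous fun t => ∫ x in (0:ℝ)..1, (f t x) ^ 2 :=
    intervalIntegral.continuous_parametric_intervalIntegral_of_continuous'
      (f := fun t x => (f t x) ^ 2) (by exact cf.pow 2) 0 1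
  have cQ : Continuous fun t => ∫ x in (0:ℝ)..1, (u t x) ^ 2 :=
    intervalIntegral.continuous_parametric_intervalIntegral_of_continuous'
      (f := fun t x => (u t x) ^ 2) (by exact cu.pow 2) 0 1
  -- global energy identity
  have hEid : μ * (∫ t in (0:ℝ)..1, ∫ x in (0:ℝ)..1, (ux t x) ^ 2)
      = ∫ t in (0:ℝ)..1, ∫ x in (0:ℝ)..1, f t x * u t x := by
    have h1 : (∫ t in (0:ℝ)..1, ((∫ x in (0:ℝ)..1, u t x * ut t x)
        + μ * ∫ x in (0:ℝ)..1, (ux t x) ^ 2))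
        = ∫ t in (0:ℝ)..1, ∫ x in (0:ℝ)..1, f t x * u t x :=
      intervalIntegral.integral_congr fun t _ => ckey t
    rw [intervalIntegral.integral_add (g := fun t => μ * ∫ x in (0:ℝ)..1, (ux t x) ^ 2) (cA.intervalIntegrable 0 1)
        ((continuous_const.mul cD).intervalIntegrable 0 1),
        intervalIntegral.integral_const_mul, htime, zero_add] at h1
    exact h1
  -- Poincare inequality with constant 1/6
  have hpoin : ∀ t : ℝ, (∫ x in (0:ℝ)..1, (u t x) ^ 2)
      ≤ (1/6) * ∫ x in (0:ℝ)..1, (ux t x) ^ 2 := by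
    intro t
    set D := ∫ x in (0:ℝ)..1, (ux t x) ^ 2 with hD
    have hpt : ∀ x ∈ Set.Icc (0:ℝ) 1, (u t x) ^ 2 ≤ x * (1 - x) * D := by
      intro x hx
      have hftc1 : (∫ y in (0:ℝ)..x, ux t y) = u t x := by
        rw [intervalIntegral.integral_eq_sub_of_hasDerivAt (fun y _ => hdx t y)
          ((sl cux t).intervalIntegrable 0 x), (hbc t).1, sub_zero]
      have hftc2 : (∫ y in x..(1:ℝ), ux t y) = - u t x := by
        rw [intervalIntegral.integral_eq_sub_of_hasDerivAt (fun y _ => hdx t y)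
          ((sl cux t).intervalIntegrable x 1), (hbc t).2, zero_sub]
      have hcs1 : (u t x) ^ 2 ≤ (x - 0) * ∫ y in (0:ℝ)..x, (ux t y) ^ 2 := by
        rw [← hftc1]
        exact sq_intervalIntegral_le_bg (fun y => ux t y) (sl cux t) hx.1
      have hcs2 : (u t x) ^ 2 ≤ (1 - x) * ∫ y in x..(1:ℝ), (ux t y) ^ 2 := by
        have e : (u t x) ^ 2 = (∫ y in x..(1:ℝ), ux t y) ^ 2 := by rw [hftc2]; ring
        rw [e]
        exact sq_intervalIntegral_le_bg (fun y => ux t y) (sl cux t) hx.2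
      have hadd : (∫ y in (0:ℝ)..x, (ux t y) ^ 2) + (∫ y in x..(1:ℝ), (ux t y) ^ 2) = D :=
        intervalIntegral.integral_add_adjacent_intervals
          (((sl cux t).pow 2).intervalIntegrable 0 x) (((sl cux t).pow 2).intervalIntegrable x 1)
      have hP : 0 ≤ ∫ y in (0:ℝ)..x, (ux t y) ^ 2 :=
        intervalIntegral.integral_nonneg hx.1 fun y _ => sq_nonneg _
      have hQ : 0 ≤ ∫ y in x..(1:ℝ), (ux t y) ^ 2 :=
        intervalIntegral.integral_nonneg hx.2 fun y _ => sq_nonneg _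
      rw [← hadd]
      nlinarith [mul_le_mul_of_nonneg_left hcs1 (by linarith [hx.2] : (0:ℝ) ≤ 1 - x),
        mul_le_mul_of_nonneg_left hcs2 hx.1, hP, hQ, hx.1, hx.2]
    have cpoly : Continuous fun x : ℝ => x * (1 - x) * D :=
      (continuous_id.mul (continuous_const.sub continuous_id)).mul continuous_const
    have iu2 : IntervalIntegrable (fun x => (u t x) ^ 2) volume 0 1 :=
      ((sl cu t).pow 2).intervalIntegrable 0 1
    have hmono : (∫ x in (0:ℝ)..1, (u t x) ^ 2) ≤ ∫ x in (0:ℝ)..1, x * (1 - x) * D :=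
      intervalIntegral.integral_mono_on zero_le_one iu2 (cpoly.intervalIntegrable 0 1) hpt
    have hcomp : (∫ x in (0:ℝ)..1, x * (1 - x) * D) = (1/6) * D := by
      have e : (∫ x in (0:ℝ)..1, x * (1 - x) * D) = (∫ x in (0:ℝ)..1, (x - x ^ 2)) * D := by
        rw [← intervalIntegral.integral_mul_const]
        exact intervalIntegral.integral_congr fun x _ => by ring
      have i1 : IntervalIntegrable (fun x : ℝ => x) volume 0 1 :=
        continuous_id.intervalIntegrable 0 1
      have i2 : IntervalIntegrable (fun x : ℝ => x ^ 2) volume 0 1 :=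
        (continuous_pow 2).intervalIntegrable 0 1
      rw [e, intervalIntegral.integral_sub i1 i2, integral_id, integral_pow]
      norm_num
    linarith [hmono, hcomp]
  -- rewrite the goal and set abbreviations
  simp only [hderiv_x]
  set E := ∫ t in (0:ℝ)..1, ∫ x in (0:ℝ)..1, (ux t x) ^ 2 with hE
  set F := ∫ t in (0:ℝ)..1, ∫ x in (0:ℝ)..1, (f t x) ^ 2 with hF
  set S := ∫ t in (0:ℝ)..1, ∫ x in (0:ℝ)..1, (u t x) ^ 2 with hS
  -- Young inequality bound on the source term
  have hyoung : (∫ t in (0:ℝ)..1, ∫ x in (0:ℝ)..1, f t x * u t x)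
      ≤ (1/(12*μ)) * F + (3*μ) * S := by
    have inner : ∀ t : ℝ, (∫ x in (0:ℝ)..1, f t x * u t x)
        ≤ (1/(12*μ)) * (∫ x in (0:ℝ)..1, (f t x) ^ 2)
          + (3*μ) * ∫ x in (0:ℝ)..1, (u t x) ^ 2 := by
      intro t
      have h1 : (∫ x in (0:ℝ)..1, f t x * u t x)
          ≤ ∫ x in (0:ℝ)..1, ((1/(12*μ)) * (f t x) ^ 2 + (3*μ) * (u t x) ^ 2) := by
        have ifu : IntervalIntegrable (fun x => f t x * u t x) volume 0 1 :=
          ((sl cf t).mul (sl cu t)).intervalIntegrable 0 1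
        have irhs : IntervalIntegrable
            (fun x => (1/(12*μ)) * (f t x) ^ 2 + (3*μ) * (u t x) ^ 2) volume 0 1 :=
          ((continuous_const.mul ((sl cf t).pow 2)).add
            (continuous_const.mul ((sl cu t).pow 2))).intervalIntegrable 0 1
        apply intervalIntegral.integral_mono_on zero_le_one ifu irhs
        intro x _
        have key : (1/(12*μ)) * (f t x - 6*μ*u t x) ^ 2
            = (1/(12*μ)) * (f t x) ^ 2 + 3*μ*(u t x) ^ 2 - f t x * u t x := by
          field_simp
          ring
        have hnn : 0 ≤ (1/(12*μ)) * (f t x - 6*μ*u t x) ^ 2 := by positivity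
        linarith [key, hnn]
      have if2 : IntervalIntegrable (fun x => (1/(12*μ)) * (f t x) ^ 2) volume 0 1 :=
        (continuous_const.mul ((sl cf t).pow 2)).intervalIntegrable 0 1
      have iu2 : IntervalIntegrable (fun x => (3*μ) * (u t x) ^ 2) volume 0 1 :=
        (continuous_const.mul ((sl cu t).pow 2)).intervalIntegrable 0 1
      rw [intervalIntegral.integral_add if2 iu2,
          intervalIntegral.integral_const_mul, intervalIntegral.integral_const_mul] at h1
      exact h1
    have outer := intervalIntegral.integral_mono_on (g := fun t => (1/(12*μ)) * (∫ x in (0:ℝ)..1, (f t x) ^ 2) + (3*μ) * ∫ x in (0:ℝ)..1, (u t x) ^ 2) zero_le_one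
      (cR.intervalIntegrable (μ := volume) 0 1)
      (((continuous_const.mul cP).add (continuous_const.mul cQ)).intervalIntegrable 0 1)
      (fun t _ => inner t)
    rwa [intervalIntegral.integral_add (f := fun t => (1/(12*μ)) * ∫ x in (0:ℝ)..1, (f t x) ^ 2) (g := fun t => (3*μ) * ∫ x in (0:ℝ)..1, (u t x) ^ 2)
        ((continuous_const.mul cP).intervalIntegrable 0 1)
        ((continuous_const.mul cQ).intervalIntegrable 0 1),
        intervalIntegral.integral_const_mul, intervalIntegral.integral_const_mul] at outer
  -- Poincare integrated in time
  have hSE : S ≤ (1/6) * E := by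
    have outer := intervalIntegral.integral_mono_on (g := fun t => (1/6) * ∫ x in (0:ℝ)..1, (ux t x) ^ 2) zero_le_one
      (cQ.intervalIntegrable (μ := volume) 0 1)
      ((continuous_const.mul cD).intervalIntegrable 0 1) (fun t _ => hpoin t)
    rwa [intervalIntegral.integral_const_mul] at outer
  have hF0 : 0 ≤ F := intervalIntegral.integral_nonneg zero_le_one fun t _ =>
    intervalIntegral.integral_nonneg zero_le_one fun x _ => sq_nonneg _
  have hE0 : 0 ≤ E := intervalIntegral.integral_nonneg zero_le_one fun t _ =>
    intervalIntegral.integral_nonneg zero_le_one fun x _ => sq_nonneg _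
  -- assemble
  have hmain : μ * E ≤ (1/(12*μ)) * F + 3*μ*((1/6)*E) := by
    calc μ * E = ∫ t in (0:ℝ)..1, ∫ x in (0:ℝ)..1, f t x * u t x := hEid
    _ ≤ (1/(12*μ)) * F + (3*μ) * S := hyoung
    _ ≤ (1/(12*μ)) * F + 3*μ*((1/6)*E) := by
        have := mul_le_mul_of_nonneg_left hSE (by positivity : (0:ℝ) ≤ 3*μ)
        linarith [this]
  have h2 : 6 * μ ^ 2 * E ≤ F := by
    have h3 : μ/2 * E ≤ 1/(12*μ) * F := by nlinarith [hmain]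
    have h4 := mul_le_mul_of_nonneg_left h3 (le_of_lt (by positivity : (0:ℝ) < 12*μ))
    have h5 : (12*μ) * (1/(12*μ) * F) = F := by field_simp
    nlinarith [h4, h5]
  rw [div_mul_eq_mul_div, one_mul, le_div_iff₀ (by positivity : (0:ℝ) < π * μ ^ 2)]
  nlinarith [h2, hE0,
    mul_nonneg (mul_nonneg hE0 (by linarith [Real.pi_le_four] : (0:ℝ) ≤ 6 - π)) (sq_nonneg μ)]
end

section
/- Let μ > 0 and let f : ℝ × [0,1] → ℝ be smooth and time-periodic. Then there exists M ≥ 0 such that for every λ ∈ [0,1] and every smooth time-periodic u : ℝ × [0,1] → ℝ with u(t,0) = u(t,1) = 0 for all t solving ∂_t u + λ u ∂_x u − μ ∂²_x u = f on ℝ × [0,1], one has ∫_Q u² + ∫_Q (∂_x u)² + Σ_{k∈ℤ} |k| ∫₀¹ |u_k(x)|² dx ≤ M, where u_k(x) = ∫₀¹ u(t,x) e^{−2πikt} dt. -/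
open MeasureTheory

/-- The `k`-th time-Fourier coefficient `u_k (x) = ∫₀¹ u (t, x) e^{-2πikt} dt`. -/
noncomputable def timeFourierCoeff (u : ℝ → ℝ → ℝ) (k : ℤ) (x : ℝ) : ℂ :=
  ∫ t in (0:ℝ)..1, (u t x : ℂ) * Complex.exp (-2 * Real.pi * Complex.I * k * t)

open intervalIntegral Set

open MeasureTheory intervalIntegral Set

noncomputable def eK (k : ℤ) (t : ℝ) : ℂ := Complex.exp (-2 * Real.pi * Complex.I * k * t)

lemma eK_fun (k : ℤ) : eK k = fun t : ℝ => Complex.exp ((-2 * Real.pi * Complex.I * k) * (t : ℂ)) := rfl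

@[continuity, fun_prop]
lemma eK_continuous (k : ℤ) : Continuous (eK k) := by
  rw [eK_fun]
  exact Complex.continuous_exp.comp (by continuity)

lemma eK_zero (k : ℤ) : eK k 0 = 1 := by simp [eK]

lemma eK_one (k : ℤ) : eK k 1 = 1 := by
  have h := Complex.exp_int_mul_two_pi_mul_I (-k)
  rw [← h, eK]
  congr 1
  push_cast; ring

lemma eK_norm (k : ℤ) (t : ℝ) : ‖eK k t‖ = 1 := by
  rw [eK_fun]
  simp only []
  rw [show (-2 * (Real.pi:ℂ) * Complex.I * k) * t = (((-2) * Real.pi * k * t : ℝ) : ℂ) * Complex.I by push_cast; ring]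
  exact Complex.norm_exp_ofReal_mul_I _

lemma eK_conj (k : ℤ) (t : ℝ) : (starRingEnd ℂ) (eK k t) = eK (-k) t := by
  simp only [eK, ← Complex.exp_conj, map_mul, Complex.conj_I, Complex.conj_ofReal, map_neg,
    map_ofNat, map_intCast]
  congr 1
  push_cast; ring

lemma eK_mul (j k : ℤ) (t : ℝ) : eK j t * eK k t = eK (j + k) t := by
  simp only [eK, ← Complex.exp_add]
  congr 1
  push_cast; ring

lemma eK_hasDerivAt (k : ℤ) (t : ℝ) :
    HasDerivAt (eK k) ((-2 * Real.pi * Complex.I * k) * eK k t) t := by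
  rw [eK_fun]
  have h : HasDerivAt (fun z : ℂ => Complex.exp ((-2 * Real.pi * Complex.I * k) * z))
      ((-2 * Real.pi * Complex.I * k) * Complex.exp ((-2 * Real.pi * Complex.I * k) * t)) (t : ℂ) := by
    simpa [mul_comm] using ((hasDerivAt_id (t:ℂ)).const_mul (-2 * (Real.pi:ℂ) * Complex.I * k)).cexp
  exact h.comp_ofReal

lemma integral_eK (m : ℤ) :
    (∫ t in (0:ℝ)..1, eK m t) = if m = 0 then 1 else 0 := by
  by_cases hm : m = 0
  · simp [hm, eK]
  · have hc : (-2 * (Real.pi:ℂ) * Complex.I * m) ≠ 0 := by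
      simp only [mul_ne_zero_iff]
      refine ⟨⟨⟨by norm_num, by exact_mod_cast Real.pi_ne_zero⟩, Complex.I_ne_zero⟩, ?_⟩
      exact_mod_cast hm
    simp only [eK_fun, hm, if_false]
    rw [integral_exp_mul_complex hc]
    have h1 : Complex.exp ((-2 * Real.pi * Complex.I * m) * ((1:ℝ):ℂ)) = 1 := by
      rw [show (-2 * (Real.pi:ℂ) * Complex.I * m) * ((1:ℝ):ℂ) = ((-m : ℤ) : ℂ) * (2 * Real.pi * Complex.I) by push_cast; ring]
      exact Complex.exp_int_mul_two_pi_mul_I (-m)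
    have h0 : Complex.exp ((-2 * Real.pi * Complex.I * m) * ((0:ℝ):ℂ)) = 1 := by
      norm_num
    rw [h1, h0]
    simp

/-- Cauchy–Schwarz for interval integrals of continuous functions. -/
lemma cs_interval {f g : ℝ → ℝ} (hf : Continuous f) (hg : Continuous g) :
    (∫ t in (0:ℝ)..1, f t * g t) ≤
      Real.sqrt (∫ t in (0:ℝ)..1, f t ^ 2) * Real.sqrt (∫ t in (0:ℝ)..1, g t ^ 2) := by
  set A := ∫ t in (0:ℝ)..1, f t ^ 2 with hA
  set B := ∫ t in (0:ℝ)..1, g t ^ 2 with hB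
  have hA0 : 0 ≤ A := intervalIntegral.integral_nonneg zero_le_one (fun t _ => sq_nonneg _)
  have hB0 : 0 ≤ B := intervalIntegral.integral_nonneg zero_le_one (fun t _ => sq_nonneg _)
  have key : ∀ ε : ℝ, 0 < ε → (∫ t in (0:ℝ)..1, f t * g t) ≤ A / (2 * ε) + ε * B / 2 := by
    intro ε hε
    have hmono : (∫ t in (0:ℝ)..1, f t * g t) ≤ ∫ t in (0:ℝ)..1, (f t ^ 2 / (2 * ε) + ε * g t ^ 2 / 2) := by
      apply intervalIntegral.integral_mono_on zero_le_one
        ((hf.mul hg).intervalIntegrable _ _)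
        ((((hf.pow 2).div_const _).add ((continuous_const.mul (hg.pow 2)).div_const 2)).intervalIntegrable _ _)
      intro t _
      have h2 : 2 * ε * (f t * g t) ≤ f t ^ 2 + ε ^ 2 * g t ^ 2 := by
        nlinarith [sq_nonneg (f t - ε * g t)]
      have h3 : f t * g t ≤ (f t ^ 2 + ε ^ 2 * g t ^ 2) / (2 * ε) := by
        rw [le_div_iff₀ (by positivity)]
        linarith
      calc f t * g t ≤ (f t ^ 2 + ε ^ 2 * g t ^ 2) / (2 * ε) := h3
        _ = f t ^ 2 / (2 * ε) + ε * g t ^ 2 / 2 := by field_simp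
    rw [intervalIntegral.integral_add (f := fun t => f t ^ 2 / (2 * ε)) (g := fun t => ε * g t ^ 2 / 2) (((hf.pow 2).div_const _).intervalIntegrable _ _)
      (((continuous_const.mul (hg.pow 2)).div_const 2).intervalIntegrable _ _)] at hmono
    simpa [intervalIntegral.integral_div, intervalIntegral.integral_const_mul, mul_div_assoc] using hmono
  set I := ∫ t in (0:ℝ)..1, f t * g t with hI
  rcases eq_or_lt_of_le hA0 with hA' | hA'
  · have h0 : I ≤ 0 := by
      by_contra h
      push_neg at h
      rcases eq_or_lt_of_le hB0 with hB' | hB'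
      · have hk := key 1 one_pos
        rw [← hA', ← hB'] at hk
        norm_num at hk
        linarith
      · have hk := key (I / B) (div_pos h hB')
        rw [← hA'] at hk
        have : (I / B) * B / 2 = I / 2 := by field_simp
        rw [this] at hk
        simp only [zero_div, zero_add] at hk
        linarith
    exact h0.trans (mul_nonneg (Real.sqrt_nonneg _) (Real.sqrt_nonneg _))
  · rcases eq_or_lt_of_le hB0 with hB' | hB'
    · have h0 : I ≤ 0 := by
        by_contra h
        push_neg at h
        have hk := key (A / I) (div_pos hA' h)
        rw [← hB'] at hk
        have h5 : A / (2 * (A / I)) = I / 2 := by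
          field_simp
        rw [h5] at hk
        simp only [mul_zero, zero_div, add_zero] at hk
        linarith
      exact h0.trans (mul_nonneg (Real.sqrt_nonneg _) (Real.sqrt_nonneg _))
    · have hsA : 0 < Real.sqrt A := Real.sqrt_pos.2 hA'
      have hsB : 0 < Real.sqrt B := Real.sqrt_pos.2 hB'
      have hA2 : Real.sqrt A ^ 2 = A := Real.sq_sqrt hA0
      have hB2 : Real.sqrt B ^ 2 = B := Real.sq_sqrt hB0
      have hk := key (Real.sqrt A / Real.sqrt B) (div_pos hsA hsB)
      have h6 : A / (2 * (Real.sqrt A / Real.sqrt B)) + (Real.sqrt A / Real.sqrt B) * B / 2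
          = Real.sqrt A * Real.sqrt B := by
        field_simp
        nlinarith [hA2, hB2]
      rw [h6] at hk
      exact hk


/-- Differentiation under the interval integral, continuous version. -/
lemma hasDerivAt_integral_cont {E : Type*} [NormedAddCommGroup E] [NormedSpace ℝ E]
    {G G' : ℝ → ℝ → E}
    (hG : Continuous (Function.uncurry G)) (hG' : Continuous (Function.uncurry G'))
    (hd : ∀ x t, HasDerivAt (fun y => G y t) (G' x t) x) (x₀ : ℝ) :
    HasDerivAt (fun x => ∫ t in (0:ℝ)..1, G x t) (∫ t in (0:ℝ)..1, G' x₀ t) x₀ := by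
  obtain ⟨C, hC⟩ : ∃ C, ∀ p ∈ (Metric.closedBall x₀ 1) ×ˢ (Icc (0:ℝ) 1),
      ‖Function.uncurry G' p‖ ≤ C :=
    ((isCompact_closedBall x₀ 1).prod isCompact_Icc).exists_bound_of_continuousOn
      hG'.continuousOn
  have key := (intervalIntegral.hasDerivAt_integral_of_dominated_loc_of_deriv_le
    (μ := volume) (F := G) (F' := G') (x₀ := x₀) (a := 0) (b := 1) (bound := fun _ => C)
    (s := Metric.ball x₀ 1) (Metric.ball_mem_nhds x₀ one_pos)
    (Filter.Eventually.of_forall fun x =>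
      (hG.comp (continuous_const.prodMk continuous_id)).aestronglyMeasurable)
    ((hG.comp (continuous_const.prodMk continuous_id)).intervalIntegrable _ _)
    (hG'.comp (continuous_const.prodMk continuous_id)).aestronglyMeasurable
    (Filter.Eventually.of_forall fun t ht x hx => by
      have : ((x, t) : ℝ × ℝ) ∈ (Metric.closedBall x₀ 1) ×ˢ (Icc (0:ℝ) 1) := by
        constructor
        · exact Metric.ball_subset_closedBall hx
        · rw [Set.uIoc_of_le (zero_le_one)] at ht
          exact ⟨ht.1.le, ht.2⟩
      exact hC _ this)
    (intervalIntegrable_const)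
    (Filter.Eventually.of_forall fun t ht x _ => hd x t))
  exact key.2

/-- Fubini for continuous functions on the unit square. -/
lemma swapQ {h : ℝ → ℝ → ℝ} (hh : Continuous (Function.uncurry h)) :
    (∫ t in (0:ℝ)..1, ∫ x in (0:ℝ)..1, h t x) = ∫ x in (0:ℝ)..1, ∫ t in (0:ℝ)..1, h t x := by
  have h01 : (0:ℝ) ≤ 1 := zero_le_one
  have hint : Integrable (Function.uncurry h)
      ((volume.restrict (Ioc (0:ℝ) 1)).prod (volume.restrict (Ioc (0:ℝ) 1))) := by
    rw [Measure.prod_restrict]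
    apply Integrable.mono_measure ?_ (Measure.restrict_mono (Set.prod_mono Ioc_subset_Icc_self Ioc_subset_Icc_self) le_rfl)
    have : IsCompact ((Icc (0:ℝ) 1) ×ˢ (Icc (0:ℝ) 1)) := isCompact_Icc.prod isCompact_Icc
    have := hh.continuousOn.integrableOn_compact (μ := volume.prod volume) this
    exact this
  have key := MeasureTheory.integral_integral_swap hint
  simp only [intervalIntegral.integral_of_le h01]
  exact key


/-- partial derivative in the first (time) variable -/
noncomputable def pd1 (w : ℝ → ℝ → ℝ) : ℝ → ℝ → ℝ :=
  fun t x => fderiv ℝ (Function.uncurry w) (t, x) (1, 0)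

/-- partial derivative in the second (space) variable -/
noncomputable def pd2 (w : ℝ → ℝ → ℝ) : ℝ → ℝ → ℝ :=
  fun t x => fderiv ℝ (Function.uncurry w) (t, x) (0, 1)

lemma contDiff_pd1 {w : ℝ → ℝ → ℝ} (hw : ContDiff ℝ (⊤ : ℕ∞) (Function.uncurry w)) :
    ContDiff ℝ (⊤ : ℕ∞) (Function.uncurry (pd1 w)) := by
  have : Function.uncurry (pd1 w) = fun p : ℝ × ℝ => fderiv ℝ (Function.uncurry w) p (1, 0) := rfl
  rw [this]
  exact (hw.fderiv_right (le_refl _)).clm_apply contDiff_const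

lemma contDiff_pd2 {w : ℝ → ℝ → ℝ} (hw : ContDiff ℝ (⊤ : ℕ∞) (Function.uncurry w)) :
    ContDiff ℝ (⊤ : ℕ∞) (Function.uncurry (pd2 w)) := by
  have : Function.uncurry (pd2 w) = fun p : ℝ × ℝ => fderiv ℝ (Function.uncurry w) p (0, 1) := rfl
  rw [this]
  exact (hw.fderiv_right (le_refl _)).clm_apply contDiff_const

lemma hasDerivAt_pd2 {w : ℝ → ℝ → ℝ} (hw : ContDiff ℝ (⊤ : ℕ∞) (Function.uncurry w))
    (t x : ℝ) : HasDerivAt (w t) (pd2 w t x) x := by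
  have hf := (hw.differentiable (by simp) (t, x)).hasFDerivAt
  have hline : HasFDerivAt (fun y : ℝ => ((t, y) : ℝ × ℝ))
      (ContinuousLinearMap.prod (0 : ℝ →L[ℝ] ℝ) (ContinuousLinearMap.id ℝ ℝ)) x :=
    (hasFDerivAt_const t x).prodMk (hasFDerivAt_id x)
  have hcomp := hf.comp x hline
  have := hcomp.hasDerivAt
  simpa [pd2, Function.comp_def] using this

lemma hasDerivAt_pd1 {w : ℝ → ℝ → ℝ} (hw : ContDiff ℝ (⊤ : ℕ∞) (Function.uncurry w))
    (t x : ℝ) : HasDerivAt (fun s => w s x) (pd1 w t x) t := by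
  have hf := (hw.differentiable (by simp) (t, x)).hasFDerivAt
  have hline : HasFDerivAt (fun s : ℝ => ((s, x) : ℝ × ℝ))
      (ContinuousLinearMap.prod (ContinuousLinearMap.id ℝ ℝ) (0 : ℝ →L[ℝ] ℝ)) t :=
    (hasFDerivAt_id t).prodMk (hasFDerivAt_const x t)
  have hcomp := hf.comp t hline
  have := hcomp.hasDerivAt
  simpa [pd1, Function.comp_def] using this

lemma deriv_eq_pd2 {w : ℝ → ℝ → ℝ} (hw : ContDiff ℝ (⊤ : ℕ∞) (Function.uncurry w)) (t : ℝ) :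
    deriv (w t) = pd2 w t :=
  funext fun x => (hasDerivAt_pd2 hw t x).deriv

lemma deriv_eq_pd1 {w : ℝ → ℝ → ℝ} (hw : ContDiff ℝ (⊤ : ℕ∞) (Function.uncurry w)) (t x : ℝ) :
    deriv (fun s => w s x) t = pd1 w t x :=
  (hasDerivAt_pd1 hw t x).deriv

lemma deriv2_eq_pd2 {w : ℝ → ℝ → ℝ} (hw : ContDiff ℝ (⊤ : ℕ∞) (Function.uncurry w)) (t x : ℝ) :
    deriv (deriv (w t)) x = pd2 (pd2 w) t x := by
  rw [deriv_eq_pd2 hw t, deriv_eq_pd2 (contDiff_pd2 hw) t]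


lemma interval_integral_re {f : ℝ → ℂ} (hf : Continuous f) :
    (∫ t in (0:ℝ)..1, (f t).re) = (∫ t in (0:ℝ)..1, f t).re := by
  simp only [intervalIntegral.integral_of_le (zero_le_one (α := ℝ))]
  have h := (Complex.reCLM).integral_comp_comm (μ := volume.restrict (Ioc 0 1)) (hf.integrableOn_Ioc)
  simpa using h

/-- Finite Bessel inequality on [0,1]. -/
lemma bessel_finite {v : ℝ → ℂ} (hv : Continuous v) (F : Finset ℤ) :
    ∑ k ∈ F, ‖∫ t in (0:ℝ)..1, v t * eK k t‖ ^ 2 ≤ ∫ t in (0:ℝ)..1, ‖v t‖ ^ 2 := by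
  set c : ℤ → ℂ := fun k => ∫ t in (0:ℝ)..1, v t * eK k t with hc
  set w : ℝ → ℂ := fun t => ∑ k ∈ F, c k * eK (-k) t with hw
  have hwc : Continuous w := continuous_finset_sum _ fun k _ => continuous_const.mul (eK_continuous _)
  have hconjw : ∀ t, (starRingEnd ℂ) (w t) = ∑ k ∈ F, (starRingEnd ℂ) (c k) * eK k t := by
    intro t
    simp only [hw, map_sum, map_mul, eK_conj, neg_neg]
  -- (i)
  have hi : (∫ t in (0:ℝ)..1, (v t * (starRingEnd ℂ) (w t)).re)
      = ∑ k ∈ F, Complex.normSq (c k) := by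
    have hpt : ∀ t, (v t * (starRingEnd ℂ) (w t)).re
        = ∑ k ∈ F, ((starRingEnd ℂ) (c k) * (v t * eK k t)).re := by
      intro t
      rw [hconjw, Finset.mul_sum, ← Complex.re_sum]
      congr 1
      apply Finset.sum_congr rfl
      intro k _
      ring_nf
    simp only [hpt]
    rw [intervalIntegral.integral_finset_sum
      (fun k _ => Continuous.intervalIntegrable (by fun_prop) _ _)]
    apply Finset.sum_congr rfl
    intro k _
    rw [interval_integral_re (by fun_prop), intervalIntegral.integral_const_mul]
    have hck : (∫ x in (0:ℝ)..1, v x * eK k x) = c k := rfl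
    rw [hck, show (starRingEnd ℂ) (c k) * c k = ((Complex.normSq (c k) : ℝ) : ℂ) by
      rw [← Complex.normSq_eq_conj_mul_self]]
    simp
  -- (ii)
  have hii : (∫ t in (0:ℝ)..1, Complex.normSq (w t)) = ∑ k ∈ F, Complex.normSq (c k) := by
    have hpt : ∀ t, (Complex.normSq (w t) : ℝ)
        = ∑ j ∈ F, ∑ k ∈ F, ((c j * (starRingEnd ℂ) (c k)) * eK (k - j) t).re := by
      intro t
      have h1 : (Complex.normSq (w t) : ℝ) = (w t * (starRingEnd ℂ) (w t)).re := by
        rw [Complex.mul_conj]; simp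
      rw [h1, hconjw]
      conv_lhs => rw [hw]
      rw [Finset.sum_mul_sum]
      simp only [Complex.re_sum]
      apply Finset.sum_congr rfl
      intro j _
      apply Finset.sum_congr rfl
      intro k _
      congr 1
      have heq : eK (-j) t * eK k t = eK (k - j) t := by
        rw [eK_mul]; congr 1; ring
      calc c j * eK (-j) t * ((starRingEnd ℂ) (c k) * eK k t)
          = (c j * (starRingEnd ℂ) (c k)) * (eK (-j) t * eK k t) := by ring
        _ = (c j * (starRingEnd ℂ) (c k)) * eK (k - j) t := by rw [heq]
    simp only [hpt]
    rw [intervalIntegral.integral_finset_sum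
      (fun j _ => Continuous.intervalIntegrable (by fun_prop) _ _)]
    rw [Finset.sum_congr rfl (fun j _ => intervalIntegral.integral_finset_sum
      (fun k _ => Continuous.intervalIntegrable (by fun_prop) _ _))]
    have heval : ∀ j ∈ F, ∀ k ∈ F,
        (∫ t in (0:ℝ)..1, ((c j * (starRingEnd ℂ) (c k)) * eK (k - j) t).re)
        = if k = j then Complex.normSq (c j) else 0 := by
      intro j _ k _
      rw [interval_integral_re (by fun_prop), intervalIntegral.integral_const_mul, integral_eK]
      by_cases hkj : k = j
      · simp [hkj, Complex.mul_conj]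
      · have : ¬(k - j = 0) := sub_ne_zero.2 hkj
        simp [this, hkj]
    calc ∑ j ∈ F, ∑ k ∈ F, ∫ t in (0:ℝ)..1, ((c j * (starRingEnd ℂ) (c k)) * eK (k - j) t).re
        = ∑ j ∈ F, ∑ k ∈ F, (if k = j then Complex.normSq (c j) else 0) := by
          apply Finset.sum_congr rfl; intro j hj
          apply Finset.sum_congr rfl; intro k hk
          exact heval j hj k hk
      _ = ∑ j ∈ F, Complex.normSq (c j) := by
          apply Finset.sum_congr rfl; intro j hj
          rw [Finset.sum_ite_eq' F j (fun _ => Complex.normSq (c j))]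
          simp [hj]
  -- conclude
  have hnn : 0 ≤ ∫ t in (0:ℝ)..1, Complex.normSq (v t - w t) :=
    intervalIntegral.integral_nonneg zero_le_one (fun t _ => Complex.normSq_nonneg _)
  have hexp : (∫ t in (0:ℝ)..1, Complex.normSq (v t - w t))
      = (∫ t in (0:ℝ)..1, Complex.normSq (v t)) - ∑ k ∈ F, Complex.normSq (c k) := by
    have hpt : ∀ t, Complex.normSq (v t - w t)
        = Complex.normSq (v t) + Complex.normSq (w t) - 2 * (v t * (starRingEnd ℂ) (w t)).re :=
      fun t => Complex.normSq_sub _ _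
    simp only [hpt]
    have c1 : Continuous fun t => Complex.normSq (v t) := Complex.continuous_normSq.comp hv
    have c2 : Continuous fun t => Complex.normSq (w t) := Complex.continuous_normSq.comp hwc
    have c3 : Continuous fun t => (v t * (starRingEnd ℂ) (w t)).re :=
      Complex.continuous_re.comp (hv.mul (Complex.continuous_conj.comp hwc))
    rw [intervalIntegral.integral_sub (f := fun t => Complex.normSq (v t) + Complex.normSq (w t)) (g := fun t => 2 * (v t * (starRingEnd ℂ) (w t)).re) ((c1.add c2).intervalIntegrable _ _)
      ((continuous_const.mul c3).intervalIntegrable _ _),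
      intervalIntegral.integral_add (c1.intervalIntegrable _ _) (c2.intervalIntegrable _ _),
      intervalIntegral.integral_const_mul, hi, hii]
    ring
  have hfin : ∑ k ∈ F, Complex.normSq (c k) ≤ ∫ t in (0:ℝ)..1, Complex.normSq (v t) := by
    rw [hexp] at hnn; linarith
  calc ∑ k ∈ F, ‖c k‖ ^ 2 = ∑ k ∈ F, Complex.normSq (c k) := by
        apply Finset.sum_congr rfl; intro k _
        rw [Complex.sq_norm]
    _ ≤ ∫ t in (0:ℝ)..1, Complex.normSq (v t) := hfin
    _ = ∫ t in (0:ℝ)..1, ‖v t‖ ^ 2 := by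
        apply intervalIntegral.integral_congr; intro t _
        simp [Complex.sq_norm]


lemma tfc_def (w : ℝ → ℝ → ℝ) (k : ℤ) (x : ℝ) :
    timeFourierCoeff w k x = ∫ t in (0:ℝ)..1, (w t x : ℂ) * eK k t := rfl

lemma interval_integral_conj {g : ℝ → ℂ} :
    (∫ t in (0:ℝ)..1, (starRingEnd ℂ) (g t)) = (starRingEnd ℂ) (∫ t in (0:ℝ)..1, g t) := by
  simp only [intervalIntegral.integral_of_le (zero_le_one (α := ℝ))]
  exact integral_conj

lemma tfc_conj (w : ℝ → ℝ → ℝ) (k : ℤ) (x : ℝ) :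
    timeFourierCoeff w (-k) x = (starRingEnd ℂ) (timeFourierCoeff w k x) := by
  rw [tfc_def, tfc_def, ← interval_integral_conj]
  apply intervalIntegral.integral_congr
  intro t _
  simp only []
  rw [map_mul, eK_conj, Complex.conj_ofReal]

lemma tfc_norm_neg (w : ℝ → ℝ → ℝ) (k : ℤ) (x : ℝ) :
    ‖timeFourierCoeff w (-k) x‖ = ‖timeFourierCoeff w k x‖ := by
  rw [tfc_conj]; exact RCLike.norm_conj _

lemma tfc_continuous {w : ℝ → ℝ → ℝ} (hw : Continuous (Function.uncurry w)) (k : ℤ) :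
    Continuous fun x => timeFourierCoeff w k x := by
  have heq : (fun x => timeFourierCoeff w k x)
      = fun x => ∫ t in (0:ℝ)..1, ((w t x : ℂ)) * eK k t := rfl
  rw [heq]
  apply intervalIntegral.continuous_parametric_intervalIntegral_of_continuous' (μ := volume)
  exact (Complex.continuous_ofReal.comp (hw.comp (continuous_snd.prodMk continuous_fst))).mul
    ((eK_continuous k).comp continuous_snd)

lemma tfc_hasDerivAt {w dw : ℝ → ℝ → ℝ} (hw : Continuous (Function.uncurry w))
    (hdw : Continuous (Function.uncurry dw)) (hd : ∀ t x, HasDerivAt (w t) (dw t x) x)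
    (k : ℤ) (x : ℝ) :
    HasDerivAt (fun y => timeFourierCoeff w k y) (timeFourierCoeff dw k x) x := by
  have heq : (fun y => timeFourierCoeff w k y)
      = fun y => ∫ t in (0:ℝ)..1, ((w t y : ℂ)) * eK k t := rfl
  rw [heq, tfc_def]
  apply hasDerivAt_integral_cont
    (G := fun y t => ((w t y : ℂ)) * eK k t) (G' := fun y t => ((dw t y : ℂ)) * eK k t)
  · exact (Complex.continuous_ofReal.comp (hw.comp (continuous_snd.prodMk continuous_fst))).mul
      ((eK_continuous k).comp continuous_snd)
  · exact (Complex.continuous_ofReal.comp (hdw.comp (continuous_snd.prodMk continuous_fst))).mul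
      ((eK_continuous k).comp continuous_snd)
  · intro y t
    exact ((hd t y).ofReal_comp).mul_const _

lemma tfc_time_ibp {w dw : ℝ → ℝ → ℝ} (hdw : Continuous (Function.uncurry dw))
    (hd : ∀ t x, HasDerivAt (fun s => w s x) (dw t x) t) (hper : ∀ x, w 1 x = w 0 x)
    (k : ℤ) (x : ℝ) :
    timeFourierCoeff dw k x = (2 * Real.pi * Complex.I * k) * timeFourierCoeff w k x := by
  have hibp := intervalIntegral.integral_mul_deriv_eq_deriv_mul (a := 0) (b := 1)
    (u := eK k) (u' := fun t => (-2 * Real.pi * Complex.I * k) * eK k t)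
    (v := fun t => ((w t x : ℝ) : ℂ)) (v' := fun t => ((dw t x : ℝ) : ℂ))
    (fun t _ => eK_hasDerivAt k t) (fun t _ => (hd t x).ofReal_comp)
    (Continuous.intervalIntegrable (continuous_const.mul (eK_continuous k)) _ _)
    (Continuous.intervalIntegrable
      (Complex.continuous_ofReal.comp (hdw.comp (continuous_id.prodMk continuous_const))) _ _)
  have h1 : timeFourierCoeff dw k x = ∫ t in (0:ℝ)..1, eK k t * ((dw t x : ℝ) : ℂ) := by
    rw [tfc_def]
    apply intervalIntegral.integral_congr
    intro t _
    ring
  have h2 : (∫ t in (0:ℝ)..1, (fun t => (-2 * Real.pi * Complex.I * k) * eK k t) t * ((w t x : ℝ) : ℂ))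
      = (-2 * Real.pi * Complex.I * k) * timeFourierCoeff w k x := by
    rw [tfc_def, ← intervalIntegral.integral_const_mul]
    apply intervalIntegral.integral_congr
    intro t _
    ring
  rw [h1, hibp, h2, eK_one, eK_zero]
  beta_reduce
  rw [hper x]
  ring

lemma finset_cs {ι : Type*} (F : Finset ι) (a b : ι → ℝ) (ha : ∀ i, 0 ≤ a i) (hb : ∀ i, 0 ≤ b i) :
    ∑ i ∈ F, a i * b i ≤ Real.sqrt (∑ i ∈ F, a i ^ 2) * Real.sqrt (∑ i ∈ F, b i ^ 2) := by
  have h := Finset.sum_mul_sq_le_sq_mul_sq F a b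
  have h1 : 0 ≤ ∑ i ∈ F, a i * b i := Finset.sum_nonneg fun i _ => mul_nonneg (ha i) (hb i)
  have h2 := Real.sqrt_le_sqrt h
  rw [Real.sqrt_sq h1, Real.sqrt_mul (Finset.sum_nonneg fun i _ => sq_nonneg _)] at h2
  exact h2

lemma bessel_bound {w : ℝ → ℝ → ℝ} (hw : Continuous (Function.uncurry w)) (F : Finset ℤ) {R : ℝ}
    (hR : (∫ x in (0:ℝ)..1, ∫ t in (0:ℝ)..1, (w t x) ^ 2) ≤ R) :
    ∑ k ∈ F, (∫ x in (0:ℝ)..1, ‖timeFourierCoeff w k x‖ ^ 2) ≤ R := by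
  have hcont : ∀ k : ℤ, Continuous fun x => ‖timeFourierCoeff w k x‖ ^ 2 :=
    fun k => ((tfc_continuous hw k).norm).pow 2
  rw [← intervalIntegral.integral_finset_sum
    (fun k _ => Continuous.intervalIntegrable (hcont k) _ _)]
  refine le_trans ?_ hR
  apply intervalIntegral.integral_mono_on zero_le_one
    (Continuous.intervalIntegrable (continuous_finset_sum _ fun k _ => hcont k) _ _)
    (Continuous.intervalIntegrable
      (intervalIntegral.continuous_parametric_intervalIntegral_of_continuous' (μ := volume)
        (f := fun x t => (w t x) ^ 2)
        ((hw.comp (continuous_snd.prodMk continuous_fst)).fun_pow 2) _ _) _ _)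
  intro x _
  have hb := bessel_finite (v := fun t => ((w t x : ℝ) : ℂ))
    (Complex.continuous_ofReal.comp (hw.comp (continuous_id.prodMk continuous_const))) F
  refine le_trans (le_of_eq ?_) (hb.trans (le_of_eq ?_))
  · apply Finset.sum_congr rfl
    intro k _
    rw [tfc_def]
  · apply intervalIntegral.integral_congr
    intro t _
    simp

/-- from HasDerivAt to the liminf slope condition of Gronwall -/
lemma freq_slope {g : ℝ → ℝ} {y : ℝ} {x : ℝ} (h : HasDerivAt g y x) :
    ∀ r, y < r → ∃ᶠ z in nhdsWithin x (Ioi x), (z - x)⁻¹ * (g z - g x) < r := by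
  intro r hr
  have h1 : HasDerivWithinAt g y (Ioi x) x := h.hasDerivWithinAt
  rw [hasDerivWithinAt_iff_tendsto_slope] at h1
  have h2 : (Ioi x) \ {x} = Ioi x := by
    apply Set.diff_singleton_eq_self
    simp
  rw [h2] at h1
  have h3 := h1.eventually_lt_const hr
  apply Filter.Eventually.frequently
  refine h3.mono fun z hz => ?_
  rwa [slope_def_field, div_eq_inv_mul] at hz

set_option maxHeartbeats 1000000 in
lemma per_k_estimate (μ lam : ℝ) (hμ : 0 < μ) (hlam0 : 0 ≤ lam) (hlam1 : lam ≤ 1)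
    (f u : ℝ → ℝ → ℝ) (hfc : Continuous (Function.uncurry f))
    (hu : ContDiff ℝ (⊤ : ℕ∞) (Function.uncurry u))
    (huper : ∀ t x : ℝ, u (t + 1) x = u t x)
    (hbc : ∀ t : ℝ, u t 0 = 0 ∧ u t 1 = 0)
    (hpde : ∀ t : ℝ, ∀ x ∈ Icc (0:ℝ) 1,
      pd1 u t x = f t x - lam * u t x * pd2 u t x + μ * pd2 (pd2 u) t x)
    (k : ℤ) :
    |(k:ℝ)| * (∫ x in (0:ℝ)..1, ‖timeFourierCoeff u k x‖ ^ 2)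
      ≤ Real.sqrt (∫ x in (0:ℝ)..1, ‖timeFourierCoeff f k x‖ ^ 2)
          * Real.sqrt (∫ x in (0:ℝ)..1, ‖timeFourierCoeff u k x‖ ^ 2)
        + Real.sqrt (∫ x in (0:ℝ)..1, ‖timeFourierCoeff (fun t x => u t x ^ 2) k x‖ ^ 2)
          * Real.sqrt (∫ x in (0:ℝ)..1, ‖timeFourierCoeff (pd2 u) k x‖ ^ 2)
        + μ * (∫ x in (0:ℝ)..1, ‖timeFourierCoeff (pd2 u) k x‖ ^ 2) := by
  classical
  set ux := pd2 u with hux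
  set uxx := pd2 (pd2 u) with huxx
  set ut := pd1 u with hut
  set usq : ℝ → ℝ → ℝ := fun t x => u t x ^ 2 with husq
  set uux : ℝ → ℝ → ℝ := fun t x => u t x * ux t x with huux
  set duu : ℝ → ℝ → ℝ := fun t x => 2 * (u t x * ux t x) with hduu
  -- continuity
  have hcu : Continuous (Function.uncurry u) := hu.continuous
  have hcux : Continuous (Function.uncurry ux) := (contDiff_pd2 hu).continuous
  have hcuxx : Continuous (Function.uncurry uxx) := (contDiff_pd2 (contDiff_pd2 hu)).continuous
  have hcut : Continuous (Function.uncurry ut) := (contDiff_pd1 hu).continuous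
  have hcusq : Continuous (Function.uncurry usq) := by
    have h : Function.uncurry usq = fun p => (Function.uncurry u p) ^ 2 := rfl
    rw [h]; exact hcu.pow 2
  have hcuux : Continuous (Function.uncurry uux) := by
    have h : Function.uncurry uux = fun p => (Function.uncurry u p) * (Function.uncurry ux p) := rfl
    rw [h]; exact hcu.mul hcux
  have hcduu : Continuous (Function.uncurry duu) := by
    have h : Function.uncurry duu = fun p => 2 * ((Function.uncurry u p) * (Function.uncurry ux p)) := rfl
    rw [h]; exact continuous_const.mul (hcu.mul hcux)
  -- pointwise derivatives
  have hdu : ∀ t x, HasDerivAt (u t) (ux t x) x := hasDerivAt_pd2 hu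
  have hdux : ∀ t x, HasDerivAt (ux t) (uxx t x) x := hasDerivAt_pd2 (contDiff_pd2 hu)
  have hdusq : ∀ t x, HasDerivAt (usq t) (duu t x) x := by
    intro t x
    have h := (hdu t x).fun_pow 2
    refine h.congr_deriv ?_
    rw [hduu]; push_cast; ring
  -- Fourier coefficient derivatives
  have hTc : ∀ x, HasDerivAt (fun y => timeFourierCoeff u k y) (timeFourierCoeff ux k x) x :=
    tfc_hasDerivAt hcu hcux hdu k
  have hTcm : ∀ x, HasDerivAt (fun y => timeFourierCoeff u (-k) y) (timeFourierCoeff ux (-k) x) x :=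
    tfc_hasDerivAt hcu hcux hdu (-k)
  have hTcx : ∀ x, HasDerivAt (fun y => timeFourierCoeff ux k y) (timeFourierCoeff uxx k x) x :=
    tfc_hasDerivAt hcux hcuxx hdux k
  have hTq : ∀ x, HasDerivAt (fun y => timeFourierCoeff usq k y) (timeFourierCoeff duu k x) x :=
    tfc_hasDerivAt hcusq hcduu hdusq k
  -- boundary values
  have hb0 : ∀ j : ℤ, timeFourierCoeff u j 0 = 0 := by
    intro j
    rw [tfc_def]
    have h : ∀ t : ℝ, ((u t 0 : ℝ) : ℂ) * eK j t = 0 := by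
      intro t; rw [(hbc t).1]; simp
    simp only [h]
    simp
  have hb1 : ∀ j : ℤ, timeFourierCoeff u j 1 = 0 := by
    intro j
    rw [tfc_def]
    have h : ∀ t : ℝ, ((u t 1 : ℝ) : ℂ) * eK j t = 0 := by
      intro t; rw [(hbc t).2]; simp
    simp only [h]
    simp
  -- time integration by parts
  have hper1 : ∀ x, u 1 x = u 0 x := fun x => by
    have h := huper 0 x; rwa [zero_add] at h
  have hdut : ∀ t x, HasDerivAt (fun s => u s x) (ut t x) t := hasDerivAt_pd1 hu
  have htibp : ∀ x, timeFourierCoeff ut k x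
      = (2 * Real.pi * Complex.I * k) * timeFourierCoeff u k x :=
    tfc_time_ibp hcut hdut hper1 k
  -- PDE for coefficients
  have hfk : ∀ x ∈ Icc (0:ℝ) 1, timeFourierCoeff ut k x
      = timeFourierCoeff f k x - (lam:ℂ) * timeFourierCoeff uux k x
        + (μ:ℂ) * timeFourierCoeff uxx k x := by
    intro x hx
    have hptw : ∀ t : ℝ, ((ut t x : ℝ) : ℂ) * eK k t
        = ((f t x : ℝ) : ℂ) * eK k t - (lam:ℂ) * (((uux t x : ℝ) : ℂ) * eK k t)
          + (μ:ℂ) * (((uxx t x : ℝ) : ℂ) * eK k t) := by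
      intro t
      simp only [huux]
      rw [hpde t x hx]
      push_cast
      ring
    have hiA : IntervalIntegrable (fun t => ((f t x : ℝ) : ℂ) * eK k t) volume 0 1 :=
      Continuous.intervalIntegrable
        ((Complex.continuous_ofReal.comp (hfc.comp (continuous_id.prodMk continuous_const))).mul
          (eK_continuous k)) _ _
    have hiB : IntervalIntegrable (fun t => (lam:ℂ) * (((uux t x : ℝ) : ℂ) * eK k t)) volume 0 1 :=
      Continuous.intervalIntegrable
        (continuous_const.mul ((Complex.continuous_ofReal.comp
          (hcuux.comp (continuous_id.prodMk continuous_const))).mul (eK_continuous k))) _ _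
    have hiC : IntervalIntegrable (fun t => (μ:ℂ) * (((uxx t x : ℝ) : ℂ) * eK k t)) volume 0 1 :=
      Continuous.intervalIntegrable
        (continuous_const.mul ((Complex.continuous_ofReal.comp
          (hcuxx.comp (continuous_id.prodMk continuous_const))).mul (eK_continuous k))) _ _
    rw [tfc_def]
    rw [intervalIntegral.integral_congr (g := fun t =>
      ((f t x : ℝ) : ℂ) * eK k t - (lam:ℂ) * (((uux t x : ℝ) : ℂ) * eK k t)
        + (μ:ℂ) * (((uxx t x : ℝ) : ℂ) * eK k t)) (fun t _ => hptw t)]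
    rw [intervalIntegral.integral_add (hiA.sub hiB) hiC,
      intervalIntegral.integral_sub hiA hiB,
      intervalIntegral.integral_const_mul, intervalIntegral.integral_const_mul,
      ← tfc_def, ← tfc_def, ← tfc_def]
  -- main identity
  set Ik := ∫ x in (0:ℝ)..1, ‖timeFourierCoeff u k x‖ ^ 2 with hIkdef
  have hIknn : 0 ≤ Ik :=
    intervalIntegral.integral_nonneg zero_le_one (fun x _ => sq_nonneg _)
  have hkey : (∫ x in (0:ℝ)..1, timeFourierCoeff ut k x * timeFourierCoeff u (-k) x)
      = (2 * Real.pi * Complex.I * k) * (Ik : ℂ) := by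
    have h1 : ∀ x : ℝ, timeFourierCoeff ut k x * timeFourierCoeff u (-k) x
        = (2 * Real.pi * Complex.I * k) * ((‖timeFourierCoeff u k x‖ ^ 2 : ℝ) : ℂ) := by
      intro x
      rw [htibp x, tfc_conj, mul_assoc, Complex.mul_conj]
      congr 2
      rw [Complex.normSq_eq_norm_sq]
    rw [intervalIntegral.integral_congr (fun x _ => h1 x),
      intervalIntegral.integral_const_mul, intervalIntegral.integral_ofReal]
  -- split the right-hand side
  have hTfc : ∀ (w : ℝ → ℝ → ℝ), Continuous (Function.uncurry w) → ∀ j : ℤ,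
      Continuous fun x => timeFourierCoeff w j x := fun w hw j => tfc_continuous hw j
  have hsplit : (∫ x in (0:ℝ)..1, timeFourierCoeff ut k x * timeFourierCoeff u (-k) x)
      = (∫ x in (0:ℝ)..1, timeFourierCoeff f k x * timeFourierCoeff u (-k) x)
        - (lam:ℂ) * (∫ x in (0:ℝ)..1, timeFourierCoeff uux k x * timeFourierCoeff u (-k) x)
        + (μ:ℂ) * (∫ x in (0:ℝ)..1, timeFourierCoeff uxx k x * timeFourierCoeff u (-k) x) := by
    have hiA : IntervalIntegrable
        (fun x => timeFourierCoeff f k x * timeFourierCoeff u (-k) x) volume 0 1 :=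
      Continuous.intervalIntegrable ((hTfc f hfc k).mul (hTfc u hcu (-k))) _ _
    have hiB : IntervalIntegrable
        (fun x => (lam:ℂ) * (timeFourierCoeff uux k x * timeFourierCoeff u (-k) x)) volume 0 1 :=
      Continuous.intervalIntegrable
        (continuous_const.mul ((hTfc uux hcuux k).mul (hTfc u hcu (-k)))) _ _
    have hiC : IntervalIntegrable
        (fun x => (μ:ℂ) * (timeFourierCoeff uxx k x * timeFourierCoeff u (-k) x)) volume 0 1 :=
      Continuous.intervalIntegrable
        (continuous_const.mul ((hTfc uxx hcuxx k).mul (hTfc u hcu (-k)))) _ _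
    rw [intervalIntegral.integral_congr (g := fun x =>
      timeFourierCoeff f k x * timeFourierCoeff u (-k) x
        - (lam:ℂ) * (timeFourierCoeff uux k x * timeFourierCoeff u (-k) x)
        + (μ:ℂ) * (timeFourierCoeff uxx k x * timeFourierCoeff u (-k) x))
      (fun x hx => by
        rw [uIcc_of_le (zero_le_one (α := ℝ))] at hx
        rw [hfk x hx]; ring)]
    rw [intervalIntegral.integral_add (hiA.sub hiB) hiC,
      intervalIntegral.integral_sub hiA hiB,
      intervalIntegral.integral_const_mul, intervalIntegral.integral_const_mul]
  -- integration by parts in x for uxx and duu against u(-k)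
  have hibp1 : (∫ x in (0:ℝ)..1, timeFourierCoeff uxx k x * timeFourierCoeff u (-k) x)
      = - ∫ x in (0:ℝ)..1, timeFourierCoeff ux (-k) x * timeFourierCoeff ux k x := by
    have h := intervalIntegral.integral_mul_deriv_eq_deriv_mul (a := 0) (b := 1)
      (u := fun y => timeFourierCoeff u (-k) y) (u' := fun y => timeFourierCoeff ux (-k) y)
      (v := fun y => timeFourierCoeff ux k y) (v' := fun y => timeFourierCoeff uxx k y)
      (fun y _ => hTcm y) (fun y _ => hTcx y)
      (Continuous.intervalIntegrable (hTfc ux hcux (-k)) _ _)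
      (Continuous.intervalIntegrable (hTfc uxx hcuxx k) _ _)
    beta_reduce at h
    rw [hb0 (-k), hb1 (-k)] at h
    simp only [zero_mul, sub_zero, zero_sub] at h
    rw [← h]
    apply intervalIntegral.integral_congr
    intro x _
    ring
  have hibp2 : (∫ x in (0:ℝ)..1, timeFourierCoeff duu k x * timeFourierCoeff u (-k) x)
      = - ∫ x in (0:ℝ)..1, timeFourierCoeff ux (-k) x * timeFourierCoeff usq k x := by
    have h := intervalIntegral.integral_mul_deriv_eq_deriv_mul (a := 0) (b := 1)
      (u := fun y => timeFourierCoeff u (-k) y) (u' := fun y => timeFourierCoeff ux (-k) y)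
      (v := fun y => timeFourierCoeff usq k y) (v' := fun y => timeFourierCoeff duu k y)
      (fun y _ => hTcm y) (fun y _ => hTq y)
      (Continuous.intervalIntegrable (hTfc ux hcux (-k)) _ _)
      (Continuous.intervalIntegrable (hTfc duu hcduu k) _ _)
    beta_reduce at h
    rw [hb0 (-k), hb1 (-k)] at h
    simp only [zero_mul, sub_zero, zero_sub] at h
    rw [← h]
    apply intervalIntegral.integral_congr
    intro x _
    ring
  have hqd : ∀ x : ℝ, timeFourierCoeff duu k x = 2 * timeFourierCoeff uux k x := by
    intro x
    rw [tfc_def, tfc_def, ← intervalIntegral.integral_const_mul]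
    apply intervalIntegral.integral_congr
    intro t _
    beta_reduce
    simp only [hduu, huux]
    push_cast
    ring
  have huux_half : (∫ x in (0:ℝ)..1, timeFourierCoeff uux k x * timeFourierCoeff u (-k) x)
      = -(1/2 : ℂ) * ∫ x in (0:ℝ)..1, timeFourierCoeff ux (-k) x * timeFourierCoeff usq k x := by
    have h1 : (∫ x in (0:ℝ)..1, timeFourierCoeff uux k x * timeFourierCoeff u (-k) x)
        = (1/2 : ℂ) * ∫ x in (0:ℝ)..1, timeFourierCoeff duu k x * timeFourierCoeff u (-k) x := by
      rw [← intervalIntegral.integral_const_mul]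
      apply intervalIntegral.integral_congr
      intro x _
      beta_reduce
      rw [hqd x]
      ring
    rw [h1, hibp2]
    ring
  -- norm bounds
  have hnormint : ∀ (F G : ℝ → ℂ), Continuous F → Continuous G →
      ‖∫ x in (0:ℝ)..1, F x * G x‖ ≤
        Real.sqrt (∫ x in (0:ℝ)..1, ‖F x‖ ^ 2) * Real.sqrt (∫ x in (0:ℝ)..1, ‖G x‖ ^ 2) := by
    intro F G hF hG
    calc ‖∫ x in (0:ℝ)..1, F x * G x‖ ≤ ∫ x in (0:ℝ)..1, ‖F x * G x‖ :=
          intervalIntegral.norm_integral_le_integral_norm zero_le_one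
      _ = ∫ x in (0:ℝ)..1, ‖F x‖ * ‖G x‖ := by
          apply intervalIntegral.integral_congr; intro x _; simp [norm_mul]
      _ ≤ _ := cs_interval hF.norm hG.norm
  have hbd1 : ‖∫ x in (0:ℝ)..1, timeFourierCoeff f k x * timeFourierCoeff u (-k) x‖
      ≤ Real.sqrt (∫ x in (0:ℝ)..1, ‖timeFourierCoeff f k x‖ ^ 2)
        * Real.sqrt (∫ x in (0:ℝ)..1, ‖timeFourierCoeff u k x‖ ^ 2) := by
    have h := hnormint _ _ (hTfc f hfc k) (hTfc u hcu (-k))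
    have h2 : (∫ x in (0:ℝ)..1, ‖timeFourierCoeff u (-k) x‖ ^ 2)
        = ∫ x in (0:ℝ)..1, ‖timeFourierCoeff u k x‖ ^ 2 := by
      apply intervalIntegral.integral_congr; intro x _; beta_reduce; rw [tfc_norm_neg]
    rwa [h2] at h
  have hbd2 : ‖∫ x in (0:ℝ)..1, timeFourierCoeff ux (-k) x * timeFourierCoeff usq k x‖
      ≤ Real.sqrt (∫ x in (0:ℝ)..1, ‖timeFourierCoeff (fun t x => u t x ^ 2) k x‖ ^ 2)
        * Real.sqrt (∫ x in (0:ℝ)..1, ‖timeFourierCoeff ux k x‖ ^ 2) := by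
    have h := hnormint _ _ (hTfc usq hcusq k) (hTfc ux hcux (-k))
    have h2 : (∫ x in (0:ℝ)..1, ‖timeFourierCoeff ux (-k) x‖ ^ 2)
        = ∫ x in (0:ℝ)..1, ‖timeFourierCoeff ux k x‖ ^ 2 := by
      apply intervalIntegral.integral_congr; intro x _; beta_reduce; rw [tfc_norm_neg]
    rw [h2] at h
    refine le_trans (le_of_eq ?_) h
    rw [show (∫ x in (0:ℝ)..1, timeFourierCoeff ux (-k) x * timeFourierCoeff usq k x)
      = ∫ x in (0:ℝ)..1, timeFourierCoeff usq k x * timeFourierCoeff ux (-k) x from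
      intervalIntegral.integral_congr fun x _ => by ring]
  have hbd3 : ‖∫ x in (0:ℝ)..1, timeFourierCoeff ux (-k) x * timeFourierCoeff ux k x‖
      ≤ ∫ x in (0:ℝ)..1, ‖timeFourierCoeff ux k x‖ ^ 2 := by
    calc ‖∫ x in (0:ℝ)..1, timeFourierCoeff ux (-k) x * timeFourierCoeff ux k x‖
        ≤ ∫ x in (0:ℝ)..1, ‖timeFourierCoeff ux (-k) x * timeFourierCoeff ux k x‖ :=
          intervalIntegral.norm_integral_le_integral_norm zero_le_one
      _ = ∫ x in (0:ℝ)..1, ‖timeFourierCoeff ux k x‖ ^ 2 := by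
          apply intervalIntegral.integral_congr; intro x _
          beta_reduce
          rw [norm_mul, tfc_norm_neg]
          ring
  -- put everything together
  have hnormγ : ‖(2 * Real.pi * Complex.I * (k:ℂ))‖ = 2 * Real.pi * |(k:ℝ)| := by
    have h : (2 * Real.pi * Complex.I * (k:ℂ)) = ((2 * Real.pi : ℝ) : ℂ) * ((k:ℝ):ℂ) * Complex.I := by
      push_cast; ring
    rw [h, norm_mul, norm_mul, Complex.norm_real, Complex.norm_real, Complex.norm_I,
      Real.norm_eq_abs, Real.norm_eq_abs, abs_of_pos (by positivity : (0:ℝ) < 2 * Real.pi)]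
    ring
  -- final chain
  set T1 := ∫ x in (0:ℝ)..1, timeFourierCoeff f k x * timeFourierCoeff u (-k) x with hT1
  set T2 := ∫ x in (0:ℝ)..1, timeFourierCoeff uux k x * timeFourierCoeff u (-k) x with hT2
  set T3 := ∫ x in (0:ℝ)..1, timeFourierCoeff uxx k x * timeFourierCoeff u (-k) x with hT3
  set a := Real.sqrt (∫ x in (0:ℝ)..1, ‖timeFourierCoeff f k x‖ ^ 2) with ha
  set b := Real.sqrt (∫ x in (0:ℝ)..1, ‖timeFourierCoeff u k x‖ ^ 2) with hb
  set r := Real.sqrt (∫ x in (0:ℝ)..1, ‖timeFourierCoeff usq k x‖ ^ 2) with hr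
  set s := Real.sqrt (∫ x in (0:ℝ)..1, ‖timeFourierCoeff ux k x‖ ^ 2) with hs
  set S := ∫ x in (0:ℝ)..1, ‖timeFourierCoeff ux k x‖ ^ 2 with hS
  have hSnn : 0 ≤ S := intervalIntegral.integral_nonneg zero_le_one (fun x _ => sq_nonneg _)
  have hT1n : ‖T1‖ ≤ a * b := hbd1
  have hT2n : ‖T2‖ ≤ (1/2) * (r * s) := by
    rw [huux_half]
    rw [norm_mul]
    have h1 : ‖(-(1/2) : ℂ)‖ = 1/2 := by norm_num
    rw [h1]
    have h2 := hbd2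
    nlinarith [norm_nonneg (∫ x in (0:ℝ)..1, timeFourierCoeff ux (-k) x * timeFourierCoeff usq k x)]
  have hT3n : ‖T3‖ ≤ S := by
    rw [hibp1, norm_neg]
    exact hbd3
  have h2pi : (1:ℝ) ≤ 2 * Real.pi := by nlinarith [Real.pi_gt_three]
  have habnn : 0 ≤ a * b := mul_nonneg (Real.sqrt_nonneg _) (Real.sqrt_nonneg _)
  have hrsnn : 0 ≤ r * s := mul_nonneg (Real.sqrt_nonneg _) (Real.sqrt_nonneg _)
  have hnormlam : ‖((lam:ℝ):ℂ)‖ = lam := by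
    rw [Complex.norm_real, Real.norm_eq_abs, abs_of_nonneg hlam0]
  have hnormmu : ‖((μ:ℝ):ℂ)‖ = μ := by
    rw [Complex.norm_real, Real.norm_eq_abs, abs_of_nonneg hμ.le]
  have hchain : (2 * Real.pi * |(k:ℝ)|) * Ik ≤ a * b + lam * ((1/2) * (r * s)) + μ * S := by
    have he : (2 * Real.pi * |(k:ℝ)|) * Ik = ‖(2 * Real.pi * Complex.I * (k:ℂ)) * (Ik:ℂ)‖ := by
      rw [norm_mul, hnormγ, Complex.norm_real, Real.norm_eq_abs, abs_of_nonneg hIknn]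
    rw [he, ← hkey, hsplit]
    calc ‖T1 - (lam:ℂ) * T2 + (μ:ℂ) * T3‖
        ≤ ‖T1 - (lam:ℂ) * T2‖ + ‖(μ:ℂ) * T3‖ := norm_add_le _ _
      _ ≤ ‖T1‖ + ‖(lam:ℂ) * T2‖ + ‖(μ:ℂ) * T3‖ := by
          have := norm_sub_le T1 ((lam:ℂ) * T2); linarith
      _ = ‖T1‖ + lam * ‖T2‖ + μ * ‖T3‖ := by rw [norm_mul, norm_mul, hnormlam, hnormmu]
      _ ≤ a * b + lam * ((1/2) * (r * s)) + μ * S := by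
          have h3 : lam * ‖T2‖ ≤ lam * ((1/2) * (r * s)) :=
            mul_le_mul_of_nonneg_left hT2n hlam0
          have h4 : μ * ‖T3‖ ≤ μ * S := mul_le_mul_of_nonneg_left hT3n hμ.le
          linarith
  calc |(k:ℝ)| * Ik ≤ (2 * Real.pi * |(k:ℝ)|) * Ik := by
        apply mul_le_mul_of_nonneg_right _ hIknn
        nlinarith [abs_nonneg ((k:ℝ))]
    _ ≤ a * b + lam * ((1/2) * (r * s)) + μ * S := hchain
    _ ≤ a * b + r * s + μ * S := by nlinarith


set_option maxHeartbeats 1000000 in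
/-- A priori estimate (Theorem 4.1): for fixed `μ > 0` and time-periodic forcing `f`, the set of
time-periodic solutions of the λ-homotopy Burgers equation `u_t + λ u u_x − μ u_xx = f`,
`λ ∈ [0,1]`, with homogeneous Dirichlet boundary conditions, is bounded in `H^{1/2,1}`. -/
theorem burgers_homotopy_apriori_estimate (μ : ℝ) (hμ : 0 < μ)
    (f : ℝ → ℝ → ℝ) (hf : ContDiff ℝ (⊤ : ℕ∞) (Function.uncurry f))
    (hfper : ∀ t x : ℝ, f (t + 1) x = f t x) :
    ∃ M : ℝ, 0 ≤ M ∧ ∀ lam ∈ Set.Icc (0:ℝ) 1, ∀ u : ℝ → ℝ → ℝ,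
      ContDiff ℝ (⊤ : ℕ∞) (Function.uncurry u) →
      (∀ t x : ℝ, u (t + 1) x = u t x) →
      (∀ t : ℝ, u t 0 = 0 ∧ u t 1 = 0) →
      (∀ t : ℝ, ∀ x ∈ Set.Icc (0:ℝ) 1,
        deriv (fun s => u s x) t + lam * u t x * deriv (u t) x
          - μ * deriv (deriv (u t)) x = f t x) →
      (∫ t in (0:ℝ)..1, ∫ x in (0:ℝ)..1, (u t x) ^ 2)
        + (∫ t in (0:ℝ)..1, ∫ x in (0:ℝ)..1, (deriv (u t) x) ^ 2)
        + (∑' k : ℤ, |(k : ℝ)| * ∫ x in (0:ℝ)..1, ‖timeFourierCoeff u k x‖ ^ 2)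
        ≤ M := by
  classical
  have hfc : Continuous (Function.uncurry f) := hf.continuous
  obtain ⟨C, hC⟩ := ((isCompact_Icc (a := (0:ℝ)) (b := 2)).prod
    (isCompact_Icc (a := (0:ℝ)) (b := 1))).exists_bound_of_continuousOn hfc.continuousOn
  set Kf := max C 0 with hKfdef
  have hKf0 : 0 ≤ Kf := le_max_right _ _
  have hKf : ∀ t ∈ Icc (0:ℝ) 2, ∀ x ∈ Icc (0:ℝ) 1, |f t x| ≤ Kf := by
    intro t ht x hx
    have h := hC (t, x) ⟨ht, hx⟩
    exact le_trans (le_of_eq (Real.norm_eq_abs _).symm) (h.trans (le_max_left _ _))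
  set B0 := Kf ^ 2 / μ ^ 2 with hB0def
  have hB0nn : 0 ≤ B0 := by positivity
  set E0 := (B0 + Kf ^ 2) * Real.exp 1 with hE0def
  have hE0nn : 0 ≤ E0 := by positivity
  set S0 := Kf * Real.sqrt B0 + Real.sqrt (E0 * B0) * Real.sqrt B0 + μ * B0 with hS0def
  have hS0nn : 0 ≤ S0 := by positivity
  refine ⟨B0 + B0 + S0, by positivity, ?_⟩
  rintro lam ⟨hlam0, hlam1⟩ u hu huper hbc hpde
  have hcu : Continuous (Function.uncurry u) := hu.continuous
  have hcux : Continuous (Function.uncurry (pd2 u)) := (contDiff_pd2 hu).continuous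
  have hcuxx : Continuous (Function.uncurry (pd2 (pd2 u))) :=
    (contDiff_pd2 (contDiff_pd2 hu)).continuous
  have hcut : Continuous (Function.uncurry (pd1 u)) := (contDiff_pd1 hu).continuous
  have hsec : ∀ (w : ℝ → ℝ → ℝ), Continuous (Function.uncurry w) → ∀ t, Continuous (w t) :=
    fun w hw t => hw.comp (continuous_const.prodMk continuous_id)
  -- PDE in pd form
  have hpde' : ∀ t : ℝ, ∀ x ∈ Icc (0:ℝ) 1,
      pd1 u t x = f t x - lam * u t x * pd2 u t x + μ * pd2 (pd2 u) t x := by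
    intro t x hx
    have h := hpde t x hx
    have e1 : deriv (fun s => u s x) t = pd1 u t x := deriv_eq_pd1 hu t x
    have e2 : deriv (u t) x = pd2 u t x := by rw [deriv_eq_pd2 hu t]
    have e3 : deriv (deriv (u t)) x = pd2 (pd2 u) t x := deriv2_eq_pd2 hu t x
    rw [e1, e3, e2] at h
    linarith
  -- energy quantities
  set E : ℝ → ℝ := fun t => ∫ x in (0:ℝ)..1, (u t x) ^ 2 with hEdef
  set D : ℝ → ℝ := fun t => ∫ x in (0:ℝ)..1, (pd2 u t x) ^ 2 with hDdef
  have hEt : ∀ t, E t = ∫ x in (0:ℝ)..1, (u t x) ^ 2 := fun t => rfl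
  have hDt : ∀ t, D t = ∫ x in (0:ℝ)..1, (pd2 u t x) ^ 2 := fun t => rfl
  have hcE : Continuous E := by
    rw [hEdef]
    apply intervalIntegral.continuous_parametric_intervalIntegral_of_continuous' (μ := volume)
      (f := fun t x => (u t x) ^ 2)
    exact hcu.pow 2
  have hcD : Continuous D := by
    rw [hDdef]
    apply intervalIntegral.continuous_parametric_intervalIntegral_of_continuous' (μ := volume)
      (f := fun t x => (pd2 u t x) ^ 2)
    exact hcux.pow 2
  have hcI : Continuous fun t => ∫ x in (0:ℝ)..1, u t x * pd1 u t x := by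
    apply intervalIntegral.continuous_parametric_intervalIntegral_of_continuous' (μ := volume)
      (f := fun t x => u t x * pd1 u t x)
    exact hcu.mul hcut
  have hcFU : Continuous fun t => ∫ x in (0:ℝ)..1, f t x * u t x := by
    apply intervalIntegral.continuous_parametric_intervalIntegral_of_continuous' (μ := volume)
      (f := fun t x => f t x * u t x)
    exact hfc.mul hcu
  have hEnn : ∀ t, 0 ≤ E t := fun t =>
    intervalIntegral.integral_nonneg zero_le_one (fun x _ => sq_nonneg _)
  have hDnn : ∀ t, 0 ≤ D t := fun t =>
    intervalIntegral.integral_nonneg zero_le_one (fun x _ => sq_nonneg _)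
  -- pointwise Poincaré
  have hW : ∀ t : ℝ, ∀ x ∈ Icc (0:ℝ) 1, (u t x) ^ 2 ≤ D t := by
    intro t x hx
    have hftc : (∫ y in (0:ℝ)..x, pd2 u t y) = u t x - u t 0 :=
      intervalIntegral.integral_eq_sub_of_hasDerivAt
        (fun y _ => hasDerivAt_pd2 hu t y)
        (Continuous.intervalIntegrable (hsec _ hcux t) _ _)
    rw [(hbc t).1, sub_zero] at hftc
    have h1 : |u t x| ≤ ∫ y in (0:ℝ)..1, |pd2 u t y| := by
      rw [← hftc]
      calc |∫ y in (0:ℝ)..x, pd2 u t y| ≤ ∫ y in (0:ℝ)..x, |pd2 u t y| :=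
            abs_integral_le_integral_abs hx.1
        _ ≤ ∫ y in (0:ℝ)..1, |pd2 u t y| :=
            integral_mono_interval le_rfl hx.1 hx.2
              (Filter.Eventually.of_forall fun y => abs_nonneg _)
              (Continuous.intervalIntegrable (hsec _ hcux t).abs _ _)
    have h2 : (∫ y in (0:ℝ)..1, |pd2 u t y|) ≤ Real.sqrt (D t) := by
      have hcs := cs_interval (f := fun y => |pd2 u t y|) (g := fun _ => (1:ℝ))
        (hsec _ hcux t).abs continuous_const
      have e1 : (∫ y in (0:ℝ)..1, |pd2 u t y| * 1) = ∫ y in (0:ℝ)..1, |pd2 u t y| := by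
        simp
      have e2 : (∫ y in (0:ℝ)..1, |pd2 u t y| ^ 2) = D t := by
        rw [hDt]
        apply intervalIntegral.integral_congr
        intro y _
        simp [sq_abs]
      have e3 : (∫ y in (0:ℝ)..1, ((1:ℝ)) ^ 2) = 1 := by simp
      rw [e1, e2, e3, Real.sqrt_one, mul_one] at hcs
      exact hcs
    calc (u t x) ^ 2 = |u t x| ^ 2 := (sq_abs _).symm
      _ ≤ (Real.sqrt (D t)) ^ 2 := by
          apply pow_le_pow_left₀ (abs_nonneg _) (h1.trans h2)
      _ = D t := Real.sq_sqrt (hDnn t)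
  have hED : ∀ t, E t ≤ D t := by
    intro t
    rw [hEt]
    calc (∫ x in (0:ℝ)..1, (u t x) ^ 2) ≤ ∫ _x in (0:ℝ)..1, D t :=
          intervalIntegral.integral_mono_on zero_le_one
            (Continuous.intervalIntegrable ((hsec _ hcu t).pow 2) _ _)
            intervalIntegrable_const (fun x hx => hW t x hx)
      _ = D t := by simp
  -- derivative of E
  have hEd : ∀ t, HasDerivAt E (2 * ∫ x in (0:ℝ)..1, u t x * pd1 u t x) t := by
    intro t
    have hd : ∀ t x, HasDerivAt (fun s => (u s x) ^ 2) (2 * (u t x * pd1 u t x)) t := by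
      intro t x
      have h := (hasDerivAt_pd1 hu t x).fun_pow 2
      refine h.congr_deriv ?_
      push_cast; ring
    have h := hasDerivAt_integral_cont (G := fun t x => (u t x) ^ 2)
      (G' := fun t x => 2 * (u t x * pd1 u t x)) (hcu.fun_pow 2)
      (continuous_const.fun_mul (hcu.fun_mul hcut)) hd t
    rw [intervalIntegral.integral_const_mul] at h
    exact h
  -- per-time identity
  have hIt : ∀ t, (∫ x in (0:ℝ)..1, u t x * pd1 u t x)
      = (∫ x in (0:ℝ)..1, f t x * u t x) - μ * D t := by
    intro t
    have hiA : IntervalIntegrable (fun x => f t x * u t x) volume 0 1 :=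
      Continuous.intervalIntegrable ((hsec _ hfc t).mul (hsec _ hcu t)) _ _
    have hiB : IntervalIntegrable (fun x => lam * ((u t x) ^ 2 * pd2 u t x)) volume 0 1 :=
      Continuous.intervalIntegrable
        (continuous_const.mul (((hsec _ hcu t).pow 2).mul (hsec _ hcux t))) _ _
    have hiC : IntervalIntegrable (fun x => μ * (u t x * pd2 (pd2 u) t x)) volume 0 1 :=
      Continuous.intervalIntegrable
        (continuous_const.mul ((hsec _ hcu t).mul (hsec _ hcuxx t))) _ _
    have hcongr : ∀ x ∈ uIcc (0:ℝ) 1, u t x * pd1 u t x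
        = f t x * u t x - lam * ((u t x) ^ 2 * pd2 u t x) + μ * (u t x * pd2 (pd2 u) t x) := by
      intro x hx
      rw [uIcc_of_le (zero_le_one (α := ℝ))] at hx
      rw [hpde' t x hx]
      ring
    rw [intervalIntegral.integral_congr hcongr,
      intervalIntegral.integral_add (hiA.sub hiB) hiC,
      intervalIntegral.integral_sub hiA hiB,
      intervalIntegral.integral_const_mul, intervalIntegral.integral_const_mul]
    have hcubic : (∫ x in (0:ℝ)..1, (u t x) ^ 2 * pd2 u t x) = 0 := by
      have h := intervalIntegral.integral_eq_sub_of_hasDerivAt (a := (0:ℝ)) (b := (1:ℝ))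
        (f := fun x => (u t x) ^ 3 / 3) (f' := fun x => (u t x) ^ 2 * pd2 u t x)
        (fun x _ => by
          have h3 := ((hasDerivAt_pd2 hu t x).fun_pow 3).div_const 3
          refine h3.congr_deriv ?_
          push_cast; ring)
        (Continuous.intervalIntegrable (((hsec _ hcu t).pow 2).mul (hsec _ hcux t)) _ _)
      beta_reduce at h
      rw [(hbc t).1, (hbc t).2] at h
      simpa using h
    have hibp : (∫ x in (0:ℝ)..1, u t x * pd2 (pd2 u) t x) = - D t := by
      have h := intervalIntegral.integral_mul_deriv_eq_deriv_mul (a := 0) (b := 1)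
        (u := u t) (u' := pd2 u t) (v := pd2 u t) (v' := pd2 (pd2 u) t)
        (fun x _ => hasDerivAt_pd2 hu t x)
        (fun x _ => hasDerivAt_pd2 (contDiff_pd2 hu) t x)
        (Continuous.intervalIntegrable (hsec _ hcux t) _ _)
        (Continuous.intervalIntegrable (hsec _ hcuxx t) _ _)
      rw [(hbc t).1, (hbc t).2] at h
      simp only [zero_mul, mul_zero, sub_zero, zero_sub] at h
      rw [h, hDt]
      congr 1
      apply intervalIntegral.integral_congr
      intro x _
      ring
    rw [hcubic, hibp]
    ring
  -- A and B
  set A := ∫ t in (0:ℝ)..1, E t with hAdef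
  set B := ∫ t in (0:ℝ)..1, D t with hBdef
  have hAnn : 0 ≤ A :=
    intervalIntegral.integral_nonneg zero_le_one (fun t _ => hEnn t)
  have hBnn : 0 ≤ B :=
    intervalIntegral.integral_nonneg zero_le_one (fun t _ => hDnn t)
  have hABle : A ≤ B := by
    rw [hAdef, hBdef]
    exact intervalIntegral.integral_mono_on zero_le_one
      (hcE.intervalIntegrable _ _) (hcD.intervalIntegrable _ _) (fun t _ => hED t)
  -- periodicity of E
  have hEper : ∀ t, E (t + 1) = E t := by
    intro t
    rw [hEt, hEt]
    apply intervalIntegral.integral_congr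
    intro x _
    beta_reduce
    rw [huper t x]
  -- energy identity
  have hItint : (∫ t in (0:ℝ)..1, ∫ x in (0:ℝ)..1, u t x * pd1 u t x) = 0 := by
    have h := intervalIntegral.integral_eq_sub_of_hasDerivAt (a := (0:ℝ)) (b := (1:ℝ))
      (f := E) (f' := fun t => 2 * ∫ x in (0:ℝ)..1, u t x * pd1 u t x)
      (fun t _ => hEd t)
      (Continuous.intervalIntegrable (continuous_const.mul hcI) _ _)
    have h1 : E 1 = E 0 := by
      have := hEper 0; rwa [zero_add] at this
    rw [h1, sub_self] at h
    rw [intervalIntegral.integral_const_mul] at h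
    linarith
  have hmuB : μ * B = ∫ t in (0:ℝ)..1, ∫ x in (0:ℝ)..1, f t x * u t x := by
    have h2 : (∫ t in (0:ℝ)..1, ((∫ x in (0:ℝ)..1, f t x * u t x) - μ * D t)) = 0 := by
      rw [← intervalIntegral.integral_congr (fun t _ => hIt t)]
      exact hItint
    rw [intervalIntegral.integral_sub (f := fun t => ∫ x in (0:ℝ)..1, f t x * u t x) (g := fun t => μ * D t) (hcFU.intervalIntegrable _ _)
      ((continuous_const.mul hcD).intervalIntegrable _ _),
      intervalIntegral.integral_const_mul] at h2
    rw [hBdef]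
    linarith
  -- bound on the forcing term
  have hf2bnd : ∀ t ∈ Icc (0:ℝ) 2, (∫ x in (0:ℝ)..1, (f t x) ^ 2) ≤ Kf ^ 2 := by
    intro t ht
    calc (∫ x in (0:ℝ)..1, (f t x) ^ 2) ≤ ∫ _x in (0:ℝ)..1, Kf ^ 2 :=
          intervalIntegral.integral_mono_on zero_le_one
            (Continuous.intervalIntegrable ((hsec _ hfc t).pow 2) _ _)
            intervalIntegrable_const
            (fun x hx => by
              have h := hKf t ht x hx
              nlinarith [abs_nonneg (f t x), sq_abs (f t x)])
      _ = Kf ^ 2 := by simp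
  have hfu : (∫ t in (0:ℝ)..1, ∫ x in (0:ℝ)..1, f t x * u t x) ≤ Kf * Real.sqrt A := by
    have hptw : ∀ t ∈ Icc (0:ℝ) 1, (∫ x in (0:ℝ)..1, f t x * u t x) ≤ Kf * Real.sqrt (E t) := by
      intro t ht
      have hcs := cs_interval (hsec _ hfc t) (hsec _ hcu t)
      have hsq : Real.sqrt (∫ x in (0:ℝ)..1, (f t x) ^ 2) ≤ Kf := by
        have h := Real.sqrt_le_sqrt (hf2bnd t ⟨ht.1, ht.2.trans one_le_two⟩)
        rwa [Real.sqrt_sq hKf0] at h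
      calc (∫ x in (0:ℝ)..1, f t x * u t x)
          ≤ Real.sqrt (∫ x in (0:ℝ)..1, (f t x) ^ 2) * Real.sqrt (∫ x in (0:ℝ)..1, (u t x) ^ 2) := hcs
        _ ≤ Kf * Real.sqrt (E t) := by
            rw [hEt]
            exact mul_le_mul_of_nonneg_right hsq (Real.sqrt_nonneg _)
    have hsE : Continuous fun t => Kf * Real.sqrt (E t) :=
      continuous_const.mul (hcE.sqrt)
    calc (∫ t in (0:ℝ)..1, ∫ x in (0:ℝ)..1, f t x * u t x)
        ≤ ∫ t in (0:ℝ)..1, Kf * Real.sqrt (E t) :=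
          intervalIntegral.integral_mono_on zero_le_one
            (hcFU.intervalIntegrable _ _) (hsE.intervalIntegrable _ _) hptw
      _ = Kf * ∫ t in (0:ℝ)..1, Real.sqrt (E t) := intervalIntegral.integral_const_mul _ _
      _ ≤ Kf * Real.sqrt A := by
          apply mul_le_mul_of_nonneg_left _ hKf0
          have hcs := cs_interval (f := fun t => Real.sqrt (E t)) (g := fun _ => (1:ℝ))
            hcE.sqrt continuous_const
          have e1 : (∫ t in (0:ℝ)..1, Real.sqrt (E t) * 1) = ∫ t in (0:ℝ)..1, Real.sqrt (E t) := by
            simp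
          have e2 : (∫ t in (0:ℝ)..1, Real.sqrt (E t) ^ 2) = A := by
            rw [hAdef]
            apply intervalIntegral.integral_congr
            intro t _
            exact Real.sq_sqrt (hEnn t)
          have e3 : (∫ t in (0:ℝ)..1, ((1:ℝ)) ^ 2) = 1 := by simp
          rw [e1, e2, e3, Real.sqrt_one, mul_one] at hcs
          exact hcs
  -- B ≤ B0
  have hBB0 : B ≤ B0 := by
    have h1 : μ * B ≤ Kf * Real.sqrt B := by
      rw [hmuB]
      refine hfu.trans ?_
      exact mul_le_mul_of_nonneg_left (Real.sqrt_le_sqrt hABle) hKf0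
    rw [hB0def, le_div_iff₀ (by positivity)]
    nlinarith [Real.sq_sqrt hBnn, Real.sqrt_nonneg B, sq_nonneg (μ * Real.sqrt B - Kf),
      mul_le_mul_of_nonneg_left h1 hμ.le]
  have hAB0 : A ≤ B0 := hABle.trans hBB0
  -- Gronwall
  have hEE0 : ∀ s ∈ Icc (0:ℝ) 1, E s ≤ E0 := by
    obtain ⟨t₀, ht₀, hmin⟩ := isCompact_Icc.exists_isMinOn
      (nonempty_Icc.2 zero_le_one) hcE.continuousOn
    have hEt₀ : E t₀ ≤ A := by
      have h0 : E t₀ = ∫ _t in (0:ℝ)..1, E t₀ := by simp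
      rw [h0, hAdef]
      exact intervalIntegral.integral_mono_on zero_le_one intervalIntegrable_const
        (hcE.intervalIntegrable _ _) (fun t ht => hmin ht)
    have hbound : ∀ s ∈ Ico t₀ (t₀ + 1),
        (fun t => 2 * ∫ x in (0:ℝ)..1, u t x * pd1 u t x) s ≤ 1 * E s + Kf ^ 2 := by
      intro s hs
      have hs02 : s ∈ Icc (0:ℝ) 2 := ⟨le_trans ht₀.1 hs.1, by
        have := ht₀.2; have := hs.2; linarith⟩
      have h1 : (∫ x in (0:ℝ)..1, f s x * u s x) ≤ (Kf ^ 2 + E s) / 2 := by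
        have hm : (∫ x in (0:ℝ)..1, f s x * u s x)
            ≤ ∫ x in (0:ℝ)..1, ((f s x) ^ 2 + (u s x) ^ 2) / 2 :=
          intervalIntegral.integral_mono_on zero_le_one
            (Continuous.intervalIntegrable ((hsec _ hfc s).mul (hsec _ hcu s)) _ _)
            (Continuous.intervalIntegrable
              ((((hsec _ hfc s).pow 2).add ((hsec _ hcu s).pow 2)).div_const 2) _ _)
            (fun x _ => by nlinarith [sq_nonneg (f s x - u s x)])
        have hsplit2 : (∫ x in (0:ℝ)..1, ((f s x) ^ 2 + (u s x) ^ 2) / 2)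
            = ((∫ x in (0:ℝ)..1, (f s x) ^ 2) + E s) / 2 := by
          rw [hEt, intervalIntegral.integral_div, intervalIntegral.integral_add
            (Continuous.intervalIntegrable ((hsec _ hfc s).fun_pow 2) _ _)
            (Continuous.intervalIntegrable ((hsec _ hcu s).fun_pow 2) _ _)]
        rw [hsplit2] at hm
        have := hf2bnd s hs02
        linarith
      have h2 := hIt s
      have hDs := hDnn s
      simp only []
      rw [h2]
      have : 0 < μ := hμ
      nlinarith
    have hgron := le_gronwallBound_of_liminf_deriv_right_le (f := E)
      (f' := fun t => 2 * ∫ x in (0:ℝ)..1, u t x * pd1 u t x)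
      (δ := A) (K := 1) (ε := Kf ^ 2) (a := t₀) (b := t₀ + 1)
      hcE.continuousOn
      (fun x _ r hr => freq_slope (hEd x) r hr)
      hEt₀ hbound
    have hgb : ∀ y ∈ Icc t₀ (t₀ + 1), gronwallBound A 1 (Kf ^ 2) (y - t₀) ≤ E0 := by
      intro y hy
      rw [gronwallBound_of_K_ne_0 one_ne_zero]
      have hy1 : y - t₀ ≤ 1 := by linarith [hy.2]
      have hy0 : 0 ≤ y - t₀ := by linarith [hy.1]
      have hexple : Real.exp (1 * (y - t₀)) ≤ Real.exp 1 := by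
        apply Real.exp_le_exp.2; linarith
      have hexppos : (0:ℝ) < Real.exp (1 * (y - t₀)) := Real.exp_pos _
      rw [hE0def]
      have hexp1pos : (0:ℝ) < Real.exp 1 := Real.exp_pos _
      simp only [div_one]
      nlinarith [hAB0, hAnn, sq_nonneg Kf]
    intro s hs
    by_cases hst : t₀ ≤ s
    · have h := hgron s ⟨hst, by linarith [hs.2, ht₀.1]⟩
      exact h.trans (hgb s ⟨hst, by linarith [hs.2, ht₀.1]⟩)
    · push_neg at hst
      have hs1 : s + 1 ∈ Icc t₀ (t₀ + 1) := ⟨by linarith [hs.1, ht₀.2], by linarith⟩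
      have h := hgron (s + 1) hs1
      rw [hEper s] at h
      exact h.trans (hgb (s + 1) hs1)
  -- quartic bound
  have hu4 : (∫ x in (0:ℝ)..1, ∫ t in (0:ℝ)..1, ((fun t x => u t x ^ 2) t x) ^ 2) ≤ E0 * B0 := by
    have hsw := swapQ (h := fun t x => ((u t x) ^ 2) ^ 2)
      (by
        have : Function.uncurry (fun t x => ((u t x) ^ 2) ^ 2)
            = fun p => ((Function.uncurry u p) ^ 2) ^ 2 := rfl
        rw [this]; exact (hcu.pow 2).pow 2)
    have hper_t : ∀ t ∈ Icc (0:ℝ) 1, (∫ x in (0:ℝ)..1, ((u t x) ^ 2) ^ 2) ≤ E0 * D t := by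
      intro t ht
      have hm : (∫ x in (0:ℝ)..1, ((u t x) ^ 2) ^ 2)
          ≤ ∫ x in (0:ℝ)..1, D t * (u t x) ^ 2 :=
        intervalIntegral.integral_mono_on zero_le_one
          (Continuous.intervalIntegrable (((hsec _ hcu t).pow 2).pow 2) _ _)
          (Continuous.intervalIntegrable (continuous_const.mul ((hsec _ hcu t).pow 2)) _ _)
          (fun x hx => by nlinarith [hW t x hx, sq_nonneg (u t x)])
      rw [intervalIntegral.integral_const_mul] at hm
      have hEle := hEE0 t ht
      have hDt' := hDnn t
      calc (∫ x in (0:ℝ)..1, ((u t x) ^ 2) ^ 2) ≤ D t * ∫ x in (0:ℝ)..1, (u t x) ^ 2 := hm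
        _ = D t * E t := by rw [hEt]
        _ ≤ D t * E0 := mul_le_mul_of_nonneg_left hEle hDt'
        _ = E0 * D t := by ring
    have hm2 : (∫ t in (0:ℝ)..1, ∫ x in (0:ℝ)..1, ((u t x) ^ 2) ^ 2) ≤ E0 * B := by
      calc (∫ t in (0:ℝ)..1, ∫ x in (0:ℝ)..1, ((u t x) ^ 2) ^ 2)
          ≤ ∫ t in (0:ℝ)..1, E0 * D t :=
            intervalIntegral.integral_mono_on zero_le_one
              (Continuous.intervalIntegrable
                (intervalIntegral.continuous_parametric_intervalIntegral_of_continuous'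
                  (μ := volume) (f := fun t x => ((u t x) ^ 2) ^ 2)
                  ((hcu.fun_pow 2).fun_pow 2) _ _) _ _)
              (Continuous.intervalIntegrable (continuous_const.mul hcD) _ _) hper_t
        _ = E0 * B := by rw [hBdef, intervalIntegral.integral_const_mul]
    show (∫ x in (0:ℝ)..1, ∫ t in (0:ℝ)..1, ((u t x) ^ 2) ^ 2) ≤ E0 * B0
    rw [← hsw]
    exact hm2.trans (mul_le_mul_of_nonneg_left hBB0 hE0nn)
  -- swapped bounds for Bessel
  have hswu : (∫ x in (0:ℝ)..1, ∫ t in (0:ℝ)..1, (u t x) ^ 2) ≤ B0 := by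
    rw [← swapQ (h := fun t x => (u t x) ^ 2) (hcu.fun_pow 2)]
    exact hAB0
  have hswux : (∫ x in (0:ℝ)..1, ∫ t in (0:ℝ)..1, (pd2 u t x) ^ 2) ≤ B0 := by
    rw [← swapQ (h := fun t x => (pd2 u t x) ^ 2) (hcux.fun_pow 2)]
    exact hBB0
  have hswf : (∫ x in (0:ℝ)..1, ∫ t in (0:ℝ)..1, (f t x) ^ 2) ≤ Kf ^ 2 := by
    have hptw : ∀ x ∈ Icc (0:ℝ) 1, (∫ t in (0:ℝ)..1, (f t x) ^ 2) ≤ Kf ^ 2 := by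
      intro x hx
      calc (∫ t in (0:ℝ)..1, (f t x) ^ 2) ≤ ∫ _t in (0:ℝ)..1, Kf ^ 2 :=
            intervalIntegral.integral_mono_on zero_le_one
              (Continuous.intervalIntegrable
                ((hfc.comp (continuous_id.prodMk continuous_const)).pow 2) _ _)
              intervalIntegrable_const
              (fun t ht => by
                have h := hKf t ⟨ht.1, ht.2.trans one_le_two⟩ x hx
                nlinarith [abs_nonneg (f t x), sq_abs (f t x)])
        _ = Kf ^ 2 := by simp
    calc (∫ x in (0:ℝ)..1, ∫ t in (0:ℝ)..1, (f t x) ^ 2) ≤ ∫ _x in (0:ℝ)..1, Kf ^ 2 :=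
          intervalIntegral.integral_mono_on zero_le_one
            (Continuous.intervalIntegrable
              (intervalIntegral.continuous_parametric_intervalIntegral_of_continuous'
                (μ := volume) (f := fun x t => (f t x) ^ 2)
                ((hfc.comp (continuous_snd.prodMk continuous_fst)).fun_pow 2) _ _) _ _)
            intervalIntegrable_const hptw
      _ = Kf ^ 2 := by simp
  -- sum over any finite set
  have hIknn : ∀ k : ℤ, 0 ≤ ∫ x in (0:ℝ)..1, ‖timeFourierCoeff u k x‖ ^ 2 := fun k =>
    intervalIntegral.integral_nonneg zero_le_one (fun x _ => sq_nonneg _)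
  have hsum : ∀ F : Finset ℤ,
      (∑ k ∈ F, |(k:ℝ)| * ∫ x in (0:ℝ)..1, ‖timeFourierCoeff u k x‖ ^ 2) ≤ S0 := by
    intro F
    have hcusq : Continuous (Function.uncurry fun t x => u t x ^ 2) := by
      have h : Function.uncurry (fun t x => u t x ^ 2) = fun p => (Function.uncurry u p) ^ 2 := rfl
      rw [h]; exact hcu.pow 2
    set a : ℤ → ℝ := fun k => Real.sqrt (∫ x in (0:ℝ)..1, ‖timeFourierCoeff f k x‖ ^ 2) with hadef
    set b : ℤ → ℝ := fun k => Real.sqrt (∫ x in (0:ℝ)..1, ‖timeFourierCoeff u k x‖ ^ 2) with hbdef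
    set r : ℤ → ℝ := fun k =>
      Real.sqrt (∫ x in (0:ℝ)..1, ‖timeFourierCoeff (fun t x => u t x ^ 2) k x‖ ^ 2) with hrdef
    set q : ℤ → ℝ := fun k => ∫ x in (0:ℝ)..1, ‖timeFourierCoeff (pd2 u) k x‖ ^ 2 with hqdef
    have hqnn : ∀ k, 0 ≤ q k := fun k =>
      intervalIntegral.integral_nonneg zero_le_one (fun x _ => sq_nonneg _)
    have hkbd : ∀ k ∈ F, |(k:ℝ)| * (∫ x in (0:ℝ)..1, ‖timeFourierCoeff u k x‖ ^ 2)
        ≤ a k * b k + r k * Real.sqrt (q k) + μ * q k := fun k _ =>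
      per_k_estimate μ lam hμ hlam0 hlam1 f u hfc hu huper hbc hpde' k
    have hstep := Finset.sum_le_sum hkbd
    have hsplit : (∑ k ∈ F, (a k * b k + r k * Real.sqrt (q k) + μ * q k))
        = (∑ k ∈ F, a k * b k) + (∑ k ∈ F, r k * Real.sqrt (q k)) + μ * ∑ k ∈ F, q k := by
      rw [Finset.sum_add_distrib, Finset.sum_add_distrib, Finset.mul_sum]
    -- Bessel bounds on the squares
    have hsq : ∀ (g : ℤ → ℝ), (∀ k, 0 ≤ g k) → ∀ k, (fun k => Real.sqrt (g k)) k ^ 2 = g k :=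
      fun g hg k => Real.sq_sqrt (hg k)
    have hBa : (∑ k ∈ F, a k ^ 2) ≤ Kf ^ 2 := by
      have h1 : (∑ k ∈ F, a k ^ 2) = ∑ k ∈ F, ∫ x in (0:ℝ)..1, ‖timeFourierCoeff f k x‖ ^ 2 := by
        apply Finset.sum_congr rfl
        intro k _
        exact Real.sq_sqrt (intervalIntegral.integral_nonneg zero_le_one (fun x _ => sq_nonneg _))
      rw [h1]
      exact bessel_bound hfc F hswf
    have hBb : (∑ k ∈ F, b k ^ 2) ≤ B0 := by
      have h1 : (∑ k ∈ F, b k ^ 2) = ∑ k ∈ F, ∫ x in (0:ℝ)..1, ‖timeFourierCoeff u k x‖ ^ 2 := by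
        apply Finset.sum_congr rfl
        intro k _
        exact Real.sq_sqrt (hIknn k)
      rw [h1]
      exact bessel_bound hcu F hswu
    have hBr : (∑ k ∈ F, r k ^ 2) ≤ E0 * B0 := by
      have h1 : (∑ k ∈ F, r k ^ 2)
          = ∑ k ∈ F, ∫ x in (0:ℝ)..1, ‖timeFourierCoeff (fun t x => u t x ^ 2) k x‖ ^ 2 := by
        apply Finset.sum_congr rfl
        intro k _
        exact Real.sq_sqrt (intervalIntegral.integral_nonneg zero_le_one (fun x _ => sq_nonneg _))
      rw [h1]
      exact bessel_bound hcusq F hu4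
    have hBq : (∑ k ∈ F, q k) ≤ B0 := bessel_bound hcux F hswux
    -- assemble
    have hcs1 : (∑ k ∈ F, a k * b k) ≤ Kf * Real.sqrt B0 := by
      have h := finset_cs F a b (fun k => Real.sqrt_nonneg _) (fun k => Real.sqrt_nonneg _)
      have h2 : Real.sqrt (∑ k ∈ F, a k ^ 2) ≤ Kf := by
        have h3 := Real.sqrt_le_sqrt hBa
        rwa [Real.sqrt_sq hKf0] at h3
      have h4 : Real.sqrt (∑ k ∈ F, b k ^ 2) ≤ Real.sqrt B0 := Real.sqrt_le_sqrt hBb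
      calc (∑ k ∈ F, a k * b k) ≤ Real.sqrt (∑ k ∈ F, a k ^ 2) * Real.sqrt (∑ k ∈ F, b k ^ 2) := h
        _ ≤ Kf * Real.sqrt B0 :=
            mul_le_mul h2 h4 (Real.sqrt_nonneg _) hKf0
    have hcs2 : (∑ k ∈ F, r k * Real.sqrt (q k)) ≤ Real.sqrt (E0 * B0) * Real.sqrt B0 := by
      have h := finset_cs F r (fun k => Real.sqrt (q k))
        (fun k => Real.sqrt_nonneg _) (fun k => Real.sqrt_nonneg _)
      have h2 : Real.sqrt (∑ k ∈ F, r k ^ 2) ≤ Real.sqrt (E0 * B0) := Real.sqrt_le_sqrt hBr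
      have h3 : Real.sqrt (∑ k ∈ F, Real.sqrt (q k) ^ 2) ≤ Real.sqrt B0 := by
        apply Real.sqrt_le_sqrt
        refine le_trans (le_of_eq ?_) hBq
        apply Finset.sum_congr rfl
        intro k _
        exact Real.sq_sqrt (hqnn k)
      calc (∑ k ∈ F, r k * Real.sqrt (q k))
          ≤ Real.sqrt (∑ k ∈ F, r k ^ 2) * Real.sqrt (∑ k ∈ F, Real.sqrt (q k) ^ 2) := h
        _ ≤ Real.sqrt (E0 * B0) * Real.sqrt B0 :=
            mul_le_mul h2 h3 (Real.sqrt_nonneg _) (Real.sqrt_nonneg _)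
    have hq3 : μ * (∑ k ∈ F, q k) ≤ μ * B0 := mul_le_mul_of_nonneg_left hBq hμ.le
    rw [hS0def]
    calc (∑ k ∈ F, |(k:ℝ)| * ∫ x in (0:ℝ)..1, ‖timeFourierCoeff u k x‖ ^ 2)
        ≤ ∑ k ∈ F, (a k * b k + r k * Real.sqrt (q k) + μ * q k) := hstep
      _ = (∑ k ∈ F, a k * b k) + (∑ k ∈ F, r k * Real.sqrt (q k)) + μ * ∑ k ∈ F, q k := hsplit
      _ ≤ Kf * Real.sqrt B0 + Real.sqrt (E0 * B0) * Real.sqrt B0 + μ * B0 := by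
          linarith
  -- tsum bound
  have htsum : (∑' k : ℤ, |(k : ℝ)| * ∫ x in (0:ℝ)..1, ‖timeFourierCoeff u k x‖ ^ 2)
      ≤ S0 := by
    have habs : (fun k : ℤ => |(k : ℝ)| * ∫ x in (0:ℝ)..1, ‖timeFourierCoeff u k x‖ ^ 2)
        = fun k : ℤ => |(k : ℝ)| * ∫ x in (0:ℝ)..1, ‖timeFourierCoeff u k x‖ ^ 2 := by
      funext k
      congr 1
    rw [habs]
    by_cases hS : Summable fun k : ℤ => |(k : ℝ)| * ∫ x in (0:ℝ)..1, ‖timeFourierCoeff u k x‖ ^ 2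
    · exact Summable.tsum_le_of_sum_le hS hsum
    · rw [tsum_eq_zero_of_not_summable hS]
      exact hS0nn
  -- final assembly
  have hgoal2 : (∫ t in (0:ℝ)..1, ∫ x in (0:ℝ)..1, (deriv (u t) x) ^ 2) = B := by
    rw [hBdef]
    apply intervalIntegral.integral_congr
    intro t _
    beta_reduce
    rw [hDt]
    apply intervalIntegral.integral_congr
    intro x _
    beta_reduce
    rw [deriv_eq_pd2 hu t]
  rw [hgoal2]
  linarith
end

section
/- Let μ > 0 and let v : [0,1] × [0,1] → ℝ be continuous with v(t,0) = v(t,1) = 0 for all t. Let ψ : [0,1] × [0,1] → ℝ be continuous, with ∂_t ψ, ∂_x ψ and ∂²_x ψ continuous on [0,1] × [0,1], satisfying ∂_x ψ(t,0) = ∂_x ψ(t,1) = 0 for all t ∈ [0,1] and ∂_t ψ − μ ∂²_x ψ + v ∂_x ψ = 0 on [0,1] × [0,1]. If ψ(0,x) ≥ 0 for all x ∈ [0,1], then ψ(1,x) ≥ 0 for all x ∈ [0,1]. -/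
open MeasureTheory
open Set Filter Topology

/-- If `u` has derivative `u'` at `t₀ > 0` and `u t₀` is minimal among `u t` for
`t ∈ Ioo 0 t₀`, then `u' ≤ 0`. -/
lemma aux_deriv_nonpos_of_min_left {u : ℝ → ℝ} {u' t₀ : ℝ} (h : HasDerivAt u u' t₀)
    (ht : 0 < t₀) (hmin : ∀ t ∈ Ioo (0:ℝ) t₀, u t₀ ≤ u t) : u' ≤ 0 := by
  have hs : Tendsto (slope u t₀) (𝓝[<] t₀) (𝓝 u') :=
    (hasDerivAt_iff_tendsto_slope.mp h).mono_left
      (nhdsWithin_mono _ fun x hx => ne_of_lt hx)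
  refine le_of_tendsto hs ?_
  filter_upwards [Ioo_mem_nhdsLT_of_mem (⟨ht, le_refl _⟩ : t₀ ∈ Ioc 0 t₀)] with t htI
  rw [slope_def_field]
  exact div_nonpos_iff.mpr (Or.inl ⟨by linarith [hmin t htI], by linarith [htI.2]⟩)

/-- If `g x₀ = 0` and `g` has negative derivative at `x₀`, then `g < 0` just right of `x₀`. -/
lemma aux_neg_right {g : ℝ → ℝ} {c x₀ : ℝ} (h : HasDerivAt g c x₀) (hc : c < 0)
    (hg0 : g x₀ = 0) : ∃ b, x₀ < b ∧ ∀ x ∈ Ioo x₀ b, g x < 0 := by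
  have hs : Tendsto (slope g x₀) (𝓝[>] x₀) (𝓝 c) :=
    (hasDerivAt_iff_tendsto_slope.mp h).mono_left
      (nhdsWithin_mono _ fun x hx => ne_of_gt hx)
  have hev : ∀ᶠ x in 𝓝[>] x₀, slope g x₀ x < 0 := hs.eventually_lt_const hc
  obtain ⟨b, hb, hball⟩ := (nhdsGT_basis x₀).eventually_iff.mp hev
  refine ⟨b, hb, fun x hx => ?_⟩
  have h1 := hball hx
  rw [slope_def_field, hg0, sub_zero] at h1
  rcases div_neg_iff.mp h1 with ⟨_, h3⟩ | ⟨h2, _⟩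
  · linarith [hx.1]
  · exact h2

/-- If `g x₀ = 0` and `g` has negative derivative at `x₀`, then `g > 0` just left of `x₀`. -/
lemma aux_pos_left {g : ℝ → ℝ} {c x₀ : ℝ} (h : HasDerivAt g c x₀) (hc : c < 0)
    (hg0 : g x₀ = 0) : ∃ a, a < x₀ ∧ ∀ x ∈ Ioo a x₀, 0 < g x := by
  have hs : Tendsto (slope g x₀) (𝓝[<] x₀) (𝓝 c) :=
    (hasDerivAt_iff_tendsto_slope.mp h).mono_left
      (nhdsWithin_mono _ fun x hx => ne_of_lt hx)
  have hev : ∀ᶠ x in 𝓝[<] x₀, slope g x₀ x < 0 := hs.eventually_lt_const hc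
  obtain ⟨a, ha, hball⟩ := (nhdsLT_basis x₀).eventually_iff.mp hev
  refine ⟨a, ha, fun x hx => ?_⟩
  have h1 := hball hx
  rw [slope_def_field, hg0, sub_zero] at h1
  rcases div_neg_iff.mp h1 with ⟨h2, _⟩ | ⟨_, h3⟩
  · exact h2
  · linarith [hx.2]

/-- Second-derivative test: if `f` attains its minimum over `[0,1]` at `x₀`, the first
derivative `g` vanishes at `x₀`, and `g` has derivative `c` at `x₀`, then `0 ≤ c`. -/
lemma aux_second_deriv_nonneg {f g : ℝ → ℝ} {c x₀ : ℝ} (hx₀ : x₀ ∈ Icc (0:ℝ) 1)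
    (hdf : ∀ x ∈ Icc (0:ℝ) 1, HasDerivAt f (g x) x) (hdg : HasDerivAt g c x₀)
    (hg0 : g x₀ = 0) (hmin : ∀ x ∈ Icc (0:ℝ) 1, f x₀ ≤ f x) : 0 ≤ c := by
  by_contra hc
  push_neg at hc
  by_cases hx1 : x₀ < 1
  · -- use the right side
    obtain ⟨b, hb, hbneg⟩ := aux_neg_right hdg hc hg0
    set x₁ : ℝ := min ((x₀ + b) / 2) ((x₀ + 1) / 2) with hx₁def
    have h01 : x₀ < x₁ := lt_min (by linarith) (by linarith)
    have hx₁b : x₁ < b := lt_of_le_of_lt (min_le_left _ _) (by linarith)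
    have hx₁1 : x₁ < 1 := lt_of_le_of_lt (min_le_right _ _) (by linarith)
    have hsub : Icc x₀ x₁ ⊆ Icc (0:ℝ) 1 :=
      Icc_subset_Icc hx₀.1 (le_of_lt hx₁1)
    have hanti : StrictAntiOn f (Icc x₀ x₁) := by
      refine strictAntiOn_of_deriv_neg (convex_Icc _ _)
        (fun x hx => ((hdf x (hsub hx)).continuousAt).continuousWithinAt) ?_
      intro x hx
      rw [interior_Icc] at hx
      rw [(hdf x (hsub (Ioo_subset_Icc_self hx))).deriv]
      exact hbneg x ⟨hx.1, lt_trans hx.2 hx₁b⟩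
    have := hanti (left_mem_Icc.mpr h01.le) (right_mem_Icc.mpr h01.le) h01
    have := hmin x₁ (hsub (right_mem_Icc.mpr h01.le))
    linarith
  · -- x₀ = 1, use the left side
    have hx₀1 : x₀ = 1 := le_antisymm hx₀.2 (not_lt.mp hx1)
    obtain ⟨a, ha, hapos⟩ := aux_pos_left hdg hc hg0
    set x₁ : ℝ := max ((a + x₀) / 2) (x₀ / 2) with hx₁def
    have h01 : x₁ < x₀ := max_lt (by linarith) (by linarith [hx₀1])
    have hx₁a : a < x₁ := lt_of_lt_of_le (by linarith) (le_max_left _ _)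
    have hx₁0 : 0 < x₁ := lt_of_lt_of_le (by linarith [hx₀1]) (le_max_right _ _)
    have hsub : Icc x₁ x₀ ⊆ Icc (0:ℝ) 1 :=
      Icc_subset_Icc (le_of_lt hx₁0) hx₀.2
    have hmono : StrictMonoOn f (Icc x₁ x₀) := by
      refine strictMonoOn_of_deriv_pos (convex_Icc _ _)
        (fun x hx => ((hdf x (hsub hx)).continuousAt).continuousWithinAt) ?_
      intro x hx
      rw [interior_Icc] at hx
      rw [(hdf x (hsub (Ioo_subset_Icc_self hx))).deriv]
      exact hapos x ⟨lt_of_lt_of_le hx₁a hx.1.le, hx.2⟩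
    have := hmono (left_mem_Icc.mpr h01.le) (right_mem_Icc.mpr h01.le) h01
    have := hmin x₁ (hsub (left_mem_Icc.mpr h01.le))
    linarith

/-- Positivity (maximum principle) for the drift-diffusion evolution
`ψ_t − μ ψ_xx + v ψ_x = 0` on `[0,1] × [0,1]` with homogeneous Neumann boundary conditions:
if `ψ(0,·) ≥ 0` then `ψ(1,·) ≥ 0`.  The functions `ψt`, `ψx`, `ψxx` are the partial
derivatives `∂_t ψ`, `∂_x ψ`, `∂²_x ψ`, assumed to exist and be continuous on the square. -/
theorem drift_diffusion_positivity (μ : ℝ) (hμ : 0 < μ)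
    (v ψ ψt ψx ψxx : ℝ → ℝ → ℝ)
    (hv : ContinuousOn (Function.uncurry v) (Set.Icc 0 1 ×ˢ Set.Icc 0 1))
    (hvbc : ∀ t ∈ Set.Icc (0:ℝ) 1, v t 0 = 0 ∧ v t 1 = 0)
    (hψ : ContinuousOn (Function.uncurry ψ) (Set.Icc 0 1 ×ˢ Set.Icc 0 1))
    (hψt : ContinuousOn (Function.uncurry ψt) (Set.Icc 0 1 ×ˢ Set.Icc 0 1))
    (hψx : ContinuousOn (Function.uncurry ψx) (Set.Icc 0 1 ×ˢ Set.Icc 0 1))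
    (hψxx : ContinuousOn (Function.uncurry ψxx) (Set.Icc 0 1 ×ˢ Set.Icc 0 1))
    (hdt : ∀ t ∈ Set.Icc (0:ℝ) 1, ∀ x ∈ Set.Icc (0:ℝ) 1,
      HasDerivAt (fun s => ψ s x) (ψt t x) t)
    (hdx : ∀ t ∈ Set.Icc (0:ℝ) 1, ∀ x ∈ Set.Icc (0:ℝ) 1,
      HasDerivAt (fun y => ψ t y) (ψx t x) x)
    (hdxx : ∀ t ∈ Set.Icc (0:ℝ) 1, ∀ x ∈ Set.Icc (0:ℝ) 1,
      HasDerivAt (fun y => ψx t y) (ψxx t x) x)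
    (hneu : ∀ t ∈ Set.Icc (0:ℝ) 1, ψx t 0 = 0 ∧ ψx t 1 = 0)
    (hpde : ∀ t ∈ Set.Icc (0:ℝ) 1, ∀ x ∈ Set.Icc (0:ℝ) 1,
      ψt t x - μ * ψxx t x + v t x * ψx t x = 0)
    (hpos : ∀ x ∈ Set.Icc (0:ℝ) 1, 0 ≤ ψ 0 x) :
    ∀ x ∈ Set.Icc (0:ℝ) 1, 0 ≤ ψ 1 x := by
  have key : ∀ ε : ℝ, 0 < ε → ∀ x ∈ Set.Icc (0:ℝ) 1, -ε ≤ ψ 1 x := by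
    intro ε hε
    set K : Set (ℝ × ℝ) := Set.Icc (0:ℝ) 1 ×ˢ Set.Icc (0:ℝ) 1 with hKdef
    have hKc : IsCompact K := isCompact_Icc.prod isCompact_Icc
    have hKne : K.Nonempty := ⟨(0, 0), by
      simp [hKdef, Set.mem_prod, Set.left_mem_Icc]⟩
    have hucont : ContinuousOn (fun p : ℝ × ℝ => ψ p.1 p.2 + ε * p.1) K := by
      have h1 : ContinuousOn (fun p : ℝ × ℝ => ψ p.1 p.2) K := hψ
      exact h1.add ((continuous_const.mul continuous_fst).continuousOn)
    obtain ⟨p₀, hp₀, hminon⟩ := hKc.exists_isMinOn hKne hucont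
    have hmin := isMinOn_iff.mp hminon
    obtain ⟨ht₀, hx₀⟩ := Set.mem_prod.mp hp₀
    set t₀ := p₀.1
    set x₀ := p₀.2
    rcases eq_or_lt_of_le ht₀.1 with ht0 | ht0
    · -- minimum attained at t = 0
      intro x hx
      have h1 := hmin (1, x) (Set.mem_prod.mpr ⟨Set.right_mem_Icc.mpr zero_le_one, hx⟩)
      have h2 := hpos x₀ hx₀
      have h1' : ψ t₀ x₀ + ε * t₀ ≤ ψ 1 x + ε * 1 := h1
      rw [← ht0] at h1'
      linarith
    · -- minimum at t₀ > 0 : contradiction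
      exfalso
      -- spatial derivative vanishes at the minimum
      have hx0 : ψx t₀ x₀ = 0 := by
        rcases eq_or_lt_of_le hx₀.1 with h0 | h0
        · rw [← h0]
          exact (hneu t₀ ht₀).1
        · rcases eq_or_lt_of_le hx₀.2 with h1 | h1
          · rw [h1]
            exact (hneu t₀ ht₀).2
          · have hloc : IsLocalMin (fun y => ψ t₀ y) x₀ := by
              filter_upwards [Icc_mem_nhds h0 h1] with y hy
              have := hmin (t₀, y) (Set.mem_prod.mpr ⟨ht₀, hy⟩)
              dsimp at this
              linarith
            exact hloc.hasDerivAt_eq_zero (hdx t₀ ht₀ x₀ hx₀)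
      -- second spatial derivative is nonnegative
      have hxx : 0 ≤ ψxx t₀ x₀ := by
        refine aux_second_deriv_nonneg hx₀ (fun x hx => hdx t₀ ht₀ x hx)
          (hdxx t₀ ht₀ x₀ hx₀) hx0 ?_
        intro x hx
        have := hmin (t₀, x) (Set.mem_prod.mpr ⟨ht₀, hx⟩)
        dsimp at this
        linarith
      -- time derivative of the perturbed function is nonpositive
      have hts : ψt t₀ x₀ + ε ≤ 0 := by
        have hd : HasDerivAt (fun s => ψ s x₀ + ε * s) (ψt t₀ x₀ + ε) t₀ := by
          have := (hdt t₀ ht₀ x₀ hx₀).add ((hasDerivAt_id t₀).const_mul ε)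
          simp only [mul_one] at this
          exact this
        refine aux_deriv_nonpos_of_min_left hd ht0 ?_
        intro t htI
        have htmem : t ∈ Set.Icc (0:ℝ) 1 := ⟨htI.1.le, htI.2.le.trans ht₀.2⟩
        have := hmin (t, x₀) (Set.mem_prod.mpr ⟨htmem, hx₀⟩)
        dsimp at this
        linarith
      -- PDE gives a contradiction
      have hp := hpde t₀ ht₀ x₀ hx₀
      rw [hx0, mul_zero] at hp
      nlinarith [mul_nonneg hμ.le hxx]
  intro x hx
  by_contra h
  push_neg at h
  have := key (-(ψ 1 x) / 2) (by linarith) x hx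
  linarith
end

section
/- Let μ > 0, K ∈ ℝ, and let v : ℝ × [0,1] → ℝ be continuous, time-periodic, with v(t,0) = v(t,1) = 0 for all t. Suppose φ : ℝ × [0,1] → ℝ is smooth, time-periodic, strictly positive everywhere, satisfies ∂_x φ(t,0) = ∂_x φ(t,1) = 0 for all t, and solves ∂_t φ − μ ∂²_x φ + v ∂_x φ + K φ = 0 on ℝ × [0,1]. Then K = 0. -/
open MeasureTheory

/-- Second derivative test at a (possibly boundary) maximum point where the first derivative
vanishes. -/
lemma second_deriv_nonpos_at_max {g : ℝ → ℝ} (hg : ContDiff ℝ (⊤ : ℕ∞) g) {x₀ : ℝ}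
    (hx₀ : x₀ ∈ Set.Icc (0:ℝ) 1) (hmax : ∀ x ∈ Set.Icc (0:ℝ) 1, g x ≤ g x₀)
    (hd : deriv g x₀ = 0) : deriv (deriv g) x₀ ≤ 0 := by
  by_contra hpos
  push_neg at hpos
  have hg1 : ContDiff ℝ (⊤ : ℕ∞) (deriv g) := (contDiff_infty_iff_deriv.mp hg).2
  have hc : Continuous (deriv (deriv g)) := (contDiff_infty_iff_deriv.mp hg1).2.continuous
  obtain ⟨ε, hε, hball⟩ := Metric.mem_nhds_iff.mp
    ((isOpen_lt continuous_const hc).mem_nhds hpos)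
  rcases lt_or_eq_of_le hx₀.2 with hx1 | hx1
  · -- x₀ < 1 : move right
    set δ := min (ε/2) (1 - x₀) with hδdef
    have hδ : 0 < δ := lt_min (by linarith) (by linarith)
    have hsub : Set.Icc x₀ (x₀ + δ) ⊆ Metric.ball x₀ ε := by
      intro y hy
      have h1 : δ ≤ ε/2 := min_le_left _ _
      simp only [Metric.mem_ball, Real.dist_eq, abs_lt]
      constructor <;> [linarith [hy.1]; linarith [hy.2]]
    have hpos' : ∀ y ∈ Set.Icc x₀ (x₀ + δ), 0 < deriv (deriv g) y :=
      fun y hy => hball (hsub hy)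
    have mono1 : StrictMonoOn (deriv g) (Set.Icc x₀ (x₀ + δ)) :=
      strictMonoOn_of_deriv_pos (convex_Icc _ _) hg1.continuous.continuousOn
        (fun y hy => hpos' y (interior_subset hy))
    have hder_pos : ∀ y ∈ Set.Ioo x₀ (x₀ + δ), 0 < deriv g y := by
      intro y hy
      have := mono1 (Set.left_mem_Icc.mpr (by linarith)) ⟨hy.1.le, hy.2.le⟩ hy.1
      rwa [hd] at this
    have mono2 : StrictMonoOn g (Set.Icc x₀ (x₀ + δ)) :=
      strictMonoOn_of_deriv_pos (convex_Icc _ _) hg.continuous.continuousOn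
        (fun y hy => hder_pos y (by rwa [interior_Icc] at hy))
    have hlt : g x₀ < g (x₀ + δ) :=
      mono2 (Set.left_mem_Icc.mpr (by linarith)) (Set.right_mem_Icc.mpr (by linarith))
        (by linarith)
    have hmem : x₀ + δ ∈ Set.Icc (0:ℝ) 1 := by
      constructor
      · linarith [hx₀.1]
      · have := min_le_right (ε/2) (1 - x₀); linarith
    linarith [hmax _ hmem]
  · -- x₀ = 1 : move left
    set δ := min (ε/2) 1 with hδdef
    have hδ : 0 < δ := lt_min (by linarith) one_pos
    have hδ1 : δ ≤ 1 := min_le_right _ _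
    have hsub : Set.Icc (x₀ - δ) x₀ ⊆ Metric.ball x₀ ε := by
      intro y hy
      have h1 : δ ≤ ε/2 := min_le_left _ _
      simp only [Metric.mem_ball, Real.dist_eq, abs_lt]
      constructor <;> [linarith [hy.1]; linarith [hy.2]]
    have hpos' : ∀ y ∈ Set.Icc (x₀ - δ) x₀, 0 < deriv (deriv g) y :=
      fun y hy => hball (hsub hy)
    have mono1 : StrictMonoOn (deriv g) (Set.Icc (x₀ - δ) x₀) :=
      strictMonoOn_of_deriv_pos (convex_Icc _ _) hg1.continuous.continuousOn
        (fun y hy => hpos' y (interior_subset hy))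
    have hder_neg : ∀ y ∈ Set.Ioo (x₀ - δ) x₀, deriv g y < 0 := by
      intro y hy
      have := mono1 ⟨hy.1.le, hy.2.le⟩ (Set.right_mem_Icc.mpr (by linarith)) hy.2
      rwa [hd] at this
    have mono2 : StrictAntiOn g (Set.Icc (x₀ - δ) x₀) :=
      strictAntiOn_of_deriv_neg (convex_Icc _ _) hg.continuous.continuousOn
        (fun y hy => hder_neg y (by rwa [interior_Icc] at hy))
    have hlt : g x₀ < g (x₀ - δ) :=
      mono2 (Set.left_mem_Icc.mpr (by linarith)) (Set.right_mem_Icc.mpr (by linarith))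
        (by linarith)
    have hmem : x₀ - δ ∈ Set.Icc (0:ℝ) 1 := ⟨by linarith [hx₀.1], by linarith [hx₀.2]⟩
    linarith [hmax _ hmem]

/-- At the global maximum of a smooth time-periodic Neumann solution of the eigenproblem,
`K * ψ ≤ 0`. -/
lemma aux_max (μ K : ℝ) (hμ : 0 < μ) (v : ℝ → ℝ → ℝ)
    (hvbc : ∀ t : ℝ, v t 0 = 0 ∧ v t 1 = 0)
    (ψ : ℝ → ℝ → ℝ) (hψ : ContDiff ℝ (⊤ : ℕ∞) (Function.uncurry ψ))
    (hper : ∀ t x : ℝ, ψ (t + 1) x = ψ t x)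
    (hneu : ∀ t : ℝ, deriv (ψ t) 0 = 0 ∧ deriv (ψ t) 1 = 0)
    (hpde : ∀ t : ℝ, ∀ x ∈ Set.Icc (0:ℝ) 1,
      deriv (fun s => ψ s x) t - μ * deriv (deriv (ψ t)) x
        + v t x * deriv (ψ t) x + K * ψ t x = 0) :
    ∃ t₀ x₀ : ℝ, x₀ ∈ Set.Icc (0:ℝ) 1 ∧ K * ψ t₀ x₀ ≤ 0 := by
  -- smoothness of slices
  have hslice_x : ∀ t : ℝ, ContDiff ℝ (⊤ : ℕ∞) (ψ t) := by
    intro t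
    exact hψ.comp (contDiff_const.prodMk contDiff_id)
  have hslice_t : ∀ x : ℝ, ContDiff ℝ (⊤ : ℕ∞) (fun s => ψ s x) := by
    intro x
    exact hψ.comp (contDiff_id.prodMk contDiff_const)
  -- max over the compact square
  have hcomp : IsCompact (Set.Icc (0:ℝ) 1 ×ˢ Set.Icc (0:ℝ) 1) :=
    isCompact_Icc.prod isCompact_Icc
  have hne : (Set.Icc (0:ℝ) 1 ×ˢ Set.Icc (0:ℝ) 1).Nonempty :=
    ⟨(0, 0), by constructor <;> exact ⟨le_refl 0, zero_le_one⟩⟩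
  obtain ⟨p, hp, hpmax⟩ := hcomp.exists_isMaxOn hne hψ.continuous.continuousOn
  set t₀ := p.1
  set x₀ := p.2
  have ht₀ : t₀ ∈ Set.Icc (0:ℝ) 1 := hp.1
  have hx₀ : x₀ ∈ Set.Icc (0:ℝ) 1 := hp.2
  -- global max over all times
  have hmax : ∀ t : ℝ, ∀ x ∈ Set.Icc (0:ℝ) 1, ψ t x ≤ ψ t₀ x₀ := by
    intro t x hx
    have hperx : Function.Periodic (fun s => ψ s x) 1 := fun s => hper s x
    have hfr : ψ (Int.fract t) x = ψ t x := by
      have h := hperx.sub_int_mul_eq (x := t) ⌊t⌋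
      simp only [mul_one] at h
      rwa [Int.self_sub_floor] at h
    have hfr_mem : Int.fract t ∈ Set.Icc (0:ℝ) 1 :=
      ⟨Int.fract_nonneg t, (Int.fract_lt_one t).le⟩
    have h2 : ψ (Int.fract t) x ≤ ψ t₀ x₀ := hpmax (Set.mk_mem_prod hfr_mem hx)
    rw [hfr] at h2
    exact h2
  -- time derivative vanishes at the max
  have ht_deriv : deriv (fun s => ψ s x₀) t₀ = 0 := by
    apply IsLocalMax.deriv_eq_zero
    exact Filter.Eventually.of_forall (fun s => hmax s x₀ hx₀)
  -- space derivative vanishes at the max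
  have hx_deriv : deriv (ψ t₀) x₀ = 0 := by
    rcases eq_or_lt_of_le hx₀.1 with h0 | h0
    · rw [← h0]; exact (hneu t₀).1
    rcases eq_or_lt_of_le hx₀.2 with h1 | h1
    · rw [h1]; exact (hneu t₀).2
    · apply IsLocalMax.deriv_eq_zero
      have hnhds : Set.Icc (0:ℝ) 1 ∈ nhds x₀ := Icc_mem_nhds h0 h1
      exact Filter.eventually_of_mem hnhds (fun y hy => hmax t₀ y hy)
  -- second space derivative is nonpositive
  have hxx : deriv (deriv (ψ t₀)) x₀ ≤ 0 :=
    second_deriv_nonpos_at_max (hslice_x t₀) hx₀ (fun x hx => hmax t₀ x hx) hx_deriv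
  -- conclude from the PDE
  have heq := hpde t₀ x₀ hx₀
  rw [ht_deriv, hx_deriv] at heq
  refine ⟨t₀, x₀, hx₀, ?_⟩
  nlinarith

/-- Proposition 6.8: if a strictly positive, smooth, time-periodic function `φ` with homogeneous
Neumann boundary conditions solves the drift-diffusion eigenproblem
`φ_t − μ φ_xx + v φ_x + K φ = 0` on `ℝ × [0,1]` (with `v` continuous, time-periodic and
vanishing at `x = 0,1`), then the eigenvalue `K` is zero. -/
theorem drift_diffusion_eigenvalue_zero (μ K : ℝ) (hμ : 0 < μ)
    (v : ℝ → ℝ → ℝ) (hv : Continuous (Function.uncurry v))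
    (hvper : ∀ t x : ℝ, v (t + 1) x = v t x)
    (hvbc : ∀ t : ℝ, v t 0 = 0 ∧ v t 1 = 0)
    (φ : ℝ → ℝ → ℝ) (hφ : ContDiff ℝ (⊤ : ℕ∞) (Function.uncurry φ))
    (hφper : ∀ t x : ℝ, φ (t + 1) x = φ t x)
    (hφpos : ∀ t x : ℝ, 0 < φ t x)
    (hneu : ∀ t : ℝ, deriv (φ t) 0 = 0 ∧ deriv (φ t) 1 = 0)
    (hpde : ∀ t : ℝ, ∀ x ∈ Set.Icc (0:ℝ) 1,
      deriv (fun s => φ s x) t - μ * deriv (deriv (φ t)) x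
        + v t x * deriv (φ t) x + K * φ t x = 0) :
    K = 0 := by
  -- K ≤ 0 from the maximum of φ
  obtain ⟨t₀, x₀, hx₀, hK1⟩ := aux_max μ K hμ v hvbc φ hφ hφper hneu hpde
  have hKle : K ≤ 0 := by nlinarith [hφpos t₀ x₀]
  -- K ≥ 0 from the maximum of -φ
  have hnegsmooth : ContDiff ℝ (⊤ : ℕ∞) (Function.uncurry (fun t x => -φ t x)) := hφ.neg
  have hnegneu : ∀ t : ℝ, deriv ((fun t x => -φ t x) t) 0 = 0 ∧
      deriv ((fun t x => -φ t x) t) 1 = 0 := by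
    intro t
    have a : deriv (fun x => -φ t x) 0 = 0 := by rw [deriv.fun_neg, (hneu t).1, neg_zero]
    have b : deriv (fun x => -φ t x) 1 = 0 := by rw [deriv.fun_neg, (hneu t).2, neg_zero]
    exact ⟨a, b⟩
  have hnegpde : ∀ t : ℝ, ∀ x ∈ Set.Icc (0:ℝ) 1,
      deriv (fun s => (fun t x => -φ t x) s x) t
        - μ * deriv (deriv ((fun t x => -φ t x) t)) x
        + v t x * deriv ((fun t x => -φ t x) t) x + K * (fun t x => -φ t x) t x = 0 := by
    intro t x hx
    have e1 : deriv (fun s => -φ s x) t = -deriv (fun s => φ s x) t := deriv.neg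
    have e2 : deriv (fun y => -φ t y) = fun y => -deriv (φ t) y := by
      funext y; exact deriv.neg
    have e3 : deriv (deriv (fun y => -φ t y)) x = -deriv (deriv (φ t)) x := by
      rw [e2]; exact deriv.neg
    have e4 : deriv (fun y => -φ t y) x = -deriv (φ t) x := deriv.neg
    have := hpde t x hx
    show deriv (fun s => -φ s x) t - μ * deriv (deriv (fun y => -φ t y)) x
      + v t x * deriv (fun y => -φ t y) x + K * (-φ t x) = 0
    rw [e1, e3, e4]
    ring_nf
    ring_nf at this
    linarith
  obtain ⟨t₁, x₁, hx₁, hK2⟩ := aux_max μ K hμ v hvbc (fun t x => -φ t x) hnegsmooth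
    (fun t x => by simp [hφper t x]) hnegneu hnegpde
  have hK2' : K * (-(φ t₁ x₁)) ≤ 0 := hK2
  have hKge : 0 ≤ K := by nlinarith [hφpos t₁ x₁]
  linarith
end

section
/- Let μ > 0 and let v : ℝ × [0,1] → ℝ be smooth, time-periodic, with v(t,0) = v(t,1) = 0 for all t. Suppose φ : ℝ × [0,1] → ℝ is smooth, time-periodic, strictly positive everywhere, satisfies ∂_x φ(t,0) = ∂_x φ(t,1) = 0 for all t, and solves ∂_t φ − μ ∂²_x φ + v ∂_x φ = 0 on ℝ × [0,1]. Then φ is constant. -/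
open MeasureTheory Set Filter Function

open Set Filter

lemma deriv_nonpos_of_isMinOn_right {f : ℝ → ℝ} {a b : ℝ} (hab : a < b)
    (hd : DifferentiableAt ℝ f b) (hmin : ∀ t ∈ Set.Icc a b, f b ≤ f t) :
    deriv f b ≤ 0 := by
  have h := hd.hasDerivAt
  rw [hasDerivAt_iff_tendsto_slope] at h
  have h' : Filter.Tendsto (slope f b) (nhdsWithin b (Set.Iio b)) (nhds (deriv f b)) :=
    h.mono_left (nhdsWithin_mono b (fun x hx => ne_of_lt hx))
  refine le_of_tendsto h' ?_
  filter_upwards [Ioo_mem_nhdsLT_of_mem (⟨hab, le_refl b⟩ : b ∈ Set.Ioc a b)] with t ht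
  rw [slope_def_field]
  apply div_nonpos_of_nonneg_of_nonpos
  · have := hmin t ⟨ht.1.le, ht.2.le⟩; linarith
  · linarith [ht.2]

lemma deriv_nonneg_of_isMinOn_left {f : ℝ → ℝ} {a b : ℝ} (hab : a < b)
    (hd : DifferentiableAt ℝ f a) (hmin : ∀ t ∈ Set.Icc a b, f a ≤ f t) :
    0 ≤ deriv f a := by
  have h := hd.hasDerivAt
  rw [hasDerivAt_iff_tendsto_slope] at h
  have h' : Filter.Tendsto (slope f a) (nhdsWithin a (Set.Ioi a)) (nhds (deriv f a)) :=
    h.mono_left (nhdsWithin_mono a (fun x hx => ne_of_gt hx))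
  refine ge_of_tendsto h' ?_
  filter_upwards [Ioo_mem_nhdsGT_of_mem (⟨le_refl a, hab⟩ : a ∈ Set.Ico a b)] with t ht
  rw [slope_def_field]
  apply div_nonneg
  · have := hmin t ⟨ht.1.le, ht.2.le⟩; linarith
  · linarith [ht.1]

lemma second_deriv_nonneg_of_interior_min {f : ℝ → ℝ} {a b x : ℝ}
    (hf : ContDiff ℝ (⊤ : ℕ∞) f) (hx : x ∈ Set.Ioo a b)
    (hmin : ∀ y ∈ Set.Icc a b, f x ≤ f y) : 0 ≤ deriv (deriv f) x := by
  by_contra hlt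
  push_neg at hlt
  set d := deriv (deriv f) x with hdd
  have hIccnhds : Set.Icc a b ∈ nhds x := Icc_mem_nhds hx.1 hx.2
  have hloc : IsLocalMin f x := IsMinOn.isLocalMin (fun y hy => hmin y hy) hIccnhds
  have hfd : Differentiable ℝ f := hf.differentiable (by simp)
  have hfd2 : Differentiable ℝ (deriv f) :=
    ((contDiff_infty_iff_deriv.mp hf).2).differentiable (by simp)
  have h0 : deriv f x = 0 := hloc.deriv_eq_zero
  have hda : HasDerivAt (deriv f) d x := (hfd2 x).hasDerivAt
  rw [hasDerivAt_iff_tendsto_slope] at hda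
  have hev : ∀ᶠ y in nhdsWithin x {x}ᶜ, slope (deriv f) x y < d / 2 :=
    hda.eventually_lt_const (by linarith)
  rw [eventually_nhdsWithin_iff, Metric.eventually_nhds_iff] at hev
  obtain ⟨δ, hδ, hball⟩ := hev
  set b' := min (x + δ / 2) ((x + b) / 2) with hb'
  have hxb' : x < b' := by
    apply lt_min <;> [linarith; linarith [hx.2]]
  have hb'b : b' ≤ b := le_trans (min_le_right _ _) (by linarith [hx.2])
  have hneg : ∀ y ∈ Set.Ioo x b', deriv f y < 0 := by
    intro y hy
    have h1 : dist y x < δ := by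
      rw [Real.dist_eq, abs_of_pos (by linarith [hy.1])]
      have := hy.2; have := min_le_left (x + δ / 2) ((x + b) / 2)
      linarith [lt_of_lt_of_le hy.2 (min_le_left (x + δ / 2) ((x + b) / 2))]
    have h2 : y ∈ ({x}ᶜ : Set ℝ) := by
      simp only [Set.mem_compl_iff, Set.mem_singleton_iff]; exact ne_of_gt hy.1
    have h3 := hball h1 h2
    rw [slope_def_field, h0, sub_zero] at h3
    have h4 : 0 < y - x := by linarith [hy.1]
    have h5 : deriv f y / (y - x) < d / 2 := h3
    have h6 : deriv f y < d / 2 * (y - x) := (div_lt_iff₀ h4).mp h5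
    nlinarith
  have hanti : StrictAntiOn f (Set.Icc x b') := by
    apply strictAntiOn_of_deriv_neg (convex_Icc x b') hfd.continuous.continuousOn
    intro y hy
    rw [interior_Icc] at hy
    exact hneg y hy
  have := hanti (Set.left_mem_Icc.mpr hxb'.le) (Set.right_mem_Icc.mpr hxb'.le) hxb'
  have := hmin b' ⟨by linarith [hx.1], hb'b⟩
  linarith

lemma comparison_principle (μ : ℝ) (hμ : 0 < μ) (v : ℝ → ℝ → ℝ) (z : ℝ → ℝ → ℝ)
    (hz : ContDiff ℝ (⊤ : ℕ∞) (Function.uncurry z))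
    {t₁ t₂ a b : ℝ} (ht : t₁ < t₂) (hab : a < b)
    (hbottom : ∀ x ∈ Set.Icc a b, 0 ≤ z t₁ x)
    (hleft : (∀ t ∈ Set.Icc t₁ t₂, 0 ≤ z t a) ∨ (∀ t ∈ Set.Icc t₁ t₂, deriv (z t) a < 0))
    (hright : (∀ t ∈ Set.Icc t₁ t₂, 0 ≤ z t b) ∨ (∀ t ∈ Set.Icc t₁ t₂, 0 < deriv (z t) b))
    (hsub : ∀ t ∈ Set.Icc t₁ t₂, ∀ x ∈ Set.Icc a b, z t x < 0 →
      0 < deriv (fun s => z s x) t - μ * deriv (deriv (z t)) x + v t x * deriv (z t) x) :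
    ∀ t ∈ Set.Icc t₁ t₂, ∀ x ∈ Set.Icc a b, 0 ≤ z t x := by
  have hz1 : ∀ x : ℝ, ContDiff ℝ (⊤ : ℕ∞) (fun t => z t x) := fun x =>
    hz.comp (contDiff_id.prodMk contDiff_const)
  have hz2 : ∀ t : ℝ, ContDiff ℝ (⊤ : ℕ∞) (z t) := fun t =>
    hz.comp (contDiff_const.prodMk contDiff_id)
  intro t ht' x hx'
  by_contra hneg
  push_neg at hneg
  have hK : IsCompact (Set.Icc t₁ t₂ ×ˢ Set.Icc a b) := isCompact_Icc.prod isCompact_Icc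
  obtain ⟨p, hpK, hpmin⟩ := hK.exists_isMinOn ⟨(t₁, a), by
      constructor <;> simp [Set.mem_Icc, ht.le, hab.le]⟩
    hz.continuous.continuousOn
  have hpmin' : ∀ s ∈ Set.Icc t₁ t₂, ∀ y ∈ Set.Icc a b, z p.1 p.2 ≤ z s y := by
    intro s hs y hy
    exact hpmin (Set.mk_mem_prod hs hy)
  have hpneg : z p.1 p.2 < 0 := lt_of_le_of_lt (hpmin' t ht' x hx') hneg
  obtain ⟨hpt, hpx⟩ := hpK
  have hxmin : ∀ y ∈ Set.Icc a b, z p.1 p.2 ≤ z p.1 y := fun y hy => hpmin' p.1 hpt y hy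
  -- t-coordinate not at bottom
  have htne : t₁ < p.1 := by
    rcases eq_or_lt_of_le hpt.1 with h | h
    · exact absurd hpneg (not_lt.mpr (h ▸ hbottom p.2 hpx))
    · exact h
  -- x interior
  have hxint : p.2 ∈ Set.Ioo a b := by
    constructor
    · rcases eq_or_lt_of_le hpx.1 with h | h
      · exfalso
        rcases hleft with hl | hl
        · exact absurd hpneg (not_lt.mpr (h ▸ hl p.1 hpt))
        · have h0 : 0 ≤ deriv (z p.1) a := by
            apply deriv_nonneg_of_isMinOn_left hab
              ((hz2 p.1).differentiable (by simp)).differentiableAt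
            intro y hy; rw [h]; exact hxmin y hy
          exact absurd (hl p.1 hpt) (not_lt.mpr h0)
      · exact h
    · rcases eq_or_lt_of_le hpx.2 with h | h
      · exfalso
        rcases hright with hr | hr
        · exact absurd hpneg (not_lt.mpr (h ▸ hr p.1 hpt))
        · have h0 : deriv (z p.1) b ≤ 0 := by
            apply deriv_nonpos_of_isMinOn_right hab
              ((hz2 p.1).differentiable (by simp)).differentiableAt
            intro y hy; rw [← h]; exact hxmin y hy
          exact absurd (hr p.1 hpt) (not_lt.mpr h0)
      · exact h
  have hx0 : deriv (z p.1) p.2 = 0 := by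
    apply IsLocalMin.deriv_eq_zero
    exact IsMinOn.isLocalMin (fun y hy => hxmin y hy) (Icc_mem_nhds hxint.1 hxint.2)
  have hxx : 0 ≤ deriv (deriv (z p.1)) p.2 :=
    second_deriv_nonneg_of_interior_min (hz2 p.1) hxint hxmin
  have htd : deriv (fun s => z s p.2) p.1 ≤ 0 := by
    have hmint : ∀ s ∈ Set.Icc t₁ t₂, z p.1 p.2 ≤ z s p.2 := fun s hs =>
      hpmin' s hs p.2 hpx
    rcases eq_or_lt_of_le hpt.2 with h | h
    · rw [h]
      apply deriv_nonpos_of_isMinOn_right ht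
        ((hz1 p.2).differentiable (by simp)).differentiableAt
      intro s hs; rw [← h]; exact hmint s hs
    · have : IsLocalMin (fun s => z s p.2) p.1 :=
        IsMinOn.isLocalMin (fun s hs => hmint s hs) (Icc_mem_nhds htne h)
      rw [this.deriv_eq_zero]
  have := hsub p.1 hpt p.2 hpx hpneg
  rw [hx0] at this
  nlinarith

lemma curry_contDiff_fst {f : ℝ → ℝ → ℝ} (hf : ContDiff ℝ (⊤ : ℕ∞) (uncurry f)) (x : ℝ) :
    ContDiff ℝ (⊤ : ℕ∞) (fun t => f t x) :=
  hf.comp (contDiff_id.prodMk contDiff_const)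

lemma curry_contDiff_snd {f : ℝ → ℝ → ℝ} (hf : ContDiff ℝ (⊤ : ℕ∞) (uncurry f)) (t : ℝ) :
    ContDiff ℝ (⊤ : ℕ∞) (f t) :=
  hf.comp (contDiff_const.prodMk contDiff_id)

/-- The parabolic operator applied to a difference `z = φ - m - w`. -/
lemma L_sub (μ : ℝ) (v : ℝ → ℝ → ℝ) (φ w : ℝ → ℝ → ℝ) (m : ℝ)
    (hφ : ContDiff ℝ (⊤ : ℕ∞) (uncurry φ)) (hw : ContDiff ℝ (⊤ : ℕ∞) (uncurry w))
    (t x : ℝ) :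
    deriv (fun s => φ s x - m - w s x) t
      - μ * deriv (deriv (fun y => φ t y - m - w t y)) x
      + v t x * deriv (fun y => φ t y - m - w t y) x
    = (deriv (fun s => φ s x) t - μ * deriv (deriv (φ t)) x + v t x * deriv (φ t) x)
      - (deriv (fun s => w s x) t - μ * deriv (deriv (w t)) x + v t x * deriv (w t) x) := by
  have hφ1 : ∀ y, Differentiable ℝ (fun t => φ t y) := fun y =>
    (curry_contDiff_fst hφ y).differentiable (by simp)
  have hw1 : ∀ y, Differentiable ℝ (fun t => w t y) := fun y =>
    (curry_contDiff_fst hw y).differentiable (by simp)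
  have hφ2 : ∀ t, Differentiable ℝ (φ t) := fun t =>
    (curry_contDiff_snd hφ t).differentiable (by simp)
  have hw2 : ∀ t, Differentiable ℝ (w t) := fun t =>
    (curry_contDiff_snd hw t).differentiable (by simp)
  have hφ2' : ∀ t, Differentiable ℝ (deriv (φ t)) := fun t =>
    ((contDiff_infty_iff_deriv.mp (curry_contDiff_snd hφ t)).2).differentiable (by simp)
  have hw2' : ∀ t, Differentiable ℝ (deriv (w t)) := fun t =>
    ((contDiff_infty_iff_deriv.mp (curry_contDiff_snd hw t)).2).differentiable (by simp)
  have hA : deriv (fun s => φ s x - m - w s x) t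
      = deriv (fun s => φ s x) t - deriv (fun s => w s x) t := by
    rw [show (fun s => φ s x - m - w s x) = fun s => ((fun s => φ s x) s - m) - (fun s => w s x) s
        from rfl]
    rw [deriv_fun_sub (((hφ1 x) t).sub_const m) ((hw1 x) t), deriv_sub_const]
  have hB : deriv (fun y => φ t y - m - w t y) = fun y => deriv (φ t) y - deriv (w t) y := by
    funext y
    rw [show (fun y => φ t y - m - w t y) = fun y => (φ t y - m) - w t y from rfl]
    rw [deriv_fun_sub ((hφ2 t y).sub_const m) (hw2 t y), deriv_sub_const]
  have hC : deriv (deriv (fun y => φ t y - m - w t y)) x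
      = deriv (deriv (φ t)) x - deriv (deriv (w t)) x := by
    rw [hB, deriv_fun_sub (hφ2' t x) (hw2' t x)]
  have hD : deriv (fun y => φ t y - m - w t y) x = deriv (φ t) x - deriv (w t) x := by
    rw [hB]
  rw [hA, hC, hD]; ring

set_option maxHeartbeats 2000000 in
/-- Persistence of positivity at a point, via a Gaussian-type barrier. -/
lemma persistence (μ : ℝ) (hμ : 0 < μ) (v φ : ℝ → ℝ → ℝ) (m V : ℝ)
    (hφ : ContDiff ℝ (⊤ : ℕ∞) (uncurry φ))
    (hm : ∀ t : ℝ, ∀ x ∈ Set.Icc (0:ℝ) 1, m ≤ φ t x)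
    (hV0 : 0 ≤ V) (hV : ∀ t : ℝ, ∀ x ∈ Set.Icc (0:ℝ) 1, |v t x| ≤ V)
    (hpde : ∀ t : ℝ, ∀ x ∈ Set.Icc (0:ℝ) 1,
      deriv (fun s => φ s x) t - μ * deriv (deriv (φ t)) x + v t x * deriv (φ t) x = 0)
    (x' r δ t₁ : ℝ) (hr : 0 < r) (h0 : 0 ≤ x' - r) (h1 : x' + r ≤ 1) (hδ : 0 < δ)
    (hinit : ∀ x ∈ Set.Icc (x' - r) (x' + r), m + δ ≤ φ t₁ x) :
    ∃ δ₂ > 0, ∀ t ∈ Set.Icc t₁ (t₁ + 3), m + δ₂ ≤ φ t x' := by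
  obtain ⟨L, hLdef⟩ : ∃ L : ℝ, L = (2*μ + 2*V*r)/(μ*r^2) + 1 := ⟨_, rfl⟩
  have hL : 0 < L := by
    have : 0 ≤ (2*μ + 2*V*r)/(μ*r^2) := by positivity
    rw [hLdef]; linarith
  have hLr : 2*μ + 2*V*r + μ*r^2 ≤ μ*L*r^2 := by
    have hden : 0 < μ*r^2 := by positivity
    have h2 : (2*μ + 2*V*r)/(μ*r^2) * (μ*r^2) = 2*μ + 2*V*r := div_mul_cancel₀ _ (ne_of_gt hden)
    rw [hLdef]; nlinarith [h2]
  obtain ⟨Er, hErdef⟩ : ∃ E : ℝ, E = Real.exp (-(L*r^2)) := ⟨_, rfl⟩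
  have hErpos : 0 < Er := hErdef ▸ Real.exp_pos _
  obtain ⟨q4, hq4def⟩ : ∃ q : ℝ, q = Real.exp (-(L*r^2/4)) - Er := ⟨_, rfl⟩
  have hq4 : 0 < q4 := by
    have h1 : -(L*r^2) < -(L*r^2/4) := by nlinarith
    have h2 := Real.exp_lt_exp.mpr h1
    rw [hq4def, hErdef]; linarith
  obtain ⟨B, hBdef⟩ : ∃ b : ℝ, b = (2*μ*L + 2*V*L*r)/q4 + 1 := ⟨_, rfl⟩
  have hB : 0 < B := by
    have : 0 ≤ (2*μ*L + 2*V*L*r)/q4 := div_nonneg (by positivity) hq4.le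
    rw [hBdef]; linarith
  have hBq : 2*μ*L + 2*V*L*r ≤ B*q4 - q4 := by
    have h2 : (2*μ*L + 2*V*L*r)/q4 * q4 = 2*μ*L + 2*V*L*r := div_mul_cancel₀ _ (ne_of_gt hq4)
    rw [hBdef]; nlinarith [h2]
  set w : ℝ → ℝ → ℝ :=
    fun t x => δ * (Real.exp (-(B*(t-t₁))) * (Real.exp (-(L*(x-x')^2)) - Er)) with hwdef
  -- smoothness of w
  have hw : ContDiff ℝ (⊤ : ℕ∞) (uncurry w) := by
    have huw : uncurry w = fun p : ℝ × ℝ =>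
        δ * (Real.exp (-(B*(p.1-t₁))) * (Real.exp (-(L*(p.2-x')^2)) - Er)) := rfl
    rw [huw]
    exact contDiff_const.mul
      ((Real.contDiff_exp.comp ((contDiff_const.mul (contDiff_fst.sub contDiff_const)).neg)).mul
        ((Real.contDiff_exp.comp ((contDiff_const.mul
          ((contDiff_snd.sub contDiff_const).pow 2)).neg)).sub contDiff_const))
  -- derivative formulas for w
  have hwt : ∀ t x : ℝ, HasDerivAt (fun s => w s x)
      (δ * ((Real.exp (-(B*(t-t₁))) * (-B)) * (Real.exp (-(L*(x-x')^2)) - Er))) t := by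
    intro t x
    have h1 : HasDerivAt (fun s : ℝ => -(B*(s-t₁))) (-B) t := by
      simpa using (((hasDerivAt_id t).sub_const t₁).const_mul B).fun_neg
    exact HasDerivAt.const_mul δ (h1.exp.mul_const (Real.exp (-(L*(x-x')^2)) - Er))
  have hwx : ∀ t x : ℝ, HasDerivAt (w t)
      (δ * (Real.exp (-(B*(t-t₁))) * (Real.exp (-(L*(x-x')^2)) * (-(L*(2*(x-x'))))))) x := by
    intro t x
    have h1 : HasDerivAt (fun y : ℝ => -(L*(y-x')^2)) (-(L*(2*(x-x')))) x := by
      have := (((hasDerivAt_id x).sub_const x').pow 2).const_mul L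
      simpa [mul_comm, mul_assoc, mul_left_comm] using this.fun_neg
    exact HasDerivAt.const_mul δ (HasDerivAt.const_mul (Real.exp (-(B*(t-t₁)))) (h1.exp.sub_const Er))
  have hwderiv : ∀ t : ℝ, deriv (w t) = fun x =>
      δ * (Real.exp (-(B*(t-t₁))) * (Real.exp (-(L*(x-x')^2)) * (-(L*(2*(x-x')))))) := by
    intro t; funext x; exact (hwx t x).deriv
  have hwxx : ∀ t x : ℝ, deriv (deriv (w t)) x
      = δ * (Real.exp (-(B*(t-t₁))) * (Real.exp (-(L*(x-x')^2)) * (4*L^2*(x-x')^2 - 2*L))) := by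
    intro t x
    rw [hwderiv t]
    have h1 : HasDerivAt (fun y : ℝ => -(L*(y-x')^2)) (-(L*(2*(x-x')))) x := by
      have := (((hasDerivAt_id x).sub_const x').pow 2).const_mul L
      simpa [mul_comm, mul_assoc, mul_left_comm] using this.fun_neg
    have h2 : HasDerivAt (fun y : ℝ => -(L*(2*(y-x')))) (-(L*2)) x := by
      simpa using ((((hasDerivAt_id x).sub_const x').const_mul 2).const_mul L).fun_neg
    have h3 := (h1.exp.fun_mul h2)
    have h4 := (h3.const_mul (Real.exp (-(B*(t-t₁))))).const_mul δ
    rw [h4.deriv]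
    ring
  have hx01 : ∀ x ∈ Set.Icc (x'-r) (x'+r), x ∈ Set.Icc (0:ℝ) 1 := by
    intro x hx; exact ⟨by linarith [hx.1], by linarith [hx.2]⟩
  -- the comparison function is nonnegative on the cylinder
  have hcomp : ∀ t ∈ Set.Icc t₁ (t₁+3), ∀ x ∈ Set.Icc (x'-r) (x'+r),
      0 ≤ φ t x - m - w t x := by
    apply comparison_principle μ hμ v (fun t x => φ t x - m - w t x)
      ((hφ.sub contDiff_const).sub hw) (by linarith) (by linarith)
    · -- bottom
      intro x hx
      have hE1 : Real.exp (-(L*(x-x')^2)) ≤ 1 := Real.exp_le_one_iff.mpr (neg_nonpos.mpr (by positivity))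
      have h2 := hinit x hx
      simp only [hwdef]
      have h3 : Real.exp (-(B*(t₁-t₁))) = 1 := by norm_num
      rw [h3]
      nlinarith [hErpos]
    · -- left lateral
      left
      intro t ht
      have h4 : ((x'-r)-x')^2 = r^2 := by ring
      simp only [hwdef, h4]
      rw [← hErdef]
      have := hm t (x'-r) (hx01 _ ⟨le_refl _, by linarith⟩)
      simp
      linarith
    · -- right lateral
      left
      intro t ht
      have h4 : ((x'+r)-x')^2 = r^2 := by ring
      simp only [hwdef, h4]
      rw [← hErdef]
      have := hm t (x'+r) (hx01 _ ⟨by linarith, le_refl _⟩)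
      simp
      linarith
    · -- strict subsolution where negative
      intro t ht x hx hzneg
      show 0 < deriv (fun s => φ s x - m - w s x) t
          - μ * deriv (deriv (fun y => φ t y - m - w t y)) x
          + v t x * deriv (fun y => φ t y - m - w t y) x
      rw [L_sub μ v φ w m hφ hw t x, hpde t x (hx01 x hx)]
      rw [(hwt t x).deriv, hwxx t x, (hwx t x).deriv]
      obtain ⟨P, hPdef⟩ : ∃ P : ℝ, P = Real.exp (-(B*(t-t₁))) := ⟨_, rfl⟩
      obtain ⟨E, hEdef⟩ : ∃ E : ℝ, E = Real.exp (-(L*(x-x')^2)) := ⟨_, rfl⟩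
      rw [← hPdef, ← hEdef]
      have hPpos : 0 < P := hPdef ▸ Real.exp_pos _
      have hEpos : 0 < E := hEdef ▸ Real.exp_pos _
      have hE1 : E ≤ 1 := hEdef ▸ Real.exp_le_one_iff.mpr (neg_nonpos.mpr (by positivity))
      obtain ⟨y, hydef⟩ : ∃ y : ℝ, y = x - x' := ⟨_, rfl⟩
      rw [← hydef]
      -- from z < 0 we get w > 0, i.e. Er < E
      have hwpos : 0 < δ * (P * (E - Er)) := by
        have h5 := hm t x (hx01 x hx)
        simp only [hwdef] at hzneg
        rw [← hPdef, ← hEdef] at hzneg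
        linarith
      have hEEr : Er < E := by nlinarith [mul_pos hδ hPpos]
      have hy2 : y^2 < r^2 := by
        have h6 : Real.exp (-(L*r^2)) < Real.exp (-(L*(x-x')^2)) := by
          rw [← hErdef, ← hEdef]; exact hEEr
        have h7 := Real.exp_lt_exp.mp h6
        rw [hydef]; nlinarith
      have hvb := abs_le.mp (hV t x (hx01 x hx))
      have hyabs : -r ≤ y ∧ y ≤ r := by
        constructor <;> nlinarith [sq_nonneg (y+r), sq_nonneg (y-r)]
      have hvy : -(V*r) ≤ v t x * y := by nlinarith [hvb.1, hvb.2, hyabs.1, hyabs.2, hV0, hr]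
      have hkey : 0 < B*(E-Er) + μ*(E*(4*L^2*y^2 - 2*L)) + v t x*(2*L*y*E) := by
        rcases le_or_gt (r^2/4) (y^2) with hcase | hcase
        · have k1 : μ*L*r^2 - 2*μ - 2*(V*r) ≤ 4*μ*L*y^2 - 2*μ + 2*(v t x*y) := by
            nlinarith [mul_pos hμ hL]
          have k2 : μ*r^2 ≤ μ*L*r^2 - 2*μ - 2*(V*r) := by linarith [hLr]
          have k3 : (0:ℝ) < E*L := mul_pos hEpos hL
          have k4 : E*L*(μ*r^2) ≤ E*L*(4*μ*L*y^2 - 2*μ + 2*(v t x*y)) :=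
            mul_le_mul_of_nonneg_left (by linarith) k3.le
          have k5 : 0 ≤ B*(E-Er) := mul_nonneg hB.le (by linarith)
          nlinarith [mul_pos k3 (by positivity : (0:ℝ) < μ*r^2)]
        · have hx4 : (x-x')^2 < r^2/4 := by rw [← hydef]; exact hcase
          have hEq4 : Real.exp (-(L*r^2/4)) ≤ E := by
            rw [hEdef]; apply Real.exp_le_exp.mpr
            nlinarith [mul_le_mul_of_nonneg_left hx4.le hL.le]
          have hq : q4 ≤ E - Er := by rw [hq4def]; linarith
          have p1 : B*q4 ≤ B*(E-Er) := mul_le_mul_of_nonneg_left hq hB.le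
          have p3 : -(2*μ*L) ≤ μ*(E*(4*L^2*y^2 - 2*L)) := by
            have a1 : 0 ≤ μ*E*(L*y)^2 := by positivity
            have a2 : 0 ≤ μ*L*(1-E) := mul_nonneg (mul_pos hμ hL).le (by linarith)
            nlinarith [a1, a2]
          have q1 : -(V*r) ≤ v t x * y * E := by
            nlinarith [mul_nonneg (by linarith : (0:ℝ) ≤ v t x*y + V*r) hEpos.le,
              mul_nonneg (mul_nonneg hV0 hr.le) (by linarith : (0:ℝ) ≤ 1 - E)]
          have p4 : -(2*V*L*r) ≤ v t x*(2*L*y*E) := by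
            nlinarith [mul_le_mul_of_nonneg_left q1 (by positivity : (0:ℝ) ≤ 2*L)]
          linarith [hBq, hq4]
      have hfinal : 0 - (δ*((P*(-B))*(E-Er)) - μ*(δ*(P*(E*(4*L^2*y^2 - 2*L))))
          + v t x*(δ*(P*(E*(-(L*(2*y)))))))
          = (δ*P) * (B*(E-Er) + μ*(E*(4*L^2*y^2 - 2*L)) + v t x*(2*L*y*E)) := by ring
      calc (0:ℝ) < (δ*P) * (B*(E-Er) + μ*(E*(4*L^2*y^2 - 2*L)) + v t x*(2*L*y*E)) :=
            mul_pos (mul_pos hδ hPpos) hkey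
        _ = _ := by rw [← hfinal]
  -- conclusion
  have hEr1 : Er < 1 := by
    rw [hErdef]
    exact Real.exp_lt_one_iff.mpr (by nlinarith [mul_pos hL (by positivity : (0:ℝ) < r^2)])
  refine ⟨δ * (Real.exp (-(B*3)) * (1 - Er)),
    mul_pos hδ (mul_pos (Real.exp_pos _) (by linarith)), ?_⟩
  intro t ht
  have hz := hcomp t ht x' ⟨by linarith, by linarith⟩
  simp only [hwdef] at hz
  have h8 : Real.exp (-(L*((x':ℝ)-x')^2)) = 1 := by norm_num
  rw [h8] at hz
  have h9 : Real.exp (-(B*3)) ≤ Real.exp (-(B*(t-t₁))) :=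
    Real.exp_le_exp.mpr (by nlinarith [ht.1, ht.2, hB])
  have h10 : δ * (Real.exp (-(B*3)) * (1 - Er)) ≤ δ * (Real.exp (-(B*(t-t₁))) * (1 - Er)) :=
    mul_le_mul_of_nonneg_left (mul_le_mul_of_nonneg_right h9 (by linarith)) hδ.le
  linarith

set_option maxHeartbeats 2000000 in
/-- Sideways propagation of positivity to the left, down to the Neumann boundary at `0`. -/
lemma sweep_left (μ : ℝ) (hμ : 0 < μ) (v φ : ℝ → ℝ → ℝ) (m V : ℝ)
    (hφ : ContDiff ℝ (⊤ : ℕ∞) (uncurry φ))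
    (hm : ∀ t : ℝ, ∀ x ∈ Set.Icc (0:ℝ) 1, m ≤ φ t x)
    (hV0 : 0 ≤ V) (hV : ∀ t : ℝ, ∀ x ∈ Set.Icc (0:ℝ) 1, |v t x| ≤ V)
    (hpde : ∀ t : ℝ, ∀ x ∈ Set.Icc (0:ℝ) 1,
      deriv (fun s => φ s x) t - μ * deriv (deriv (φ t)) x + v t x * deriv (φ t) x = 0)
    (hneu0 : ∀ t : ℝ, deriv (φ t) 0 = 0)
    (x' t₁ t₂ ε : ℝ) (hx'0 : 0 < x') (hx'1 : x' ≤ 1) (ht12 : t₁ + 1 ≤ t₂) (hε : 0 < ε)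
    (hline : ∀ t ∈ Set.Icc t₁ t₂, m + ε ≤ φ t x') :
    ∀ x ∈ Set.Icc (0:ℝ) x', m < φ t₂ x := by
  obtain ⟨lam, hlamdef⟩ : ∃ l : ℝ, l = (V+2)/μ := ⟨_, rfl⟩
  have hlam : 0 < lam := by rw [hlamdef]; positivity
  have hmulam : μ * lam = V + 2 := by rw [hlamdef]; field_simp
  obtain ⟨al, haldef⟩ : ∃ a : ℝ, a = 3*lam/2 := ⟨_, rfl⟩
  have hal : 0 < al := by rw [haldef]; linarith
  set w : ℝ → ℝ → ℝ :=
    fun t x => ε * (Real.exp (-(lam*(x'-x))) - Real.exp (-(al*(t-t₁)))) with hwdef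
  have hw : ContDiff ℝ (⊤ : ℕ∞) (uncurry w) := by
    have huw : uncurry w = fun p : ℝ × ℝ =>
        ε * (Real.exp (-(lam*(x'-p.2))) - Real.exp (-(al*(p.1-t₁)))) := rfl
    rw [huw]
    exact contDiff_const.mul
      ((Real.contDiff_exp.comp ((contDiff_const.mul (contDiff_const.sub contDiff_snd)).neg)).sub
        (Real.contDiff_exp.comp ((contDiff_const.mul (contDiff_fst.sub contDiff_const)).neg)))
  have hwt : ∀ t x : ℝ, HasDerivAt (fun s => w s x)
      (ε * (0 - Real.exp (-(al*(t-t₁))) * (-al))) t := by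
    intro t x
    have h1 : HasDerivAt (fun s : ℝ => -(al*(s-t₁))) (-al) t := by
      simpa using (((hasDerivAt_id t).sub_const t₁).const_mul al).fun_neg
    exact HasDerivAt.const_mul ε ((hasDerivAt_const t (Real.exp (-(lam*(x'-x))))).fun_sub h1.exp)
  have hwxAt : ∀ t x : ℝ, HasDerivAt (w t)
      (ε * (Real.exp (-(lam*(x'-x))) * lam)) x := by
    intro t x
    have h1 : HasDerivAt (fun y : ℝ => -(lam*(x'-y))) lam x := by
      have := (((hasDerivAt_id x).const_sub x').const_mul lam).fun_neg
      simpa using this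
    exact HasDerivAt.const_mul ε (h1.exp.sub_const _)
  have hwderiv : ∀ t : ℝ, deriv (w t) = fun x => ε * (Real.exp (-(lam*(x'-x))) * lam) := by
    intro t; funext x; exact (hwxAt t x).deriv
  have hwxx : ∀ t x : ℝ, deriv (deriv (w t)) x
      = ε * (Real.exp (-(lam*(x'-x))) * lam * lam) := by
    intro t x
    rw [hwderiv t]
    have h1 : HasDerivAt (fun y : ℝ => -(lam*(x'-y))) lam x := by
      have := (((hasDerivAt_id x).const_sub x').const_mul lam).fun_neg
      simpa using this
    have h2 := HasDerivAt.const_mul ε (h1.exp.mul_const lam)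
    rw [h2.deriv]
  have hx01 : ∀ x ∈ Set.Icc (0:ℝ) x', x ∈ Set.Icc (0:ℝ) 1 := fun x hx =>
    ⟨hx.1, le_trans hx.2 hx'1⟩
  have hcomp : ∀ t ∈ Set.Icc t₁ t₂, ∀ x ∈ Set.Icc (0:ℝ) x',
      0 ≤ φ t x - m - w t x := by
    apply comparison_principle μ hμ v (fun t x => φ t x - m - w t x)
      ((hφ.sub contDiff_const).sub hw) (by linarith) hx'0
    · -- bottom
      intro x hx
      have hd1 : Real.exp (-(lam*(x'-x))) ≤ 1 :=
        Real.exp_le_one_iff.mpr (neg_nonpos.mpr (by nlinarith [hx.2]))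
      have h2 := hm t₁ x (hx01 x hx)
      simp only [hwdef]
      have h3 : Real.exp (-(al*(t₁-t₁))) = 1 := by norm_num
      rw [h3]
      nlinarith
    · -- left lateral: Neumann
      right
      intro t ht
      have hds : deriv (fun y => φ t y - m - w t y) 0
          = deriv (φ t) 0 - deriv (w t) 0 := by
        have hφ2 : Differentiable ℝ (φ t) :=
          (curry_contDiff_snd hφ t).differentiable (by simp)
        have heq : (fun y => φ t y - m - w t y) = fun y => (φ t y - m) - w t y := rfl
        rw [heq, deriv_fun_sub ((hφ2 0).sub_const m) (hwxAt t 0).differentiableAt,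
          deriv_sub_const]
      rw [hds, hneu0 t, (hwxAt t 0).deriv]
      have : 0 < ε * (Real.exp (-(lam*(x'-0))) * lam) :=
        mul_pos hε (mul_pos (Real.exp_pos _) hlam)
      linarith
    · -- right lateral
      left
      intro t ht
      have h4 : Real.exp (-(lam*(x'-x'))) = 1 := by norm_num
      simp only [hwdef]
      rw [h4]
      have h5 := hline t ht
      have h6 : 0 < Real.exp (-(al*(t-t₁))) := Real.exp_pos _
      nlinarith
    · -- subsolution
      intro t ht x hx hzneg
      show 0 < deriv (fun s => φ s x - m - w s x) t
          - μ * deriv (deriv (fun y => φ t y - m - w t y)) x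
          + v t x * deriv (fun y => φ t y - m - w t y) x
      rw [L_sub μ v φ w m hφ hw t x, hpde t x (hx01 x hx)]
      rw [(hwt t x).deriv, hwxx t x, (hwxAt t x).deriv]
      obtain ⟨F, hFdef⟩ : ∃ F : ℝ, F = Real.exp (-(al*(t-t₁))) := ⟨_, rfl⟩
      obtain ⟨D, hDdef⟩ : ∃ D : ℝ, D = Real.exp (-(lam*(x'-x))) := ⟨_, rfl⟩
      rw [← hFdef, ← hDdef]
      have hFpos : 0 < F := hFdef ▸ Real.exp_pos _
      have hDpos : 0 < D := hDdef ▸ Real.exp_pos _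
      -- from z < 0 we get w > 0, i.e. F < D
      have hFD : F < D := by
        have h5 := hm t x (hx01 x hx)
        simp only [hwdef] at hzneg
        rw [← hFdef, ← hDdef] at hzneg
        nlinarith
      have hvb := abs_le.mp (hV t x (hx01 x hx))
      have hvD : v t x * (ε*(D*lam)) ≤ V * (ε*(D*lam)) :=
        mul_le_mul_of_nonneg_right hvb.2 (by positivity)
      have hgoal : 0 - (ε*(0 - F*(-al)) - μ*(ε*(D*lam*lam)) + v t x*(ε*(D*lam)))
          = ε*(μ*lam*(lam*D)) - v t x*(ε*(D*lam)) - ε*(al*F) := by ring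
      rw [hgoal]
      have h7 : ε*(μ*lam*(lam*D)) = ε*((V+2)*(lam*D)) := by rw [hmulam]
      rw [h7, haldef]
      nlinarith [mul_pos (mul_pos hε hlam) hDpos, mul_pos (mul_pos hε hlam) (sub_pos.mpr hFD)]
  -- conclusion
  intro x hx
  have hz := hcomp t₂ ⟨by linarith, le_refl _⟩ x hx
  simp only [hwdef] at hz
  have hDF : Real.exp (-(al*(t₂-t₁))) < Real.exp (-(lam*(x'-x))) := by
    apply Real.exp_lt_exp.mpr
    have h8 : lam*(x'-x) ≤ lam := by nlinarith [hx.1, hx.2]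
    have h9 : al*1 ≤ al*(t₂-t₁) := by nlinarith
    rw [haldef] at h9 ⊢
    nlinarith
  nlinarith [hε]

set_option maxHeartbeats 2000000 in
/-- Sideways propagation of positivity to the right, up to the Neumann boundary at `1`. -/
lemma sweep_right (μ : ℝ) (hμ : 0 < μ) (v φ : ℝ → ℝ → ℝ) (m V : ℝ)
    (hφ : ContDiff ℝ (⊤ : ℕ∞) (uncurry φ))
    (hm : ∀ t : ℝ, ∀ x ∈ Set.Icc (0:ℝ) 1, m ≤ φ t x)
    (hV0 : 0 ≤ V) (hV : ∀ t : ℝ, ∀ x ∈ Set.Icc (0:ℝ) 1, |v t x| ≤ V)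
    (hpde : ∀ t : ℝ, ∀ x ∈ Set.Icc (0:ℝ) 1,
      deriv (fun s => φ s x) t - μ * deriv (deriv (φ t)) x + v t x * deriv (φ t) x = 0)
    (hneu1 : ∀ t : ℝ, deriv (φ t) 1 = 0)
    (x' t₁ t₂ ε : ℝ) (hx'0 : 0 ≤ x') (hx'1 : x' < 1) (ht12 : t₁ + 1 ≤ t₂) (hε : 0 < ε)
    (hline : ∀ t ∈ Set.Icc t₁ t₂, m + ε ≤ φ t x') :
    ∀ x ∈ Set.Icc x' (1:ℝ), m < φ t₂ x := by
  obtain ⟨lam, hlamdef⟩ : ∃ l : ℝ, l = (V+2)/μ := ⟨_, rfl⟩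
  have hlam : 0 < lam := by rw [hlamdef]; positivity
  have hmulam : μ * lam = V + 2 := by rw [hlamdef]; field_simp
  obtain ⟨al, haldef⟩ : ∃ a : ℝ, a = 3*lam/2 := ⟨_, rfl⟩
  have hal : 0 < al := by rw [haldef]; linarith
  set w : ℝ → ℝ → ℝ :=
    fun t x => ε * (Real.exp (-(lam*(x-x'))) - Real.exp (-(al*(t-t₁)))) with hwdef
  have hw : ContDiff ℝ (⊤ : ℕ∞) (uncurry w) := by
    have huw : uncurry w = fun p : ℝ × ℝ =>
        ε * (Real.exp (-(lam*(p.2-x'))) - Real.exp (-(al*(p.1-t₁)))) := rfl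
    rw [huw]
    exact contDiff_const.mul
      ((Real.contDiff_exp.comp ((contDiff_const.mul (contDiff_snd.sub contDiff_const)).neg)).sub
        (Real.contDiff_exp.comp ((contDiff_const.mul (contDiff_fst.sub contDiff_const)).neg)))
  have hwt : ∀ t x : ℝ, HasDerivAt (fun s => w s x)
      (ε * (0 - Real.exp (-(al*(t-t₁))) * (-al))) t := by
    intro t x
    have h1 : HasDerivAt (fun s : ℝ => -(al*(s-t₁))) (-al) t := by
      simpa using (((hasDerivAt_id t).sub_const t₁).const_mul al).fun_neg
    exact HasDerivAt.const_mul ε ((hasDerivAt_const t (Real.exp (-(lam*(x-x'))))).fun_sub h1.exp)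
  have hwxAt : ∀ t x : ℝ, HasDerivAt (w t)
      (ε * (Real.exp (-(lam*(x-x'))) * (-lam))) x := by
    intro t x
    have h1 : HasDerivAt (fun y : ℝ => -(lam*(y-x'))) (-lam) x := by
      simpa using (((hasDerivAt_id x).sub_const x').const_mul lam).fun_neg
    exact HasDerivAt.const_mul ε (h1.exp.sub_const _)
  have hwderiv : ∀ t : ℝ, deriv (w t) = fun x => ε * (Real.exp (-(lam*(x-x'))) * (-lam)) := by
    intro t; funext x; exact (hwxAt t x).deriv
  have hwxx : ∀ t x : ℝ, deriv (deriv (w t)) x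
      = ε * (Real.exp (-(lam*(x-x'))) * (-lam) * (-lam)) := by
    intro t x
    rw [hwderiv t]
    have h1 : HasDerivAt (fun y : ℝ => -(lam*(y-x'))) (-lam) x := by
      simpa using (((hasDerivAt_id x).sub_const x').const_mul lam).fun_neg
    have h2 := HasDerivAt.const_mul ε (h1.exp.mul_const (-lam))
    rw [h2.deriv]
  have hx01 : ∀ x ∈ Set.Icc x' (1:ℝ), x ∈ Set.Icc (0:ℝ) 1 := fun x hx =>
    ⟨le_trans hx'0 hx.1, hx.2⟩
  have hcomp : ∀ t ∈ Set.Icc t₁ t₂, ∀ x ∈ Set.Icc x' (1:ℝ),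
      0 ≤ φ t x - m - w t x := by
    apply comparison_principle μ hμ v (fun t x => φ t x - m - w t x)
      ((hφ.sub contDiff_const).sub hw) (by linarith) hx'1
    · -- bottom
      intro x hx
      have hd1 : Real.exp (-(lam*(x-x'))) ≤ 1 :=
        Real.exp_le_one_iff.mpr (neg_nonpos.mpr (by nlinarith [hx.1]))
      have h2 := hm t₁ x (hx01 x hx)
      simp only [hwdef]
      have h3 : Real.exp (-(al*(t₁-t₁))) = 1 := by norm_num
      rw [h3]
      nlinarith
    · -- left lateral (x = x')
      left
      intro t ht
      have h4 : Real.exp (-(lam*(x'-x'))) = 1 := by norm_num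
      simp only [hwdef]
      rw [h4]
      have h5 := hline t ht
      have h6 : 0 < Real.exp (-(al*(t-t₁))) := Real.exp_pos _
      nlinarith
    · -- right lateral: Neumann at 1
      right
      intro t ht
      have hds : deriv (fun y => φ t y - m - w t y) 1
          = deriv (φ t) 1 - deriv (w t) 1 := by
        have hφ2 : Differentiable ℝ (φ t) :=
          (curry_contDiff_snd hφ t).differentiable (by simp)
        have heq : (fun y => φ t y - m - w t y) = fun y => (φ t y - m) - w t y := rfl
        rw [heq, deriv_fun_sub ((hφ2 1).sub_const m) (hwxAt t 1).differentiableAt,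
          deriv_sub_const]
      rw [hds, hneu1 t, (hwxAt t 1).deriv]
      have : 0 < ε * (Real.exp (-(lam*(1-x'))) * lam) :=
        mul_pos hε (mul_pos (Real.exp_pos _) hlam)
      nlinarith
    · -- subsolution
      intro t ht x hx hzneg
      show 0 < deriv (fun s => φ s x - m - w s x) t
          - μ * deriv (deriv (fun y => φ t y - m - w t y)) x
          + v t x * deriv (fun y => φ t y - m - w t y) x
      rw [L_sub μ v φ w m hφ hw t x, hpde t x (hx01 x hx)]
      rw [(hwt t x).deriv, hwxx t x, (hwxAt t x).deriv]
      obtain ⟨F, hFdef⟩ : ∃ F : ℝ, F = Real.exp (-(al*(t-t₁))) := ⟨_, rfl⟩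
      obtain ⟨D, hDdef⟩ : ∃ D : ℝ, D = Real.exp (-(lam*(x-x'))) := ⟨_, rfl⟩
      rw [← hFdef, ← hDdef]
      have hFpos : 0 < F := hFdef ▸ Real.exp_pos _
      have hDpos : 0 < D := hDdef ▸ Real.exp_pos _
      have hFD : F < D := by
        have h5 := hm t x (hx01 x hx)
        simp only [hwdef] at hzneg
        rw [← hFdef, ← hDdef] at hzneg
        nlinarith
      have hvb := abs_le.mp (hV t x (hx01 x hx))
      have hgoal : 0 - (ε*(0 - F*(-al)) - μ*(ε*(D*(-lam)*(-lam))) + v t x*(ε*(D*(-lam))))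
          = ε*(μ*lam*(lam*D)) + v t x*(ε*(D*lam)) - ε*(al*F) := by ring
      rw [hgoal]
      have h7 : ε*(μ*lam*(lam*D)) = ε*((V+2)*(lam*D)) := by rw [hmulam]
      rw [h7, haldef]
      have hvD : -(V * (ε*(D*lam))) ≤ v t x * (ε*(D*lam)) := by
        nlinarith [mul_le_mul_of_nonneg_right hvb.1 (by positivity : (0:ℝ) ≤ ε*(D*lam))]
      nlinarith [mul_pos (mul_pos hε hlam) hDpos, mul_pos (mul_pos hε hlam) (sub_pos.mpr hFD)]
  -- conclusion
  intro x hx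
  have hz := hcomp t₂ ⟨by linarith, le_refl _⟩ x hx
  simp only [hwdef] at hz
  have hDF : Real.exp (-(al*(t₂-t₁))) < Real.exp (-(lam*(x-x'))) := by
    apply Real.exp_lt_exp.mpr
    have h8 : lam*(x-x') ≤ lam := by nlinarith [hx.1, hx.2]
    have h9 : al*1 ≤ al*(t₂-t₁) := by nlinarith
    rw [haldef] at h9 ⊢
    nlinarith
  nlinarith [hε]

lemma periodic_int {f : ℝ → ℝ → ℝ} (hper : ∀ t x : ℝ, f (t + 1) x = f t x) :
    ∀ (n : ℤ) (t x : ℝ), f (t + n) x = f t x := by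
  intro n
  induction n using Int.induction_on with
  | zero => simp
  | succ k ih =>
    intro t x
    have h1 : (t + ((k : ℤ) + 1 : ℤ) : ℝ) = (t + (k : ℤ)) + 1 := by push_cast; ring
    rw [h1, hper, ih]
  | pred k ih =>
    intro t x
    have h1 : (t + (-(k : ℤ) - 1 : ℤ) : ℝ) + 1 = t + (-(k : ℤ) : ℤ) := by push_cast; ring
    have h2 := hper (t + (-(k : ℤ) - 1 : ℤ)) x
    rw [h1] at h2
    rw [← h2, ih]

lemma reduce_fract {f : ℝ → ℝ → ℝ} (hper : ∀ t x : ℝ, f (t + 1) x = f t x) (t x : ℝ) :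
    f t x = f (Int.fract t) x := by
  have h1 := periodic_int hper ⌊t⌋ (Int.fract t) x
  rw [show Int.fract t + (⌊t⌋ : ℝ) = t from Int.fract_add_floor t] at h1
  exact h1

/-- Proposition 6.10: up to a positive multiplicative constant, the constant function `1` is the
only strictly positive, smooth, time-periodic solution with homogeneous Neumann boundary
conditions of the drift-diffusion equation `φ_t − μ φ_xx + v φ_x = 0` on `ℝ × [0,1]`;
i.e. any such `φ` is constant on `ℝ × [0,1]`. -/
theorem drift_diffusion_positive_solution_constant (μ : ℝ) (hμ : 0 < μ)
    (v : ℝ → ℝ → ℝ) (hv : ContDiff ℝ (⊤ : ℕ∞) (Function.uncurry v))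
    (hvper : ∀ t x : ℝ, v (t + 1) x = v t x)
    (hvbc : ∀ t : ℝ, v t 0 = 0 ∧ v t 1 = 0)
    (φ : ℝ → ℝ → ℝ) (hφ : ContDiff ℝ (⊤ : ℕ∞) (Function.uncurry φ))
    (hφper : ∀ t x : ℝ, φ (t + 1) x = φ t x)
    (hφpos : ∀ t x : ℝ, 0 < φ t x)
    (hneu : ∀ t : ℝ, deriv (φ t) 0 = 0 ∧ deriv (φ t) 1 = 0)
    (hpde : ∀ t : ℝ, ∀ x ∈ Set.Icc (0:ℝ) 1,
      deriv (fun s => φ s x) t - μ * deriv (deriv (φ t)) x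
        + v t x * deriv (φ t) x = 0) :
    ∀ t : ℝ, ∀ x ∈ Set.Icc (0:ℝ) 1, φ t x = φ 0 0 := by
  have hKc : IsCompact (Set.Icc ((0:ℝ), (0:ℝ)) (1, 1)) := isCompact_Icc
  have hKne : (Set.Icc ((0:ℝ), (0:ℝ)) (1, 1)).Nonempty :=
    ⟨(0, 0), by simp [Set.mem_Icc, Prod.le_def]⟩
  have hmemK : ∀ s x : ℝ, s ∈ Set.Icc (0:ℝ) 1 → x ∈ Set.Icc (0:ℝ) 1 →
      (s, x) ∈ Set.Icc ((0:ℝ), (0:ℝ)) (1, 1) := by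
    intro s x hs hx
    rw [Set.mem_Icc]
    exact ⟨⟨hs.1, hx.1⟩, ⟨hs.2, hx.2⟩⟩
  -- the bound V on |v|
  obtain ⟨pV, hpVK, hpVmax⟩ := hKc.exists_isMaxOn hKne
    (hv.continuous.abs.continuousOn :
      ContinuousOn (fun p => |uncurry v p|) (Set.Icc ((0:ℝ), (0:ℝ)) (1, 1)))
  obtain ⟨V, hVdef⟩ : ∃ V : ℝ, V = |uncurry v pV| := ⟨_, rfl⟩
  have hV0 : 0 ≤ V := hVdef ▸ abs_nonneg _
  have hVb : ∀ t : ℝ, ∀ x ∈ Set.Icc (0:ℝ) 1, |v t x| ≤ V := by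
    intro t x hx
    rw [reduce_fract hvper t x, hVdef]
    exact hpVmax (hmemK _ x ⟨Int.fract_nonneg t, (Int.fract_lt_one t).le⟩ hx)
  -- the global minimum of φ
  obtain ⟨p0, hp0K, hp0min⟩ := hKc.exists_isMinOn hKne
    (hφ.continuous.continuousOn :
      ContinuousOn (uncurry φ) (Set.Icc ((0:ℝ), (0:ℝ)) (1, 1)))
  obtain ⟨m, hmdef⟩ : ∃ m : ℝ, m = uncurry φ p0 := ⟨_, rfl⟩
  have hm : ∀ t : ℝ, ∀ x ∈ Set.Icc (0:ℝ) 1, m ≤ φ t x := by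
    intro t x hx
    rw [reduce_fract hφper t x, hmdef]
    exact hp0min (hmemK _ x ⟨Int.fract_nonneg t, (Int.fract_lt_one t).le⟩ hx)
  have hp0mem : p0 ∈ Set.Icc ((0:ℝ), (0:ℝ)) (1, 1) := hp0K
  have hx₀mem : p0.2 ∈ Set.Icc (0:ℝ) 1 := by
    rw [Set.mem_Icc] at hp0mem
    exact ⟨hp0mem.1.2, hp0mem.2.2⟩
  -- main claim: φ is everywhere equal to m
  suffices hconst : ∀ t : ℝ, ∀ x ∈ Set.Icc (0:ℝ) 1, φ t x = m by
    intro t x hx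
    rw [hconst t x hx, hconst 0 0 ⟨le_refl 0, zero_le_one⟩]
  intro t x hx
  by_contra hne
  have hgt : m < φ t x := lt_of_le_of_ne (hm t x hx) (Ne.symm hne)
  obtain ⟨δ0, hδ0⟩ : ∃ d : ℝ, d = φ t x - m := ⟨_, rfl⟩
  have hδ0pos : 0 < δ0 := by rw [hδ0]; linarith
  -- a neighbourhood where φ t · > m + δ0/2
  have hcont : ContinuousAt (φ t) x :=
    ((hφ.comp (contDiff_const.prodMk contDiff_id)).continuous).continuousAt
  have hev : ∀ᶠ y in nhds x, m + δ0 / 2 < φ t y :=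
    hcont.eventually_const_lt (by rw [hδ0] at hδ0pos ⊢; linarith)
  rw [Metric.eventually_nhds_iff] at hev
  obtain ⟨ρ, hρpos, hρ⟩ := hev
  obtain ⟨r, hrdef⟩ : ∃ r : ℝ, r = min (ρ / 4) (1 / 4) := ⟨_, rfl⟩
  have hrpos : 0 < r := by rw [hrdef]; positivity
  have hr14 : r ≤ 1 / 4 := hrdef ▸ min_le_right _ _
  have hr4ρ : 4 * r ≤ ρ := by
    have := hrdef ▸ min_le_left (ρ / 4) (1 / 4)
    linarith
  obtain ⟨x1, hx1def⟩ : ∃ y : ℝ, y = max (min x (1 - 2 * r)) (2 * r) := ⟨_, rfl⟩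
  have hx1a : 2 * r ≤ x1 := hx1def ▸ le_max_right _ _
  have hx1b : x1 ≤ 1 - 2 * r := by
    rw [hx1def]
    exact max_le (le_trans (min_le_right _ _) (le_refl _)) (by linarith)
  have hx1near : |x1 - x| ≤ 2 * r := by
    rw [abs_le]
    constructor
    · have l1 : x - 2 * r ≤ x1 := by
        rw [hx1def]
        exact le_trans (le_min (by linarith) (by linarith [hx.2])) (le_max_left _ _)
      linarith
    · have l2 : x1 ≤ x + 2 * r := by
        rw [hx1def]
        exact max_le (le_trans (min_le_left _ _) (by linarith)) (by linarith [hx.1])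
      linarith
  -- initial positivity on the interval around x1
  have hinit : ∀ y ∈ Set.Icc (x1 - r) (x1 + r), m + δ0 / 2 ≤ φ t y := by
    intro y hy
    apply le_of_lt
    apply hρ
    have h5 : |y - x| ≤ |y - x1| + |x1 - x| := by
      calc |y - x| = |(y - x1) + (x1 - x)| := by rw [show y - x = (y - x1) + (x1 - x) from by ring]
        _ ≤ |y - x1| + |x1 - x| := abs_add_le _ _
    have h6 : |y - x1| ≤ r := by
      rw [abs_le]; exact ⟨by linarith [hy.1], by linarith [hy.2]⟩
    calc dist y x = |y - x| := Real.dist_eq y x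
      _ ≤ |y - x1| + |x1 - x| := h5
      _ ≤ r + 2 * r := add_le_add h6 hx1near
      _ < ρ := by linarith
  -- persistence of positivity at x1
  obtain ⟨δ₂, hδ₂pos, hpers⟩ := persistence μ hμ v φ m V hφ hm hV0 hVb hpde
    x1 r (δ0 / 2) t hrpos (by linarith) (by linarith) (by linarith) hinit
  -- the time at which the minimum is attained again
  obtain ⟨t₂, ht₂def⟩ : ∃ s : ℝ, s = p0.1 + ((⌈t⌉ + 1 : ℤ) : ℝ) := ⟨_, rfl⟩
  have hp0t : p0.1 ∈ Set.Icc (0:ℝ) 1 := by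
    rw [Set.mem_Icc] at hp0mem
    exact ⟨hp0mem.1.1, hp0mem.2.1⟩
  have ht₂low : t + 1 ≤ t₂ := by
    rw [ht₂def]
    push_cast
    have := Int.le_ceil t
    linarith [hp0t.1]
  have ht₂high : t₂ ≤ t + 3 := by
    rw [ht₂def]
    push_cast
    have := Int.ceil_lt_add_one t
    linarith [hp0t.2]
  have hzero : φ t₂ p0.2 = m := by
    rw [ht₂def, periodic_int hφper (⌈t⌉ + 1) p0.1 p0.2, hmdef]
    rfl
  -- the line of positivity
  have hline : ∀ s ∈ Set.Icc t t₂, m + δ₂ ≤ φ s x1 := by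
    intro s hs
    exact hpers s ⟨hs.1, le_trans hs.2 ht₂high⟩
  -- sweep both ways at time t₂
  have hleft := sweep_left μ hμ v φ m V hφ hm hV0 hVb hpde (fun s => (hneu s).1)
    x1 t t₂ δ₂ (by linarith) (by linarith) ht₂low hδ₂pos hline
  have hright := sweep_right μ hμ v φ m V hφ hm hV0 hVb hpde (fun s => (hneu s).2)
    x1 t t₂ δ₂ (by linarith) (by linarith) ht₂low hδ₂pos hline
  rcases le_total p0.2 x1 with hc | hc
  · exact absurd hzero (ne_of_gt (hleft p0.2 ⟨hx₀mem.1, hc⟩))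
  · exact absurd hzero (ne_of_gt (hright p0.2 ⟨hc, hx₀mem.2⟩))
end
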